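/- arXiv:2004.12578 — 6 statements merged into one kernel-verified Lean document; each statement's English description precedes it below -/
import Mathlib

section
/- For any integrable function f on (0,∞), there exists an N-function G (a continuous convex function G:[0,∞)→[0,∞) with G(0)=0, G(t)>0 for t>0, G(t)/t → 0 as t → 0, and G(t)/t → ∞ as t → ∞) such that the function t ↦ G(|f(t)|) is integrable on (0,∞). -/
open MeasureTheory Set Filter Topology

/-- An N-function: continuous convex `G : [0,∞) → [0,∞)` with `G 0 = 0`, `G t > 0` for `t > 0`,
`G t / t → 0` as `t → 0+` and `G t / t → ∞` as `t → ∞`. -/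
def IsNFunction (G : ℝ → ℝ) : Prop :=
  ContinuousOn G (Ici 0) ∧ ConvexOn ℝ (Ici 0) G ∧ (∀ t, 0 ≤ t → 0 ≤ G t) ∧ G 0 = 0 ∧
  (∀ t, 0 < t → 0 < G t) ∧
  Tendsto (fun t => G t / t) (𝓝[>] 0) (𝓝 0) ∧
  Tendsto (fun t => G t / t) atTop atTop

/-- An Orlicz function: convex `G : [0,∞) → [0,∞)` with `G 0 = 0`, continuous at `0`,
and not identically zero. -/
def IsOrliczFunction (G : ℝ → ℝ) : Prop :=
  ConvexOn ℝ (Ici 0) G ∧ (∀ t, 0 ≤ t → 0 ≤ G t) ∧ G 0 = 0 ∧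
  ContinuousWithinAt G (Ici 0) 0 ∧ ∃ t, 0 ≤ t ∧ G t ≠ 0

/-- Decreasing rearrangement of `|f|` with respect to Lebesgue measure on `(0,1)`. -/
noncomputable def mu01 (f : ℝ → ℝ) (t : ℝ) : ℝ :=
  sInf {s : ℝ | 0 ≤ s ∧ volume {x | x ∈ Ioo (0:ℝ) 1 ∧ s < |f x|} ≤ ENNReal.ofReal t}

/-- Decreasing rearrangement of `|f|` with respect to Lebesgue measure on `(0,∞)`. -/
noncomputable def muInf (f : ℝ → ℝ) (t : ℝ) : ℝ :=
  sInf {s : ℝ | 0 ≤ s ∧ volume {x | x ∈ Ioi (0:ℝ) ∧ s < |f x|} ≤ ENNReal.ofReal t}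

/-- Hardy–Littlewood–Pólya submajorization `|f| ≺≺ g` on `(0,1)`. -/
def Submaj01 (f g : ℝ → ℝ) : Prop :=
  ∀ t ∈ Ioc (0:ℝ) 1,
    ∫⁻ s in Ioo (0:ℝ) t, ENNReal.ofReal (mu01 f s) ≤
      ∫⁻ s in Ioo (0:ℝ) t, ENNReal.ofReal (mu01 g s)

/-- Hardy–Littlewood–Pólya submajorization `|f| ≺≺ g` on `(0,∞)`. -/
def SubmajInf (f g : ℝ → ℝ) : Prop :=
  ∀ t : ℝ, 0 < t →
    ∫⁻ s in Ioo (0:ℝ) t, ENNReal.ofReal (muInf f s) ≤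
      ∫⁻ s in Ioo (0:ℝ) t, ENNReal.ofReal (muInf g s)



/-- hinge function -/
noncomputable def NHinge (c x : ℝ) : ℝ := max (x - c) 0

/-- series part -/
noncomputable def NS (a : ℕ → ℝ) (x : ℝ) : ℝ := ∑' k, NHinge (a k) x

/-- base part -/
noncomputable def Nq (x : ℝ) : ℝ := x - 1 + (1 + x)⁻¹

lemma Nq_eq {x : ℝ} (hx : 0 ≤ x) : Nq x = x ^ 2 / (1 + x) := by
  have h : (1 : ℝ) + x ≠ 0 := by positivity
  rw [Nq, eq_div_iff h, add_mul, inv_mul_cancel₀ h]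
  ring

lemma Nq_nonneg {x : ℝ} (hx : 0 ≤ x) : 0 ≤ Nq x := by
  rw [Nq_eq hx]; positivity

lemma Nq_le {x : ℝ} (hx : 0 ≤ x) : Nq x ≤ x := by
  have h : (0:ℝ) < 1 + x := by positivity
  have : (1 + x)⁻¹ ≤ 1 := by
    rw [inv_le_one_iff₀]; right; linarith
  simp only [Nq]; linarith

lemma Nq_pos {x : ℝ} (hx : 0 < x) : 0 < Nq x := by
  rw [Nq_eq hx.le]; positivity

lemma Nq_convex : ConvexOn ℝ (Ici 0) Nq := by
  have h1 : ConvexOn ℝ (Ici (0:ℝ)) (fun x => x - 1) := by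
    exact (convexOn_id (convex_Ici (0:ℝ))).sub (concaveOn_const 1 (convex_Ici 0))
  have h2 : ConvexOn ℝ (Ici (0:ℝ)) (fun x => (1 + x)⁻¹) := by
    refine ⟨convex_Ici 0, ?_⟩
    intro x hx y hy p q hp hq hpq
    have hx' : (1:ℝ) + x ∈ Ioi (0:ℝ) := by simp at hx ⊢; linarith
    have hy' : (1:ℝ) + y ∈ Ioi (0:ℝ) := by simp at hy ⊢; linarith
    have := (convexOn_zpow (-1)).2 hx' hy' hp hq hpq
    simp only [zpow_neg, zpow_one, smul_eq_mul] at this ⊢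
    have he : p * (1 + x) + q * (1 + y) = 1 + (p * x + q * y) := by
      have : p + q = 1 := hpq; nlinarith
    rw [he] at this
    exact this
  exact h1.add h2

section NSlem
variable {a : ℕ → ℝ} (ha : ∀ k : ℕ, (k : ℝ) + 1 ≤ a k)

lemma NHinge_nonneg (c x : ℝ) : 0 ≤ NHinge c x := le_max_right _ _

lemma NHinge_le {c x : ℝ} (hc : 0 ≤ c) (hx : 0 ≤ x) : NHinge c x ≤ x :=
  max_le (by linarith) hx

lemma NHinge_zero {c x : ℝ} (h : x ≤ c) : NHinge c x = 0 :=
  max_eq_right (by linarith)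

include ha in
lemma NS_term_zero {x : ℝ} {k : ℕ} (hk : x ≤ (k : ℝ) + 1) : NHinge (a k) x = 0 :=
  NHinge_zero (hk.trans (ha k))

include ha in
lemma NS_term_zero' {x : ℝ} {N : ℕ} (hx : x ≤ N) : ∀ k ∉ Finset.range N, NHinge (a k) x = 0 := by
  intro k hk
  simp only [Finset.mem_range, not_lt] at hk
  have : (N : ℝ) ≤ (k : ℝ) + 1 := by exact_mod_cast Nat.le_succ_of_le hk
  exact NS_term_zero ha (hx.trans this)

include ha in
lemma NS_summable (x : ℝ) : Summable (fun k => NHinge (a k) x) := by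
  refine summable_of_ne_finset_zero (s := Finset.range ⌈x⌉₊) ?_
  intro k hk
  simp only [Finset.mem_range, not_lt] at hk
  have hx : x ≤ (k : ℝ) + 1 := by
    calc x ≤ (⌈x⌉₊ : ℝ) := Nat.le_ceil x
    _ ≤ (k : ℝ) := by exact_mod_cast hk
    _ ≤ (k : ℝ) + 1 := by linarith
  exact NS_term_zero ha hx

include ha in
lemma NS_eq_sum {x : ℝ} {N : ℕ} (hx : x ≤ N) :
    NS a x = ∑ k ∈ Finset.range N, NHinge (a k) x :=
  tsum_eq_sum (NS_term_zero' ha hx)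

lemma NS_nonneg (x : ℝ) : 0 ≤ NS a x := tsum_nonneg fun k => NHinge_nonneg _ _

include ha in
lemma NS_zero {x : ℝ} (hx : x ≤ 1) : NS a x = 0 := by
  have h : ∀ k : ℕ, NHinge (a k) x = 0 := by
    intro k
    refine NS_term_zero ha (hx.trans ?_)
    have : (0:ℝ) ≤ (k:ℝ) := Nat.cast_nonneg k
    linarith
  rw [NS, tsum_congr h, tsum_zero]

include ha in
lemma NS_continuous : Continuous (NS a) := by
  rw [continuous_iff_continuousAt]
  intro x
  set N : ℕ := ⌈x⌉₊ + 1 with hN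
  have hxN : x < (N : ℝ) := by
    calc x ≤ (⌈x⌉₊ : ℝ) := Nat.le_ceil x
    _ < (N : ℝ) := by rw [hN]; push_cast; linarith
  have hev : (fun y => ∑ k ∈ Finset.range N, NHinge (a k) y) =ᶠ[𝓝 x] NS a := by
    filter_upwards [eventually_lt_nhds hxN] with y hy
    exact (NS_eq_sum ha hy.le).symm
  refine ContinuousAt.congr ?_ hev
  refine Continuous.continuousAt (continuous_finset_sum _ fun k _ => ?_)
  exact (continuous_id.sub continuous_const).max continuous_const

include ha in
lemma NS_convex : ConvexOn ℝ (Ici 0) (NS a) := by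
  refine ⟨convex_Ici 0, ?_⟩
  intro x _ y _ p q hp hq hpq
  have hconv : ∀ k, NHinge (a k) (p * x + q * y) ≤ p * NHinge (a k) x + q * NHinge (a k) y := by
    intro k
    refine max_le ?_ ?_
    · have h1 : x - a k ≤ NHinge (a k) x := le_max_left _ _
      have h2 : y - a k ≤ NHinge (a k) y := le_max_left _ _
      have h3 : p * (x - a k) + q * (y - a k) = p * x + q * y - a k := by
        linear_combination (-(a k)) * hpq
      linarith [mul_le_mul_of_nonneg_left h1 hp, mul_le_mul_of_nonneg_left h2 hq]
    · have := NHinge_nonneg (a k) x; have := NHinge_nonneg (a k) y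
      positivity
  have hsx := NS_summable ha x
  have hsy := NS_summable ha y
  have hsum2 : Summable (fun k => p * NHinge (a k) x + q * NHinge (a k) y) :=
    (hsx.mul_left p).add (hsy.mul_left q)
  simp only [smul_eq_mul]
  calc NS a (p * x + q * y) ≤ ∑' k, (p * NHinge (a k) x + q * NHinge (a k) y) :=
        Summable.tsum_le_tsum hconv (NS_summable ha _) hsum2
  _ = p * NS a x + q * NS a y := by
      rw [Summable.tsum_add (hsx.mul_left p) (hsy.mul_left q), hsx.tsum_mul_left, hsy.tsum_mul_left]
      rfl

end NSlem

/-- the N-function -/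
noncomputable def NG (a : ℕ → ℝ) (x : ℝ) : ℝ := Nq x + NS a x

section NGlem
variable {a : ℕ → ℝ} (ha : ∀ k : ℕ, (k : ℝ) + 1 ≤ a k)

include ha in
lemma NG_continuousOn : ContinuousOn (NG a) (Ici 0) := by
  intro x hx
  have h1 : (1:ℝ) + x ≠ 0 := by
    simp only [mem_Ici] at hx; positivity
  have hq : ContinuousAt Nq x :=
    (continuousAt_id.sub continuousAt_const).add
      ((continuousAt_const.add continuousAt_id).inv₀ h1)
  exact (hq.add (NS_continuous ha).continuousAt).continuousWithinAt

include ha in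
lemma NG_convex : ConvexOn ℝ (Ici 0) (NG a) := Nq_convex.add (NS_convex ha)

lemma NG_nonneg {x : ℝ} (hx : 0 ≤ x) : 0 ≤ NG a x :=
  add_nonneg (Nq_nonneg hx) (NS_nonneg x)

include ha in
lemma NG_zero : NG a 0 = 0 := by
  have h1 : Nq 0 = 0 := by norm_num [Nq]
  have h2 : NS a 0 = 0 := NS_zero ha (by norm_num)
  simp [NG, h1, h2]

lemma NG_pos {x : ℝ} (hx : 0 < x) : 0 < NG a x :=
  add_pos_of_pos_of_nonneg (Nq_pos hx) (NS_nonneg x)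

include ha in
lemma NG_tendsto_zero : Tendsto (fun t => NG a t / t) (𝓝[>] 0) (𝓝 0) := by
  have hev : ∀ᶠ t in 𝓝[>] (0:ℝ), t / (1 + t) = NG a t / t := by
    filter_upwards [Ioo_mem_nhdsGT (zero_lt_one)] with t ht
    have h0 : 0 < t := ht.1
    have h1 : (0:ℝ) < 1 + t := by linarith
    rw [NG, NS_zero ha ht.2.le, add_zero, Nq_eq h0.le]
    field_simp
  have hc : ContinuousAt (fun t : ℝ => t / (1 + t)) 0 :=
    continuousAt_id.div (continuousAt_const.add continuousAt_id) (by norm_num)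
  have h2 : Tendsto (fun t : ℝ => t / (1 + t)) (𝓝[>] 0) (𝓝 0) := by
    have := hc.continuousWithinAt (s := Ioi (0:ℝ))
    simpa [ContinuousWithinAt] using this
  exact h2.congr' hev

include ha in
lemma NG_tendsto_atTop : Tendsto (fun t => NG a t / t) atTop atTop := by
  rw [tendsto_atTop]
  intro b
  set K : ℕ := 2 * ⌈max b 0⌉₊ + 2 with hK
  have hKb : b ≤ (K : ℝ) / 2 := by
    have h1 : b ≤ max b 0 := le_max_left _ _
    have h2 : max b 0 ≤ (⌈max b 0⌉₊ : ℝ) := Nat.le_ceil _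
    have h3 : ((2 * ⌈max b 0⌉₊ + 2 : ℕ) : ℝ) / 2 = (⌈max b 0⌉₊ : ℝ) + 1 := by push_cast; ring
    rw [hK, h3]; linarith
  set A : ℝ := ∑ k ∈ Finset.range K, a k with hA
  have haA : ∀ k ∈ Finset.range K, a k ≤ A := by
    intro k hk
    refine Finset.single_le_sum (f := a) (fun j _ => ?_) hk
    have := ha j
    have : (0:ℝ) ≤ (j:ℝ) + 1 := by positivity
    linarith [ha j]
  filter_upwards [eventually_ge_atTop (max 1 (2 * A))] with t ht
  have ht1 : (1:ℝ) ≤ t := le_trans (le_max_left _ _) ht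
  have ht0 : (0:ℝ) < t := by linarith
  have htA : 2 * A ≤ t := le_trans (le_max_right _ _) ht
  have hterm : ∀ k ∈ Finset.range K, t / 2 ≤ NHinge (a k) t := by
    intro k hk
    have h := haA k hk
    have : t / 2 ≤ t - a k := by linarith
    exact this.trans (le_max_left _ _)
  have hsum : (K : ℝ) * (t / 2) ≤ ∑ k ∈ Finset.range K, NHinge (a k) t := by
    have : ∑ _k ∈ Finset.range K, t / 2 = (K : ℝ) * (t / 2) := by
      simp [Finset.sum_const, Finset.card_range, nsmul_eq_mul]
    rw [← this]
    exact Finset.sum_le_sum hterm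
  have hS : ∑ k ∈ Finset.range K, NHinge (a k) t ≤ NS a t :=
    Summable.sum_le_tsum _ (fun k _ => NHinge_nonneg _ _) (NS_summable ha t)
  have hq := Nq_nonneg ht0.le
  rw [le_div_iff₀ ht0]
  have h5 : b * t ≤ (K : ℝ) / 2 * t := mul_le_mul_of_nonneg_right hKb ht0.le
  have h6 : (K : ℝ) / 2 * t = (K : ℝ) * (t / 2) := by ring
  have : NG a t = Nq t + NS a t := rfl
  linarith

end NGlem

theorem stmt2' (f : ℝ → ℝ) (hf : IntegrableOn f (Ioi 0) volume) :
    ∃ G : ℝ → ℝ, (ContinuousOn G (Ici 0) ∧ ConvexOn ℝ (Ici 0) G ∧ (∀ t, 0 ≤ t → 0 ≤ G t) ∧ G 0 = 0 ∧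
  (∀ t, 0 < t → 0 < G t) ∧
  Tendsto (fun t => G t / t) (𝓝[>] 0) (𝓝 0) ∧
  Tendsto (fun t => G t / t) atTop atTop) ∧ IntegrableOn (fun t => G |f t|) (Ioi 0) volume := by
  set μ := volume.restrict (Ioi (0:ℝ)) with hμ
  have hfm : AEMeasurable f μ := hf.aemeasurable
  have habs : Integrable (fun t => |f t|) μ := hf.abs
  have hfam : AEMeasurable (fun t => |f t|) μ := habs.aemeasurable
  have hmeas : ∀ c : ℝ, AEStronglyMeasurable (fun t => max (|f t| - c) 0) μ := fun c =>
    ((hfam.sub aemeasurable_const).max aemeasurable_const).aestronglyMeasurable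
  have htend : Tendsto (fun c : ℝ => ∫ t, max (|f t| - c) 0 ∂μ) atTop (𝓝 0) := by
    have key := tendsto_integral_filter_of_dominated_convergence (μ := μ) (l := atTop)
      (F := fun (c : ℝ) (t : ℝ) => max (|f t| - c) 0) (f := fun _ => (0:ℝ))
      (fun t => |f t|) ?_ ?_ habs ?_
    · simpa using key
    · exact Eventually.of_forall fun c => hmeas c
    · filter_upwards [eventually_ge_atTop (0:ℝ)] with c hc
      refine Eventually.of_forall fun t => ?_
      rw [Real.norm_eq_abs, abs_of_nonneg (le_max_right _ _)]
      exact max_le (by linarith) (abs_nonneg _)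
    · refine Eventually.of_forall fun t => ?_
      refine Tendsto.congr' ?_ tendsto_const_nhds
      filter_upwards [eventually_ge_atTop (|f t|)] with c hc
      exact (max_eq_right (by linarith)).symm
  have hsel : ∀ k : ℕ, ∃ c : ℝ,
      ((k:ℝ) + 1 ≤ c) ∧ ∫ t, max (|f t| - c) 0 ∂μ ≤ (1/2:ℝ)^k := by
    intro k
    have h1 : ∀ᶠ c in atTop, (∫ t, max (|f t| - c) 0 ∂μ) < (1/2:ℝ)^k :=
      htend.eventually_lt_const (by positivity)
    obtain ⟨c, hc1, hc2⟩ := ((eventually_ge_atTop ((k:ℝ)+1)).and h1).exists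
    exact ⟨c, hc1, hc2.le⟩
  choose a ha1 ha2 using hsel
  have hanneg : ∀ k : ℕ, 0 ≤ a k := by
    intro k
    have h := ha1 k
    have : (0:ℝ) ≤ (k:ℝ) + 1 := by positivity
    linarith
  refine ⟨NG a, ⟨NG_continuousOn ha1, NG_convex ha1, fun t ht => NG_nonneg ht, NG_zero ha1,
    fun t ht => NG_pos ht, NG_tendsto_zero ha1, NG_tendsto_atTop ha1⟩, ?_⟩
  have hint_q : Integrable (fun t => Nq (|f t|)) μ := by
    refine Integrable.mono' habs ?_ ?_
    · have : AEMeasurable (fun t => |f t| - 1 + (1 + |f t|)⁻¹) μ :=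
        (hfam.sub aemeasurable_const).add (aemeasurable_const.add hfam).inv
      exact this.aestronglyMeasurable
    · refine Eventually.of_forall fun t => ?_
      rw [Real.norm_eq_abs, abs_of_nonneg (Nq_nonneg (abs_nonneg _))]
      exact Nq_le (abs_nonneg _)
  have hint_k : ∀ k : ℕ, Integrable (fun t => NHinge (a k) (|f t|)) μ := by
    intro k
    refine Integrable.mono' habs (hmeas (a k)) ?_
    refine Eventually.of_forall fun t => ?_
    rw [Real.norm_eq_abs, abs_of_nonneg (NHinge_nonneg _ _)]
    exact NHinge_le (hanneg k) (abs_nonneg _)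
  have hint_S : Integrable (fun t => NS a (|f t|)) μ := by
    constructor
    · exact (NS_continuous ha1).comp_aestronglyMeasurable hfam.aestronglyMeasurable
    · rw [hasFiniteIntegral_iff_norm]
      have heq1 : ∀ t : ℝ, ENNReal.ofReal ‖NS a (|f t|)‖ =
          ∑' k, ENNReal.ofReal (NHinge (a k) (|f t|)) := by
        intro t
        rw [Real.norm_eq_abs, abs_of_nonneg (NS_nonneg _)]
        exact ENNReal.ofReal_tsum_of_nonneg (fun k => NHinge_nonneg _ _) (NS_summable ha1 _)
      calc (∫⁻ t, ENNReal.ofReal ‖NS a (|f t|)‖ ∂μ)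
          = ∫⁻ t, ∑' k, ENNReal.ofReal (NHinge (a k) (|f t|)) ∂μ := by
            exact lintegral_congr fun t => heq1 t
        _ = ∑' k, ∫⁻ t, ENNReal.ofReal (NHinge (a k) (|f t|)) ∂μ := by
            refine lintegral_tsum fun k => ?_
            exact ((hfam.sub aemeasurable_const).max aemeasurable_const).ennreal_ofReal
        _ = ∑' k, ENNReal.ofReal (∫ t, NHinge (a k) (|f t|) ∂μ) := by
            refine tsum_congr fun k => ?_
            rw [ofReal_integral_eq_lintegral_ofReal (hint_k k)
              (Eventually.of_forall fun t => NHinge_nonneg _ _)]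
        _ ≤ ∑' k, ENNReal.ofReal ((1/2:ℝ)^k) := by
            refine ENNReal.tsum_le_tsum fun k => ENNReal.ofReal_le_ofReal ?_
            exact ha2 k
        _ = ENNReal.ofReal (∑' k, (1/2:ℝ)^k) :=
            (ENNReal.ofReal_tsum_of_nonneg (fun k => by positivity) summable_geometric_two).symm
        _ < ⊤ := ENNReal.ofReal_lt_top
  exact hint_q.add hint_S


theorem stmt2 (f : ℝ → ℝ) (hf : IntegrableOn f (Ioi 0) volume) :
    ∃ G : ℝ → ℝ, IsNFunction G ∧ IntegrableOn (fun t => G |f t|) (Ioi 0) volume :=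
  stmt2' f hf
end

section
/- For any integrable function f on a finite measure space, there exists an N-function G such that G∘|f| is integrable. -/
open MeasureTheory Set Filter Topology
open scoped ENNReal NNReal

section Aux
variable (a : ℕ → ℝ) (ha : ∀ k : ℕ, (k:ℝ) + 1 ≤ a k)

noncomputable def Spart (a : ℕ → ℝ) (t : ℝ) : ℝ := ∑' k, max (t - a k) 0

lemma Spart_vanish (ha : ∀ k : ℕ, (k:ℝ) + 1 ≤ a k) {t : ℝ} {M : ℕ} (htM : t ≤ M) :
    ∀ k ∉ Finset.range M, max (t - a k) 0 = 0 := by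
  intro k hk
  simp only [Finset.mem_range, not_lt] at hk
  have h1 : (M:ℝ) ≤ k := by exact_mod_cast hk
  have := ha k
  have : t - a k ≤ 0 := by linarith
  simp [max_eq_right this]

lemma Spart_summable (ha : ∀ k : ℕ, (k:ℝ) + 1 ≤ a k) (t : ℝ) :
    Summable (fun k => max (t - a k) 0) :=
  summable_of_ne_finset_zero (s := Finset.range ⌈t⌉₊)
    (Spart_vanish a ha (Nat.le_ceil t))

lemma Spart_eq_sum (ha : ∀ k : ℕ, (k:ℝ) + 1 ≤ a k) {t : ℝ} {M : ℕ} (htM : t ≤ M) :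
    Spart a t = ∑ k ∈ Finset.range M, max (t - a k) 0 :=
  tsum_eq_sum (Spart_vanish a ha htM)

lemma Spart_nonneg (t : ℝ) : 0 ≤ Spart a t :=
  tsum_nonneg (fun k => le_max_right _ _)

lemma Spart_zero_of_le_one (ha : ∀ k : ℕ, (k:ℝ) + 1 ≤ a k) {t : ℝ} (ht : t ≤ 1) :
    Spart a t = 0 := by
  rw [Spart_eq_sum a ha (M := 1) (by exact_mod_cast ht)]
  have := ha 0
  simp only [Finset.range_one, Finset.sum_singleton]
  have : t - a 0 ≤ 0 := by linarith
  simp [max_eq_right this]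

lemma Spart_convex (ha : ∀ k : ℕ, (k:ℝ) + 1 ≤ a k) : ConvexOn ℝ univ (Spart a) := by
  refine ⟨convex_univ, ?_⟩
  intro x _ y _ p q hp hq hpq
  have hM : ∃ M : ℕ, x ≤ M ∧ y ≤ M := by
    obtain ⟨M, hM⟩ := exists_nat_ge (max x y)
    exact ⟨M, (le_max_left x y).trans hM, (le_max_right x y).trans hM⟩
  obtain ⟨M, hxM, hyM⟩ := hM
  have hcomb : p • x + q • y ≤ M := by
    have : p • x + q • y ≤ p * M + q * M := by
      simp only [smul_eq_mul]; gcongr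
    simpa [← add_mul, hpq] using this
  rw [Spart_eq_sum a ha hcomb, Spart_eq_sum a ha hxM, Spart_eq_sum a ha hyM]
  simp only [smul_eq_mul]
  rw [Finset.mul_sum, Finset.mul_sum, ← Finset.sum_add_distrib]
  refine Finset.sum_le_sum fun k _ => ?_
  have h1 : p * x + q * y - a k = p * (x - a k) + q * (y - a k) := by
    linear_combination (a k) * hpq
  refine max_le ?_ (by positivity)
  rw [h1]
  gcongr <;> [exact le_max_left _ _; exact le_max_left _ _]

lemma Spart_continuous (ha : ∀ k : ℕ, (k:ℝ) + 1 ≤ a k) : Continuous (Spart a) := by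
  rw [continuous_iff_continuousAt]
  intro x
  obtain ⟨M, hM⟩ := exists_nat_gt x
  have heq : Spart a =ᶠ[𝓝 x] (fun t => ∑ k ∈ Finset.range M, max (t - a k) 0) := by
    filter_upwards [Iio_mem_nhds hM] with t ht
    exact Spart_eq_sum a ha ht.le
  refine ContinuousAt.congr ?_ heq.symm
  exact (continuous_finset_sum _ fun k _ =>
    (continuous_id.sub continuous_const).max continuous_const).continuousAt

lemma Spart_atTop (ha : ∀ k : ℕ, (k:ℝ) + 1 ≤ a k) :
    Tendsto (fun t => Spart a t / t) atTop atTop := by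
  rw [tendsto_atTop]
  intro b
  set K : ℕ := ⌈b⌉₊ + 1
  set Sa : ℝ := ∑ k ∈ Finset.range K, a k
  have hSa : 0 ≤ Sa := Finset.sum_nonneg fun k _ => le_trans (by positivity) (ha k)
  filter_upwards [eventually_ge_atTop (max 1 Sa)] with t ht
  have ht1 : (1:ℝ) ≤ t := le_of_max_le_left ht
  have htSa : Sa ≤ t := le_of_max_le_right ht
  have ht0 : 0 < t := by linarith
  have h1 : (K:ℝ) * t - Sa ≤ Spart a t := by
    have : ∑ k ∈ Finset.range K, (t - a k) ≤ ∑ k ∈ Finset.range K, max (t - a k) 0 :=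
      Finset.sum_le_sum fun k _ => le_max_left _ _
    have hsum : ∑ k ∈ Finset.range K, (t - a k) = K * t - Sa := by
      rw [Finset.sum_sub_distrib]; simp [Sa, mul_comm]
    have hle : ∑ k ∈ Finset.range K, max (t - a k) 0 ≤ Spart a t :=
      (Spart_summable a ha t).sum_le_tsum _ (fun k _ => le_max_right _ _)
    linarith
  have h2 : b ≤ (K:ℝ) - 1 := by
    have : (b:ℝ) ≤ ⌈b⌉₊ := Nat.le_ceil b
    have hK : (K:ℝ) = ⌈b⌉₊ + 1 := by push_cast [K]; ring
    linarith
  have h3 : ((K:ℝ) * t - Sa) / t = K - Sa / t := by field_simp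
  have h4 : Sa / t ≤ 1 := by rw [div_le_one ht0]; linarith
  calc b ≤ (K:ℝ) - 1 := h2
    _ ≤ K - Sa / t := by linarith
    _ = ((K:ℝ) * t - Sa) / t := h3.symm
    _ ≤ Spart a t / t := by gcongr
end Aux

noncomputable def Gone (t : ℝ) : ℝ := t - Real.log (1 + t)

lemma Gone_zero : Gone 0 = 0 := by simp [Gone]

lemma Gone_nonneg {t : ℝ} (ht : 0 ≤ t) : 0 ≤ Gone t := by
  have h : Real.log (1 + t) ≤ (1 + t) - 1 := Real.log_le_sub_one_of_pos (by linarith)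
  simp only [Gone]; linarith

lemma Gone_pos {t : ℝ} (ht : 0 < t) : 0 < Gone t := by
  have h : Real.log (1 + t) < (1 + t) - 1 :=
    Real.log_lt_sub_one_of_pos (by linarith) (by linarith)
  simp only [Gone]; linarith

lemma Gone_le {t : ℝ} (ht : 0 ≤ t) : Gone t ≤ t := by
  have h : 0 ≤ Real.log (1 + t) := Real.log_nonneg (by linarith)
  simp only [Gone]; linarith

lemma Gone_continuousOn : ContinuousOn Gone (Ici 0) := by
  refine ContinuousOn.sub (continuous_id.continuousOn) ?_
  intro x hx
  have : (1:ℝ) + x ≠ 0 := by simp only [mem_Ici] at hx; positivity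
  exact ((Real.continuousAt_log this).comp
    ((continuous_const.add continuous_id).continuousAt)).continuousWithinAt

lemma Gone_convex : ConvexOn ℝ (Ici 0) Gone := by
  have hconc : ConcaveOn ℝ (Ici 0) (fun t => Real.log (1 + t)) := by
    refine ⟨convex_Ici 0, fun x hx y hy p q hp hq hpq => ?_⟩
    simp only [mem_Ici] at hx hy
    have h1x : (1 : ℝ) + x ∈ Ioi (0:ℝ) := by simp; linarith
    have h1y : (1 : ℝ) + y ∈ Ioi (0:ℝ) := by simp; linarith
    have := strictConcaveOn_log_Ioi.concaveOn.2 h1x h1y hp hq hpq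
    simp only [smul_eq_mul] at this ⊢
    have heq : p * (1 + x) + q * (1 + y) = 1 + (p * x + q * y) := by
      linear_combination (x:ℝ) * 0 + hpq  -- p + q = 1
    rw [heq] at this
    exact this
  have := (convexOn_id (convex_Ici (0:ℝ))).sub hconc
  exact this

lemma Gone_slope_zero : Tendsto (fun t => Gone t / t) (𝓝[>] 0) (𝓝 0) := by
  have hlog : HasDerivAt (fun t : ℝ => Real.log (1 + t)) 1 0 := by
    have hin : HasDerivAt (fun t : ℝ => 1 + t) 1 0 := by
      simpa using (hasDerivAt_id (0:ℝ)).const_add 1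
    have := (Real.hasDerivAt_log (by norm_num : (1:ℝ) + 0 ≠ 0)).comp 0 hin
    simpa [Function.comp_def] using this
  have hG : HasDerivAt Gone 0 0 := by
    have h := (hasDerivAt_id (0:ℝ)).sub hlog
    rw [sub_self] at h
    exact h
  have := hasDerivAt_iff_tendsto_slope.1 hG
  have h2 : Tendsto (slope Gone 0) (𝓝[>] 0) (𝓝 0) :=
    this.mono_left (nhdsWithin_mono _ (fun x hx => by simpa using ne_of_gt hx))
  refine h2.congr (fun t => ?_)
  simp [slope_def_field, Gone_zero, div_eq_mul_inv, mul_comm]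

lemma isNFunction_sum (a : ℕ → ℝ) (ha : ∀ k : ℕ, (k:ℝ) + 1 ≤ a k) :
    IsNFunction (fun t => Gone t + Spart a t) := by
  refine ⟨Gone_continuousOn.add (Spart_continuous a ha).continuousOn,
    Gone_convex.add ((Spart_convex a ha).subset (subset_univ _) (convex_Ici 0)),
    fun t ht => add_nonneg (Gone_nonneg ht) (Spart_nonneg a t),
    by simp [Gone_zero, Spart_zero_of_le_one a ha (by norm_num : (0:ℝ) ≤ 1)],
    fun t ht => add_pos_of_pos_of_nonneg (Gone_pos ht) (Spart_nonneg a t), ?_, ?_⟩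
  · refine Gone_slope_zero.congr' ?_
    filter_upwards [Ioo_mem_nhdsGT one_pos] with t ht
    rw [Spart_zero_of_le_one a ha ht.2.le, add_zero]
  · refine tendsto_atTop_mono' _ ?_ (Spart_atTop a ha)
    filter_upwards [eventually_gt_atTop (0:ℝ)] with t ht
    have := Gone_nonneg ht.le
    rw [add_div]
    have : 0 ≤ Gone t / t := div_nonneg this ht.le
    linarith

theorem stmt3 {Ω : Type*} [MeasurableSpace Ω] (ν : Measure Ω) [IsFiniteMeasure ν]
    (f : Ω → ℝ) (hf : Integrable f ν) :
    ∃ G : ℝ → ℝ, IsNFunction G ∧ Integrable (fun ω => G |f ω|) ν := by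
  obtain ⟨g, gsm, hfg⟩ := hf.1
  have hg : Integrable g ν := hf.congr hfg
  have gmeas : Measurable g := gsm.measurable
  have gabs : Measurable fun ω => |g ω| := gmeas.abs
  set μ' : Measure Ω := ν.withDensity (fun ω => ENNReal.ofReal |g ω|) with hμ'def
  have hofReal : ∀ ω, ENNReal.ofReal |g ω| = (‖g ω‖₊ : ℝ≥0∞) := fun ω => by
    rw [← Real.norm_eq_abs, ofReal_norm, enorm_eq_nnnorm]
  have hμ'fin : μ' univ ≠ ⊤ := by
    rw [hμ'def, withDensity_apply _ MeasurableSet.univ, setLIntegral_univ]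
    have h2 := hg.2
    rw [hasFiniteIntegral_iff_norm] at h2
    simp only [hofReal]
    simp only [← enorm_eq_nnnorm, ← ofReal_norm]
    exact h2.ne
  have hSmeas : ∀ r : ℝ, MeasurableSet {ω | r ≤ |g ω|} :=
    fun r => measurableSet_le measurable_const gabs
  have htend : Tendsto (fun n : ℕ => μ' {ω | (n:ℝ) ≤ |g ω|}) atTop (𝓝 0) := by
    have h1 : (⋂ n : ℕ, {ω | (n:ℝ) ≤ |g ω|}) = (∅ : Set Ω) := by
      ext ω
      simp only [mem_iInter, mem_setOf_eq, mem_empty_iff_false, iff_false, not_forall]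
      obtain ⟨n, hn⟩ := exists_nat_gt |g ω|
      exact ⟨n, not_le.2 hn⟩
    have h2 := tendsto_measure_iInter_atTop (μ := μ') (s := fun n : ℕ => {ω | (n:ℝ) ≤ |g ω|})
      (fun n => (hSmeas (n:ℝ)).nullMeasurableSet)
      (fun m n hmn ω hω => le_trans (show (m:ℝ) ≤ (n:ℝ) by exact_mod_cast hmn) hω)
      ⟨0, ne_top_of_le_ne_top hμ'fin (measure_mono (subset_univ _))⟩
    rw [h1] at h2
    simpa [Function.comp_def] using h2
  have hchoice : ∀ k : ℕ, ∃ N : ℕ, (k:ℝ) + 1 ≤ (N:ℝ) ∧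
      μ' {ω | (N:ℝ) ≤ |g ω|} ≤ (2⁻¹ : ℝ≥0∞) ^ k := by
    intro k
    have hpos : (0:ℝ≥0∞) < 2⁻¹ ^ k := by
      apply ENNReal.pow_pos
      simp
    have hev := htend.eventually (gt_mem_nhds hpos)
    obtain ⟨N₀, hN₀⟩ := hev.exists_forall_of_atTop
    refine ⟨max N₀ (k + 1), ?_, ?_⟩
    · have : (k + 1 : ℕ) ≤ max N₀ (k + 1) := le_max_right _ _
      push_cast
      exact_mod_cast this
    · exact (hN₀ _ (le_max_left _ _)).le
  choose N hN1 hN2 using hchoice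
  set a : ℕ → ℝ := fun k => (N k : ℝ) with hadef
  have ha : ∀ k : ℕ, (k:ℝ) + 1 ≤ a k := hN1
  refine ⟨fun t => Gone t + Spart a t, isNFunction_sum a ha, ?_⟩
  have hfg' : (fun ω => Gone |f ω| + Spart a |f ω|) =ᵐ[ν]
      (fun ω => Gone |g ω| + Spart a |g ω|) := hfg.mono fun ω h => by simp only [h]
  rw [show (fun ω => (fun t => Gone t + Spart a t) |f ω|) =
      (fun ω => Gone |f ω| + Spart a |f ω|) from rfl, integrable_congr hfg']
  have hmeasG : AEStronglyMeasurable (fun ω => Gone |g ω| + Spart a |g ω|) ν := by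
    apply Measurable.aestronglyMeasurable
    have h1 : Measurable fun ω => Gone |g ω| := by
      simp only [Gone]
      exact gabs.sub (Real.measurable_log.comp (measurable_const.add gabs))
    exact h1.add ((Spart_continuous a ha).measurable.comp gabs)
  refine ⟨hmeasG, ?_⟩
  rw [hasFiniteIntegral_iff_ofReal (Eventually.of_forall fun ω =>
    add_nonneg (Gone_nonneg (abs_nonneg _)) (Spart_nonneg a _))]
  have habs_fin : ∫⁻ ω, ENNReal.ofReal |g ω| ∂ν < ⊤ := by
    have h2 := hg.2
    rw [hasFiniteIntegral_iff_norm] at h2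
    simpa only [← ofReal_norm, Real.norm_eq_abs] using h2
  have hterm_meas : ∀ k : ℕ, AEMeasurable
      (fun ω => ENNReal.ofReal (max (|g ω| - a k) 0)) ν := fun k =>
    (ENNReal.measurable_ofReal.comp ((gabs.sub measurable_const).max
      measurable_const)).aemeasurable
  have hterm_le : ∀ k : ℕ,
      ∫⁻ ω, ENNReal.ofReal (max (|g ω| - a k) 0) ∂ν ≤ (2⁻¹ : ℝ≥0∞) ^ k := by
    intro k
    have hb : ∀ ω, ENNReal.ofReal (max (|g ω| - a k) 0) ≤
        ({ω | a k ≤ |g ω|}).indicator (fun ω => ENNReal.ofReal |g ω|) ω := by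
      intro ω
      by_cases h : a k ≤ |g ω|
      · rw [indicator_of_mem (show ω ∈ {ω | a k ≤ |g ω|} from h) (fun ω => ENNReal.ofReal |g ω|)]
        apply ENNReal.ofReal_le_ofReal
        have hk0 : (0:ℝ) ≤ a k := le_trans (by positivity) (ha k)
        exact max_le (by linarith) (abs_nonneg _)
      · rw [indicator_of_notMem (show ω ∉ {ω | a k ≤ |g ω|} from h) (fun ω => ENNReal.ofReal |g ω|)]
        have : |g ω| - a k ≤ 0 := by push_neg at h; linarith
        simp [max_eq_right this]
    calc ∫⁻ ω, ENNReal.ofReal (max (|g ω| - a k) 0) ∂ν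
        ≤ ∫⁻ ω, ({ω | a k ≤ |g ω|}).indicator (fun ω => ENNReal.ofReal |g ω|) ω ∂ν :=
          lintegral_mono hb
      _ = ∫⁻ ω in {ω | a k ≤ |g ω|}, ENNReal.ofReal |g ω| ∂ν :=
          lintegral_indicator (hSmeas (a k)) _
      _ = μ' {ω | a k ≤ |g ω|} := (withDensity_apply _ (hSmeas (a k))).symm
      _ ≤ (2⁻¹ : ℝ≥0∞) ^ k := hN2 k
  calc ∫⁻ ω, ENNReal.ofReal (Gone |g ω| + Spart a |g ω|) ∂ν
      ≤ ∫⁻ ω, (ENNReal.ofReal (Gone |g ω|) + ENNReal.ofReal (Spart a |g ω|)) ∂ν :=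
        lintegral_mono fun ω => ENNReal.ofReal_add_le
    _ = ∫⁻ ω, ENNReal.ofReal (Gone |g ω|) ∂ν +
        ∫⁻ ω, ENNReal.ofReal (Spart a |g ω|) ∂ν := by
        apply lintegral_add_left
        exact ENNReal.measurable_ofReal.comp (by
          simp only [Gone]
          exact gabs.sub (Real.measurable_log.comp (measurable_const.add gabs)))
    _ < ⊤ := by
        apply ENNReal.add_lt_top.2
        constructor
        · exact lt_of_le_of_lt (lintegral_mono fun ω =>
            ENNReal.ofReal_le_ofReal (Gone_le (abs_nonneg _))) habs_fin
        · have heq : ∀ ω, ENNReal.ofReal (Spart a |g ω|) =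
              ∑' k, ENNReal.ofReal (max (|g ω| - a k) 0) := fun ω =>
            ENNReal.ofReal_tsum_of_nonneg (fun k => le_max_right _ _)
              (Spart_summable a ha _)
          calc ∫⁻ ω, ENNReal.ofReal (Spart a |g ω|) ∂ν
              = ∫⁻ ω, ∑' k, ENNReal.ofReal (max (|g ω| - a k) 0) ∂ν := by
                simp only [heq]
            _ = ∑' k, ∫⁻ ω, ENNReal.ofReal (max (|g ω| - a k) 0) ∂ν :=
                lintegral_tsum hterm_meas
            _ ≤ ∑' k : ℕ, (2⁻¹ : ℝ≥0∞) ^ k := ENNReal.tsum_le_tsum hterm_le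
            _ < ⊤ := by
                rw [ENNReal.tsum_geometric, ENNReal.one_sub_inv_two, inv_inv]
                simp
end

section
/- Let f and g be nonincreasing integrable functions on (0,∞) with ∫_0^t f(s) ds ≤ ∫_0^t g(s) ds for every 0 < t < ∞. Then for every increasing continuous convex function φ on [0,∞), ∫_0^t φ(f(s)) ds ≤ ∫_0^t φ(g(s)) ds for every 0 < t < ∞. -/
open MeasureTheory Set Filter Topology

noncomputable def subc (Φ : ℝ → ℝ) (x : ℝ) : ℝ :=
  if 0 < x then sSup ((fun u => (Φ x - Φ u) / (x - u)) '' Ico 0 x) else 0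

variable {Φ : ℝ → ℝ}

lemma subc_bdd (hconv : ConvexOn ℝ (Ici 0) Φ) {x : ℝ} (hx : 0 < x) :
    BddAbove ((fun u => (Φ x - Φ u) / (x - u)) '' Ico 0 x) := by
  refine ⟨(Φ (x + 1) - Φ x) / (x + 1 - x), ?_⟩
  rintro v ⟨u, ⟨hu0, hux⟩, rfl⟩
  exact hconv.slope_mono_adjacent hu0 (by positivity : (0:ℝ) ≤ x + 1) hux (by linarith)

lemma subc_le_slope (hconv : ConvexOn ℝ (Ici 0) Φ) {x y : ℝ} (hx : 0 < x) (hxy : x < y) :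
    subc Φ x ≤ (Φ y - Φ x) / (y - x) := by
  rw [subc, if_pos hx]
  refine csSup_le ⟨(Φ x - Φ 0) / (x - 0), ⟨0, ⟨le_rfl, hx⟩, rfl⟩⟩ ?_
  rintro v ⟨u, ⟨hu0, hux⟩, rfl⟩
  exact hconv.slope_mono_adjacent hu0 (le_of_lt (hx.trans hxy)) hux hxy

lemma slope_le_subc (hconv : ConvexOn ℝ (Ici 0) Φ) {u x : ℝ} (hu : 0 ≤ u) (hux : u < x) :
    (Φ x - Φ u) / (x - u) ≤ subc Φ x := by
  rw [subc, if_pos (hu.trans_lt hux)]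
  exact le_csSup (subc_bdd hconv (hu.trans_lt hux)) ⟨u, ⟨hu, hux⟩, rfl⟩

lemma subc_nonneg (hconv : ConvexOn ℝ (Ici 0) Φ) (hmono : MonotoneOn Φ (Ici 0)) (x : ℝ) :
    0 ≤ subc Φ x := by
  by_cases hx : 0 < x
  · refine le_trans ?_ (slope_le_subc hconv le_rfl hx)
    have : Φ 0 ≤ Φ x := hmono (mem_Ici.2 le_rfl) hx.le hx.le
    apply div_nonneg (by linarith) (by linarith)
  · rw [subc, if_neg hx]

lemma subc_support (hconv : ConvexOn ℝ (Ici 0) Φ) (hmono : MonotoneOn Φ (Ici 0))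
    {x y : ℝ} (hx : 0 ≤ x) (hy : 0 ≤ y) :
    Φ x + subc Φ x * (y - x) ≤ Φ y := by
  by_cases hx0 : 0 < x
  · rcases lt_trichotomy y x with h | h | h
    · have h1 : (Φ x - Φ y) / (x - y) ≤ subc Φ x := slope_le_subc hconv hy h
      have h2 : (0:ℝ) < x - y := by linarith
      rw [div_le_iff₀ h2] at h1
      nlinarith [subc_nonneg hconv hmono x]
    · subst h; simp
    · have h1 : subc Φ x ≤ (Φ y - Φ x) / (y - x) := subc_le_slope hconv hx0 h
      have h2 : (0:ℝ) < y - x := by linarith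
      rw [le_div_iff₀ h2] at h1
      linarith
  · rw [subc, if_neg hx0]
    have : x = 0 := le_antisymm (not_lt.1 hx0) hx
    subst this
    simpa using hmono (mem_Ici.2 le_rfl) hy hy

lemma subc_mono (hconv : ConvexOn ℝ (Ici 0) Φ) (hmono : MonotoneOn Φ (Ici 0)) :
    Monotone (subc Φ) := by
  intro a b hab
  by_cases ha : 0 < a
  · have hb : 0 < b := ha.trans_le hab
    rw [subc, if_pos ha]
    refine csSup_le ⟨(Φ a - Φ 0) / (a - 0), ⟨0, ⟨le_rfl, ha⟩, rfl⟩⟩ ?_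
    rintro v ⟨u, ⟨hu0, hua⟩, rfl⟩
    rcases eq_or_lt_of_le hab with rfl | hlt
    · exact slope_le_subc hconv hu0 hua
    · refine le_trans (hconv.slope_mono_adjacent hu0 hb.le hua hlt)
        (slope_le_subc hconv ha.le hlt)
  · rw [subc, if_neg ha]
    exact subc_nonneg hconv hmono b


lemma wlemma (f g w : ℝ → ℝ) (t M : ℝ) (ht : 0 < t) (hM : 0 < M)
    (hf0 : ∀ s ∈ Ioi (0:ℝ), 0 ≤ f s) (hg0 : ∀ s ∈ Ioi (0:ℝ), 0 ≤ g s)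
    (hw0 : ∀ s ∈ Ioi (0:ℝ), 0 ≤ w s) (hwM : ∀ s ∈ Ioi (0:ℝ), w s ≤ M)
    (hwa : AntitoneOn w (Ioi 0))
    (hfm : AEMeasurable f (volume.restrict (Ioo 0 t)))
    (hgm : AEMeasurable g (volume.restrict (Ioo 0 t)))
    (hle : ∀ u : ℝ, 0 < u → u ≤ t →
      ∫⁻ s in Ioo (0:ℝ) u, ENNReal.ofReal (f s) ≤ ∫⁻ s in Ioo (0:ℝ) u, ENNReal.ofReal (g s)) :
    ∫⁻ s in Ioo (0:ℝ) t, ENNReal.ofReal (w s * f s) ≤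
      ∫⁻ s in Ioo (0:ℝ) t, ENNReal.ofReal (w s * g s) := by
  set ν := volume.restrict (Ioo (0:ℝ) t) with hν
  set μ := volume.restrict (Ioo (0:ℝ) M) with hμ
  set S : ℝ → Set ℝ := fun l => {s | s ∈ Ioo (0:ℝ) t ∧ l < w s} with hS
  set u : ℝ → ℝ := fun l => sSup (insert 0 (S l)) with hu
  have hSbdd : ∀ l, BddAbove (insert 0 (S l)) := by
    intro l
    refine ⟨t, ?_⟩
    rintro x (rfl | ⟨hx, _⟩)
    · exact ht.le
    · exact hx.2.le
  have hu0 : ∀ l, 0 ≤ u l := fun l => le_csSup (hSbdd l) (mem_insert _ _)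
  have hut : ∀ l, u l ≤ t := by
    intro l
    refine csSup_le ⟨0, mem_insert _ _⟩ ?_
    rintro x (rfl | ⟨hx, _⟩)
    · exact ht.le
    · exact hx.2.le
  have hua : Antitone u := by
    intro l1 l2 h
    refine csSup_le_csSup (hSbdd l1) ⟨0, mem_insert _ _⟩ ?_
    rintro x (rfl | ⟨hx, hwx⟩)
    · exact mem_insert _ _
    · exact mem_insert_of_mem _ ⟨hx, h.trans_lt hwx⟩
  have hum : Measurable u := hua.measurable
  -- section facts
  have hsec1 : ∀ l s, s ∈ Ioo (0:ℝ) t → s < u l → l < w s := by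
    intro l s hs hsu
    obtain ⟨x, hx, hsx⟩ := exists_lt_of_lt_csSup ⟨0, mem_insert _ _⟩ hsu
    rcases hx with rfl | ⟨hx1, hx2⟩
    · exact absurd hsx (not_lt.2 hs.1.le)
    · exact lt_of_lt_of_le hx2 (hwa hs.1 hx1.1 hsx.le)
  have hsec2 : ∀ l s, s ∈ Ioo (0:ℝ) t → l < w s → s ≤ u l := by
    intro l s hs hws
    exact le_csSup (hSbdd l) (mem_insert_of_mem _ ⟨hs, hws⟩)
  -- inner rewrite, for every l
  have hinner : ∀ (h : ℝ → ℝ) (l : ℝ),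
      (∫⁻ s in Ioo (0:ℝ) t, (if l < w s then ENNReal.ofReal (h s) else 0)) =
        ∫⁻ s in Ioo (0:ℝ) (u l), ENNReal.ofReal (h s) := by
    intro h l
    have hae : ∀ᵐ s ∂ν, (if l < w s then ENNReal.ofReal (h s) else 0) =
        (Ioo (0:ℝ) (u l)).indicator (fun s => ENNReal.ofReal (h s)) s := by
      have h1 : ∀ᵐ s ∂ν, s ∈ Ioo (0:ℝ) t := ae_restrict_mem measurableSet_Ioo
      have h2 : ∀ᵐ s ∂ν, s ≠ u l := by
        refine ae_mono Measure.restrict_le_self ?_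
        exact compl_mem_ae_iff.2 (measure_singleton (u l))
      filter_upwards [h1, h2] with s hs hne
      rcases lt_or_gt_of_ne hne with hlt | hgt
      · have hm : s ∈ Ioo (0:ℝ) (u l) := ⟨hs.1, hlt⟩
        rw [if_pos (hsec1 l s hs hlt), Set.indicator_of_mem hm]
      · rw [if_neg (fun hws => absurd (hsec2 l s hs hws) (not_le.2 hgt)),
          indicator_of_notMem (fun hmem => absurd hmem.2 (not_lt.2 hgt.le))]
    rw [lintegral_congr_ae hae, lintegral_indicator measurableSet_Ioo,
      Measure.restrict_restrict measurableSet_Ioo,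
      inter_eq_self_of_subset_left (Ioo_subset_Ioo_right (hut l))]
  -- the swap identity
  have hswap : ∀ (h : ℝ → ℝ), AEMeasurable h ν → (∀ s ∈ Ioi (0:ℝ), 0 ≤ h s) →
      ∫⁻ s in Ioo (0:ℝ) t, ENNReal.ofReal (w s * h s) =
        ∫⁻ l in Ioo (0:ℝ) M, ∫⁻ s in Ioo (0:ℝ) (u l), ENNReal.ofReal (h s) := by
    intro h hh hh0
    have stepA : ∫⁻ s in Ioo (0:ℝ) t, ENNReal.ofReal (w s * h s) =
        ∫⁻ s in Ioo (0:ℝ) t, ∫⁻ l in Ioo (0:ℝ) M,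
          (if l < w s then ENNReal.ofReal (h s) else 0) := by
      refine setLIntegral_congr_fun measurableSet_Ioo (fun s hs => ?_)
      have hfun : (fun l => if l < w s then ENNReal.ofReal (h s) else 0) =
          (Iio (w s)).indicator (fun _ => ENNReal.ofReal (h s)) := by
        funext l; simp [Set.indicator_apply, mem_Iio]
      rw [hfun, lintegral_indicator measurableSet_Iio,
        Measure.restrict_restrict measurableSet_Iio, lintegral_const,
        Measure.restrict_apply_univ, inter_comm, Ioo_inter_Iio,
        min_eq_right (hwM s hs.1), Real.volume_Ioo, sub_zero,
        ← ENNReal.ofReal_mul (hh0 s hs.1), mul_comm (h s) (w s)]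
    rw [stepA]
    have hmeas : AEMeasurable
        (Function.uncurry fun s l => if l < w s then ENNReal.ofReal (h s) else 0)
        (ν.prod μ) := by
      have hset : MeasurableSet {p : ℝ × ℝ | p.1 < u p.2} :=
        measurableSet_lt measurable_fst (hum.comp measurable_snd)
      have hK' : AEMeasurable
          (fun p : ℝ × ℝ => if p.1 < u p.2 then ENNReal.ofReal (h p.1) else 0) (ν.prod μ) := by
        have hbase : AEMeasurable (fun p : ℝ × ℝ => ENNReal.ofReal (h p.1)) (ν.prod μ) :=
          (ENNReal.measurable_ofReal.comp_aemeasurable hh).comp_fst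
        exact (AEMeasurable.indicator hbase hset).congr
          (ae_of_all _ fun p => by by_cases hp : p.1 < u p.2 <;>
            simp [Set.indicator_apply, hp])
      -- a.e. equality between the two kernels
      have hΓ : MeasurableSet {p : ℝ × ℝ | p.1 = u p.2} :=
        measurableSet_eq_fun measurable_fst (hum.comp measurable_snd)
      have hΓ0 : (ν.prod μ) {p : ℝ × ℝ | p.1 = u p.2} = 0 := by
        rw [Measure.prod_apply_symm hΓ]
        have hsec : ∀ l : ℝ, ((fun s => (s, l)) ⁻¹' {p : ℝ × ℝ | p.1 = u p.2}) = {u l} := by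
          intro l; ext s; simp [Set.mem_preimage, Set.mem_singleton_iff]
        have : ∀ l : ℝ, ν ((fun s => (s, l)) ⁻¹' {p : ℝ × ℝ | p.1 = u p.2}) = 0 := by
          intro l
          rw [hsec l]
          exact le_antisymm (le_trans (Measure.restrict_le_self _) (measure_singleton _).le)
            zero_le
        simp only [this, lintegral_zero]
      refine hK'.congr ?_
      · have hrect : (ν.prod μ) ((Ioo (0:ℝ) t ×ˢ Ioo (0:ℝ) M)ᶜ) = 0 := by
          rw [hν, hμ, Measure.prod_restrict, Measure.restrict_apply (measurableSet_Ioo.prod measurableSet_Ioo).compl]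
          simp
        have hsub : {p : ℝ × ℝ | ¬ ((if p.1 < u p.2 then ENNReal.ofReal (h p.1) else 0) =
            (Function.uncurry fun s l => if l < w s then ENNReal.ofReal (h s) else 0) p)} ⊆
            {p : ℝ × ℝ | p.1 = u p.2} ∪ (Ioo (0:ℝ) t ×ˢ Ioo (0:ℝ) M)ᶜ := by
          rintro ⟨s, l⟩ hp
          by_cases hmem : (s, l) ∈ Ioo (0:ℝ) t ×ˢ Ioo (0:ℝ) M
          · left
            simp only [Function.uncurry, mem_setOf_eq] at hp
            by_contra hne
            rcases lt_or_gt_of_ne hne with hlt | hgt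
            · exact hp (by rw [if_pos hlt, if_pos (hsec1 l s hmem.1 hlt)])
            · refine hp ?_
              rw [if_neg (not_lt.2 hgt.le),
                if_neg (fun hws => absurd (hsec2 l s hmem.1 hws) (not_le.2 hgt))]
          · right; exact hmem
        have : (ν.prod μ) {p : ℝ × ℝ | ¬ ((if p.1 < u p.2 then ENNReal.ofReal (h p.1) else 0) =
            (Function.uncurry fun s l => if l < w s then ENNReal.ofReal (h s) else 0) p)} = 0 :=
          measure_mono_null hsub (measure_union_null hΓ0 hrect)
        exact ae_iff.2 this
    rw [lintegral_lintegral_swap hmeas]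
    exact lintegral_congr fun l => hinner h l
  calc ∫⁻ s in Ioo (0:ℝ) t, ENNReal.ofReal (w s * f s)
      = ∫⁻ l in Ioo (0:ℝ) M, ∫⁻ s in Ioo (0:ℝ) (u l), ENNReal.ofReal (f s) :=
        hswap f hfm (by intro s hs; exact hf0 s hs)
    _ ≤ ∫⁻ l in Ioo (0:ℝ) M, ∫⁻ s in Ioo (0:ℝ) (u l), ENNReal.ofReal (g s) := by
        refine lintegral_mono fun l => ?_
        rcases eq_or_lt_of_le (hu0 l) with heq | hpos
        · rw [← heq]; simp
        · exact hle (u l) hpos (hut l)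
    _ = ∫⁻ s in Ioo (0:ℝ) t, ENNReal.ofReal (w s * g s) :=
        (hswap g hgm (by intro s hs; exact hg0 s hs)).symm


lemma convexOn_affine (b m a : ℝ) (hm : 0 ≤ m) :
    ConvexOn ℝ (Ici 0) (fun x => b + m * (x - a)) := by
  refine ⟨convex_Ici 0, fun x _ y _ p q hp hq hpq => ?_⟩
  have : b + m * ((p • x + q • y) - a) = p • (b + m * (x - a)) + q • (b + m * (y - a)) := by
    simp only [smul_eq_mul]
    linear_combination (m * a - b) * hpq
  exact le_of_eq this

lemma sup'_convexOn {ι : Type*} (s : Finset ι) (hs : s.Nonempty) (F : ι → ℝ → ℝ)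
    (hF : ∀ i ∈ s, ConvexOn ℝ (Ici 0) (F i)) :
    ConvexOn ℝ (Ici 0) (fun x => s.sup' hs (fun i => F i x)) := by
  induction hs using Finset.Nonempty.cons_induction with
  | singleton i => simpa using hF i (by simp)
  | cons i s hi hs ih =>
    simp only [Finset.sup'_cons hs]
    have h1 : ConvexOn ℝ (Ici 0) (F i) := hF i (Finset.mem_cons_self i s)
    have h2 := ih (fun j hj => hF j (Finset.mem_cons_of_mem hj))
    exact h1.sup h2

lemma sup'_continuous {ι : Type*} (s : Finset ι) (hs : s.Nonempty) (F : ι → ℝ → ℝ)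
    (hF : ∀ i ∈ s, Continuous (F i)) :
    Continuous (fun x => s.sup' hs (fun i => F i x)) := by
  induction hs using Finset.Nonempty.cons_induction with
  | singleton i => simpa using hF i (by simp)
  | cons i s hi hs ih =>
    simp only [Finset.sup'_cons hs]
    exact (hF i (Finset.mem_cons_self i s)).max (ih fun j hj => hF j (Finset.mem_cons_of_mem hj))

theorem stmt4 (f g : ℝ → ℝ)
    (hf0 : ∀ x ∈ Ioi (0:ℝ), 0 ≤ f x) (hg0 : ∀ x ∈ Ioi (0:ℝ), 0 ≤ g x)
    (hfa : AntitoneOn f (Ioi 0)) (hga : AntitoneOn g (Ioi 0))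
    (hfi : IntegrableOn f (Ioi 0) volume) (hgi : IntegrableOn g (Ioi 0) volume)
    (hmaj : ∀ t : ℝ, 0 < t →
      ∫ s in Ioo (0:ℝ) t, f s ≤ ∫ s in Ioo (0:ℝ) t, g s)
    (φ : ℝ → ℝ) (hφm : MonotoneOn φ (Ici 0)) (hφc : ContinuousOn φ (Ici 0))
    (hφconv : ConvexOn ℝ (Ici 0) φ) :
    ∀ t : ℝ, 0 < t →
      ∫⁻ s in Ioo (0:ℝ) t, ENNReal.ofReal (φ (f s)) ≤
        ∫⁻ s in Ioo (0:ℝ) t, ENNReal.ofReal (φ (g s)) := by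
  intro t ht
  have hsub : Ioo (0:ℝ) t ⊆ Ioi 0 := Ioo_subset_Ioi_self
  have hfi' : IntegrableOn f (Ioo 0 t) volume := hfi.mono_set hsub
  have hgi' : IntegrableOn g (Ioo 0 t) volume := hgi.mono_set hsub
  have hfm : AEMeasurable f (volume.restrict (Ioo 0 t)) := hfi'.aemeasurable
  have hgm : AEMeasurable g (volume.restrict (Ioo 0 t)) := hgi'.aemeasurable
  set Φ : ℝ → ℝ := fun x => max (φ x) 0 with hΦdef
  have hΦconv : ConvexOn ℝ (Ici 0) Φ := hφconv.sup (convexOn_const 0 (convex_Ici 0))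
  have hΦm : MonotoneOn Φ (Ici 0) := fun x hx y hy hxy => max_le_max (hφm hx hy hxy) le_rfl
  have hΦc : ContinuousOn Φ (Ici 0) := ContinuousOn.sup hφc continuousOn_const
  have hΦ0 : ∀ x, 0 ≤ Φ x := fun x => le_max_right _ _
  have hofReal : ∀ x : ℝ, ENNReal.ofReal (φ x) = ENNReal.ofReal (Φ x) := by
    intro x
    rcases le_total (φ x) 0 with h | h
    · rw [ENNReal.ofReal_of_nonpos h]
      simp [hΦdef, max_eq_right h]
    · simp [hΦdef, max_eq_left h]
  set c : ℝ → ℝ := subc Φ with hcdef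
  have hc0 : ∀ x, 0 ≤ c x := subc_nonneg hΦconv hΦm
  have hcm : Monotone c := subc_mono hΦconv hΦm
  have hne : ∀ n : ℕ, (Finset.range (n * 2^n + 1)).Nonempty :=
    fun n => Finset.nonempty_range_iff.2 (Nat.succ_ne_zero _)
  set χ : ℕ → ℝ → ℝ := fun n x => max 0 ((Finset.range (n * 2^n + 1)).sup' (hne n)
      (fun k => Φ ((k:ℝ)/2^n) + c ((k:ℝ)/2^n) * (x - (k:ℝ)/2^n))) with hχdef
  have hgrid0 : ∀ (n k : ℕ), (0:ℝ) ≤ (k:ℝ)/2^n := fun n k => by positivity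
  have hgridn : ∀ n : ℕ, ∀ k ∈ Finset.range (n * 2^n + 1), (k:ℝ)/2^n ≤ (n:ℝ) := by
    intro n k hk
    rw [Finset.mem_range, Nat.lt_succ_iff] at hk
    rw [div_le_iff₀ (by positivity)]
    have : (k:ℝ) ≤ ((n * 2^n : ℕ) : ℝ) := by exact_mod_cast hk
    push_cast at this
    linarith
  have hχ0 : ∀ n x, 0 ≤ χ n x := fun n x => le_max_left _ _
  have hχleΦ : ∀ n x, 0 ≤ x → χ n x ≤ Φ x := by
    intro n x hx
    refine max_le (hΦ0 x) (Finset.sup'_le _ _ fun k _ => ?_)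
    exact subc_support hΦconv hΦm (hgrid0 n k) hx
  have hχmono : ∀ n, Monotone (χ n) := by
    intro n x y hxy
    refine max_le_max le_rfl (Finset.sup'_le _ _ fun k hk => ?_)
    refine le_trans ?_ (Finset.le_sup' _ hk)
    have := mul_le_mul_of_nonneg_left (by linarith : x - (k:ℝ)/2^n ≤ y - (k:ℝ)/2^n)
      (hc0 ((k:ℝ)/2^n))
    linarith
  have hχconv : ∀ n, ConvexOn ℝ (Ici 0) (χ n) := fun n =>
    (convexOn_const 0 (convex_Ici 0)).sup
      (sup'_convexOn _ _ _ fun k _ => convexOn_affine _ _ _ (hc0 _))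
  have hχm' : ∀ n, MonotoneOn (χ n) (Ici 0) := fun n => (hχmono n).monotoneOn _
  have hχcont : ∀ n, Continuous (χ n) := fun n =>
    continuous_const.max (sup'_continuous _ _ _ fun k _ =>
      continuous_const.add (continuous_const.mul (continuous_id.sub continuous_const)))
  have hshift : ∀ (n : ℕ) (x : ℝ), χ n (x + 1) ≤ χ n x + c (n:ℝ) := by
    intro n x
    refine max_le (add_nonneg (hχ0 n x) (hc0 _)) (Finset.sup'_le _ _ fun k hk => ?_)
    have h1 : Φ ((k:ℝ)/2^n) + c ((k:ℝ)/2^n) * (x - (k:ℝ)/2^n) ≤ χ n x :=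
      le_trans (Finset.le_sup'
        (f := fun k : ℕ => Φ ((k:ℝ)/2^n) + c ((k:ℝ)/2^n) * (x - (k:ℝ)/2^n)) hk)
        (le_max_right _ _)
    have h2 : c ((k:ℝ)/2^n) ≤ c (n:ℝ) := hcm (hgridn n k hk)
    have : Φ ((k:ℝ)/2^n) + c ((k:ℝ)/2^n) * (x + 1 - (k:ℝ)/2^n) =
        (Φ ((k:ℝ)/2^n) + c ((k:ℝ)/2^n) * (x - (k:ℝ)/2^n)) + c ((k:ℝ)/2^n) := by ring
    rw [this]
    exact add_le_add h1 h2
  have hχsub_le : ∀ (n : ℕ) (x : ℝ), 0 ≤ x → subc (χ n) x ≤ c (n:ℝ) := by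
    intro n x hx
    rcases eq_or_lt_of_le hx with heq | hpos
    · rw [← heq, subc, if_neg (lt_irrefl 0)]
      exact hc0 _
    · have h1 := subc_le_slope (hχconv n) hpos (lt_add_one x)
      have h3 : x + 1 - x = 1 := by ring
      rw [h3, div_one] at h1
      linarith [hshift n x]
  -- pointwise convergence
  have hconv_pt : ∀ y : ℝ, 0 ≤ y → Tendsto (fun n => χ n y) atTop (𝓝 (Φ y)) := by
    intro y hy
    set a : ℕ → ℝ := fun n => ((⌊y * 2^n⌋₊ : ℕ) : ℝ)/2^n with hadef
    have ha0 : ∀ n, 0 ≤ a n := fun n => by positivity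
    have haley : ∀ n, a n ≤ y := by
      intro n
      rw [hadef]
      rw [div_le_iff₀ (by positivity)]
      exact Nat.floor_le (by positivity)
    have hylt : ∀ n, y - 1/2^n < a n := by
      intro n
      have h2 : (0:ℝ) < 2^n := by positivity
      rw [hadef, lt_div_iff₀ h2, sub_mul, one_div, inv_mul_cancel₀ (ne_of_gt h2)]
      linarith [Nat.lt_floor_add_one (y * 2^n)]
    have hatd : Tendsto a atTop (𝓝 y) := by
      have hpow : Tendsto (fun n : ℕ => (1:ℝ)/2^n) atTop (𝓝 0) := by
        have := tendsto_pow_atTop_nhds_zero_of_lt_one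
          (by norm_num : (0:ℝ) ≤ 1/2) (by norm_num : (1:ℝ)/2 < 1)
        simpa [div_pow] using this
      have hlow : Tendsto (fun n : ℕ => y - 1/2^n) atTop (𝓝 y) := by
        simpa using tendsto_const_nhds.sub hpow
      exact tendsto_of_tendsto_of_tendsto_of_le_of_le hlow tendsto_const_nhds
        (fun n => (hylt n).le) haley
    have hΦa : Tendsto (fun n => Φ (a n)) atTop (𝓝 (Φ y)) := by
      have hcw : ContinuousWithinAt Φ (Ici 0) y := hΦc y hy
      exact hcw.tendsto.comp (tendsto_nhdsWithin_iff.2 ⟨hatd, Eventually.of_forall ha0⟩)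
    have hmem : ∀ᶠ n in atTop, ⌊y * 2^n⌋₊ ∈ Finset.range (n * 2^n + 1) := by
      filter_upwards [eventually_ge_atTop ⌈y⌉₊] with n hn
      rw [Finset.mem_range, Nat.lt_succ_iff]
      have h1 : y ≤ (n:ℝ) := le_trans (Nat.le_ceil y) (by exact_mod_cast hn)
      have h2 : (0:ℝ) < 2^n := by positivity
      calc ⌊y * 2^n⌋₊ ≤ ⌊(n:ℝ) * 2^n⌋₊ := Nat.floor_mono (by nlinarith)
        _ = n * 2^n := by
            rw [show ((n:ℝ) * 2^n) = ((n * 2^n : ℕ) : ℝ) by push_cast; ring, Nat.floor_natCast]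
    have hlb : ∀ᶠ n in atTop, Φ (a n) ≤ χ n y := by
      filter_upwards [hmem] with n hk
      have h1 : Φ (a n) + c (a n) * (y - a n) ≤ (Finset.range (n * 2^n + 1)).sup' (hne n)
          (fun k => Φ ((k:ℝ)/2^n) + c ((k:ℝ)/2^n) * (y - (k:ℝ)/2^n)) :=
        Finset.le_sup' (f := fun k : ℕ => Φ ((k:ℝ)/2^n) + c ((k:ℝ)/2^n) * (y - (k:ℝ)/2^n)) hk
      have h2 : 0 ≤ c (a n) * (y - a n) := mul_nonneg (hc0 _) (by linarith [haley n])
      exact le_trans (by linarith) (le_max_right _ _)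
    exact tendsto_of_tendsto_of_tendsto_of_le_of_le' hΦa tendsto_const_nhds hlb
      (Eventually.of_forall fun n => hχleΦ n y hy)
  -- lintegral form of the majorization hypothesis
  have hle_lint : ∀ u : ℝ, 0 < u → u ≤ t →
      ∫⁻ s in Ioo (0:ℝ) u, ENNReal.ofReal (f s) ≤ ∫⁻ s in Ioo (0:ℝ) u, ENNReal.ofReal (g s) := by
    intro u hu _
    have hfu : IntegrableOn f (Ioo 0 u) volume := hfi.mono_set Ioo_subset_Ioi_self
    have hgu : IntegrableOn g (Ioo 0 u) volume := hgi.mono_set Ioo_subset_Ioi_self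
    rw [← ofReal_integral_eq_lintegral_ofReal hfu
        (((ae_restrict_mem measurableSet_Ioo)).mono fun s hs => hf0 s hs.1),
      ← ofReal_integral_eq_lintegral_ofReal hgu
        (((ae_restrict_mem measurableSet_Ioo)).mono fun s hs => hg0 s hs.1)]
    exact ENNReal.ofReal_le_ofReal (hmaj u hu)
  -- integrability of the approximants
  have hψlin : ∀ (n : ℕ) (x : ℝ), 0 ≤ x → χ n x ≤ χ n 0 + c (n:ℝ) * x := by
    intro n x hx
    have h1 := subc_support (hχconv n) (hχm' n) hx (le_refl (0:ℝ))
    have h2 : subc (χ n) x * x ≤ c (n:ℝ) * x :=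
      mul_le_mul_of_nonneg_right (hχsub_le n x hx) hx
    nlinarith
  have hint_f : ∀ n, Integrable (fun s => χ n (f s)) (volume.restrict (Ioo 0 t)) := by
    intro n
    have hdom : Integrable (fun s => χ n 0 + c (n:ℝ) * f s) (volume.restrict (Ioo 0 t)) :=
      ((integrableOn_const (by rw [Real.volume_Ioo]; exact ENNReal.ofReal_ne_top)).add
        (hfi'.const_mul _))
    refine hdom.mono ((hχcont n).comp_aestronglyMeasurable hfi'.aestronglyMeasurable)
      (((ae_restrict_mem measurableSet_Ioo)).mono fun s hs => ?_)
    have h1 : χ n (f s) ≤ χ n 0 + c (n:ℝ) * f s := hψlin n _ (hf0 s hs.1)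
    rw [Real.norm_eq_abs, Real.norm_eq_abs, abs_of_nonneg (hχ0 n _),
      abs_of_nonneg (le_trans (hχ0 n _) h1)]
    exact h1
  have hint_g : ∀ n, Integrable (fun s => χ n (g s)) (volume.restrict (Ioo 0 t)) := by
    intro n
    have hdom : Integrable (fun s => χ n 0 + c (n:ℝ) * g s) (volume.restrict (Ioo 0 t)) :=
      ((integrableOn_const (by rw [Real.volume_Ioo]; exact ENNReal.ofReal_ne_top)).add
        (hgi'.const_mul _))
    refine hdom.mono ((hχcont n).comp_aestronglyMeasurable hgi'.aestronglyMeasurable)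
      (((ae_restrict_mem measurableSet_Ioo)).mono fun s hs => ?_)
    have h1 : χ n (g s) ≤ χ n 0 + c (n:ℝ) * g s := hψlin n _ (hg0 s hs.1)
    rw [Real.norm_eq_abs, Real.norm_eq_abs, abs_of_nonneg (hχ0 n _),
      abs_of_nonneg (le_trans (hχ0 n _) h1)]
    exact h1
  -- the per-approximant real inequality
  have hreal : ∀ n, ∫ s in Ioo (0:ℝ) t, χ n (f s) ≤ ∫ s in Ioo (0:ℝ) t, χ n (g s) := by
    intro n
    set c' : ℝ → ℝ := subc (χ n) with hc'def
    have hc'0 : ∀ x, 0 ≤ c' x := subc_nonneg (hχconv n) (hχm' n)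
    have hc'le : ∀ x, 0 ≤ x → c' x ≤ c (n:ℝ) := hχsub_le n
    have hc'm : Monotone c' := subc_mono (hχconv n) (hχm' n)
    have hwm : AEMeasurable (fun s => c' (f s)) (volume.restrict (Ioo 0 t)) :=
      hc'm.measurable.comp_aemeasurable hfm
    have hint_wf : Integrable (fun s => c' (f s) * f s) (volume.restrict (Ioo 0 t)) := by
      refine (hfi'.const_mul (c (n:ℝ))).mono (hwm.mul hfm).aestronglyMeasurable
        (((ae_restrict_mem measurableSet_Ioo)).mono fun s hs => ?_)
      have h0f := hf0 s hs.1
      rw [Real.norm_eq_abs, Real.norm_eq_abs, abs_of_nonneg (mul_nonneg (hc'0 _) h0f),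
        abs_of_nonneg (mul_nonneg (hc0 _) h0f)]
      exact mul_le_mul_of_nonneg_right (hc'le _ h0f) h0f
    have hint_wg : Integrable (fun s => c' (f s) * g s) (volume.restrict (Ioo 0 t)) := by
      refine (hgi'.const_mul (c (n:ℝ))).mono (hwm.mul hgm).aestronglyMeasurable
        (((ae_restrict_mem measurableSet_Ioo)).mono fun s hs => ?_)
      have h0f := hf0 s hs.1
      have h0g := hg0 s hs.1
      rw [Real.norm_eq_abs, Real.norm_eq_abs, abs_of_nonneg (mul_nonneg (hc'0 _) h0g),
        abs_of_nonneg (mul_nonneg (hc0 _) h0g)]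
      exact mul_le_mul_of_nonneg_right (hc'le _ h0f) h0g
    have hM : (0:ℝ) < c (n:ℝ) + 1 := by linarith [hc0 (n:ℝ)]
    have hkey := wlemma f g (fun s => c' (f s)) t (c (n:ℝ) + 1) ht hM hf0 hg0
      (fun s _ => hc'0 _)
      (fun s hs => le_trans (hc'le _ (hf0 s hs)) (by linarith))
      (fun x hx y hy hxy => hc'm (hfa hx hy hxy))
      hfm hgm hle_lint
    have hnn_wf : 0 ≤ᵐ[volume.restrict (Ioo (0:ℝ) t)] fun s => c' (f s) * f s :=
      ((ae_restrict_mem measurableSet_Ioo)).mono fun s hs =>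
        mul_nonneg (hc'0 _) (hf0 s hs.1)
    have hnn_wg : 0 ≤ᵐ[volume.restrict (Ioo (0:ℝ) t)] fun s => c' (f s) * g s :=
      ((ae_restrict_mem measurableSet_Ioo)).mono fun s hs =>
        mul_nonneg (hc'0 _) (hg0 s hs.1)
    have hwf_eq : ∫ s in Ioo (0:ℝ) t, c' (f s) * f s =
        (∫⁻ s in Ioo (0:ℝ) t, ENNReal.ofReal (c' (f s) * f s)).toReal :=
      integral_eq_lintegral_of_nonneg_ae hnn_wf (hwm.mul hfm).aestronglyMeasurable
    have hwg_eq : ∫ s in Ioo (0:ℝ) t, c' (f s) * g s =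
        (∫⁻ s in Ioo (0:ℝ) t, ENNReal.ofReal (c' (f s) * g s)).toReal :=
      integral_eq_lintegral_of_nonneg_ae hnn_wg (hwm.mul hgm).aestronglyMeasurable
    have hfin : (∫⁻ s in Ioo (0:ℝ) t, ENNReal.ofReal (c' (f s) * g s)) ≠ ⊤ := by
      have hb : (∫⁻ s in Ioo (0:ℝ) t, ENNReal.ofReal (c' (f s) * g s)) ≤
          ∫⁻ s in Ioo (0:ℝ) t, ENNReal.ofReal ((c (n:ℝ) + 1) * g s) := by
        refine lintegral_mono_ae (((ae_restrict_mem measurableSet_Ioo)).mono fun s hs => ?_)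
        exact ENNReal.ofReal_le_ofReal (mul_le_mul_of_nonneg_right
          (le_trans (hc'le _ (hf0 s hs.1)) (by linarith)) (hg0 s hs.1))
      have heq : (∫⁻ s in Ioo (0:ℝ) t, ENNReal.ofReal ((c (n:ℝ) + 1) * g s)) =
          ENNReal.ofReal (∫ s in Ioo (0:ℝ) t, (c (n:ℝ) + 1) * g s) :=
        (ofReal_integral_eq_lintegral_ofReal (hgi'.const_mul _)
          (((ae_restrict_mem measurableSet_Ioo)).mono fun s hs =>
            mul_nonneg hM.le (hg0 s hs.1))).symm
      exact ne_top_of_le_ne_top (by rw [heq]; exact ENNReal.ofReal_ne_top) hb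
    have hkeyr : ∫ s in Ioo (0:ℝ) t, c' (f s) * f s ≤ ∫ s in Ioo (0:ℝ) t, c' (f s) * g s := by
      rw [hwf_eq, hwg_eq]
      exact ENNReal.toReal_mono hfin hkey
    have hsupp : ∀ s ∈ Ioo (0:ℝ) t,
        χ n (f s) - χ n (g s) ≤ c' (f s) * f s - c' (f s) * g s := by
      intro s hs
      have := subc_support (hχconv n) (hχm' n) (hf0 s hs.1) (hg0 s hs.1)
      nlinarith [this]
    have hmono_int := setIntegral_mono_on ((hint_f n).sub (hint_g n))
      (hint_wf.sub hint_wg) measurableSet_Ioo hsupp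
    simp only [Pi.sub_apply] at hmono_int
    rw [integral_sub (hint_f n) (hint_g n), integral_sub hint_wf hint_wg] at hmono_int
    linarith
  -- final assembly
  calc ∫⁻ s in Ioo (0:ℝ) t, ENNReal.ofReal (φ (f s))
      = ∫⁻ s in Ioo (0:ℝ) t, ENNReal.ofReal (Φ (f s)) := lintegral_congr fun s => hofReal _
    _ = ∫⁻ s in Ioo (0:ℝ) t, liminf (fun n => ENNReal.ofReal (χ n (f s))) atTop := by
        refine lintegral_congr_ae (((ae_restrict_mem measurableSet_Ioo)).mono fun s hs => ?_)
        have htd := hconv_pt (f s) (hf0 s hs.1)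
        exact ((ENNReal.continuous_ofReal.tendsto _).comp htd).liminf_eq.symm
    _ ≤ liminf (fun n => ∫⁻ s in Ioo (0:ℝ) t, ENNReal.ofReal (χ n (f s))) atTop :=
        lintegral_liminf_le' fun n =>
          (ENNReal.measurable_ofReal.comp (hχcont n).measurable).comp_aemeasurable hfm
    _ ≤ ∫⁻ s in Ioo (0:ℝ) t, ENNReal.ofReal (Φ (g s)) := by
        have hn : ∀ n, (∫⁻ s in Ioo (0:ℝ) t, ENNReal.ofReal (χ n (f s))) ≤
            ∫⁻ s in Ioo (0:ℝ) t, ENNReal.ofReal (Φ (g s)) := by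
          intro n
          calc (∫⁻ s in Ioo (0:ℝ) t, ENNReal.ofReal (χ n (f s)))
              = ENNReal.ofReal (∫ s in Ioo (0:ℝ) t, χ n (f s)) :=
                (ofReal_integral_eq_lintegral_ofReal (hint_f n)
                  (((ae_restrict_mem measurableSet_Ioo)).mono fun s _ => hχ0 n _)).symm
            _ ≤ ENNReal.ofReal (∫ s in Ioo (0:ℝ) t, χ n (g s)) :=
                ENNReal.ofReal_le_ofReal (hreal n)
            _ = ∫⁻ s in Ioo (0:ℝ) t, ENNReal.ofReal (χ n (g s)) :=
                ofReal_integral_eq_lintegral_ofReal (hint_g n)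
                  (((ae_restrict_mem measurableSet_Ioo)).mono fun s _ => hχ0 n _)
            _ ≤ ∫⁻ s in Ioo (0:ℝ) t, ENNReal.ofReal (Φ (g s)) := by
                refine lintegral_mono_ae
                  (((ae_restrict_mem measurableSet_Ioo)).mono fun s hs => ?_)
                exact ENNReal.ofReal_le_ofReal (hχleΦ n _ (hg0 s hs.1))
        refine le_trans (liminf_le_liminf (Eventually.of_forall hn)) ?_
        rw [liminf_const]
    _ = ∫⁻ s in Ioo (0:ℝ) t, ENNReal.ofReal (φ (g s)) :=
        (lintegral_congr fun s => hofReal _).symm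
end

section
/- Let K be a bounded subset of L¹(0,1). Suppose there exists a convex function G:[0,∞)→[0,∞) with G(0)=0, G continuous at 0, G not identically zero, G(t)/t → ∞ as t → ∞, and sup{∫_0^1 G(|f(s)|) ds : f ∈ K} < ∞. Then there exists a positive function g ∈ L¹(0,1) such that |f| ≺≺ g for all f ∈ K, i.e., ∫_0^t μ(s,f) ds ≤ ∫_0^t μ(s,g) ds for all t ∈ (0,1] and all f ∈ K. -/
open MeasureTheory Set Filter Topology

private lemma vol_set_eq (f : ℝ → ℝ) (c : ℝ) :
    volume {x | x ∈ Ioo (0:ℝ) 1 ∧ c < |f x|}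
      = volume.restrict (Ioo (0:ℝ) 1) {x | c < |f x|} := by
  rw [Measure.restrict_apply' measurableSet_Ioo]
  congr 1; ext x; simp [and_comm]

private lemma S_nonempty (f : ℝ → ℝ)
    (hm : AEMeasurable f (volume.restrict (Ioo (0:ℝ) 1)))
    (hI : ∫⁻ x in Ioo (0:ℝ) 1, ENNReal.ofReal |f x| ≠ ⊤)
    {t : ℝ} (ht : 0 < t) :
    {s : ℝ | 0 ≤ s ∧ volume {x | x ∈ Ioo (0:ℝ) 1 ∧ s < |f x|} ≤ ENNReal.ofReal t}.Nonempty := by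
  set I := ∫⁻ x in Ioo (0:ℝ) 1, ENNReal.ofReal |f x| with hIdef
  set c : ℝ := max 1 ((I.toReal + 1)/t) with hc
  have hc1 : (1:ℝ) ≤ c := le_max_left _ _
  refine ⟨c, le_trans zero_le_one hc1, ?_⟩
  rw [vol_set_eq]
  have hmono : volume.restrict (Ioo (0:ℝ) 1) {x | c < |f x|}
      ≤ volume.restrict (Ioo (0:ℝ) 1) {x | ENNReal.ofReal c ≤ ENNReal.ofReal |f x|} := by
    apply measure_mono
    intro x hx
    exact ENNReal.ofReal_le_ofReal (le_of_lt hx)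
  have hmark := meas_ge_le_lintegral_div
      (μ := volume.restrict (Ioo (0:ℝ) 1)) (f := fun x => ENNReal.ofReal |f x|)
      (ENNReal.measurable_ofReal.comp_aemeasurable (measurable_abs.comp_aemeasurable hm))
      (ε := ENNReal.ofReal c) (by simp [ENNReal.ofReal_eq_zero]; linarith) ENNReal.ofReal_ne_top
  refine le_trans (le_trans hmono hmark) ?_
  rw [ENNReal.div_le_iff_le_mul (Or.inl (by simp [ENNReal.ofReal_eq_zero]; linarith))
    (Or.inl ENNReal.ofReal_ne_top)]
  rw [← ENNReal.ofReal_mul ht.le]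
  have h1 : I ≤ ENNReal.ofReal (I.toReal + 1) := by
    exact le_trans (le_of_eq (ENNReal.ofReal_toReal hI).symm)
      (ENNReal.ofReal_le_ofReal (by linarith))
  refine le_trans h1 (ENNReal.ofReal_le_ofReal ?_)
  have : (I.toReal + 1)/t ≤ c := le_max_right _ _
  calc I.toReal + 1 = t * ((I.toReal + 1)/t) := by field_simp
    _ ≤ t * c := by nlinarith

private lemma mu01_nonneg (f : ℝ → ℝ) (t : ℝ) : 0 ≤ mu01 f t :=
  Real.sInf_nonneg fun _ hx => hx.1

private lemma mu01_le (f : ℝ → ℝ) {t c : ℝ} (h0 : 0 ≤ c)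
    (h : volume {x | x ∈ Ioo (0:ℝ) 1 ∧ c < |f x|} ≤ ENNReal.ofReal t) : mu01 f t ≤ c :=
  csInf_le ⟨0, fun _ hx => hx.1⟩ ⟨h0, h⟩

private lemma dist_lt_of_lt_mu01 (f : ℝ → ℝ) {t c : ℝ} (h0 : 0 ≤ c) (h : c < mu01 f t) :
    ENNReal.ofReal t < volume {x | x ∈ Ioo (0:ℝ) 1 ∧ c < |f x|} := by
  by_contra hc
  push_neg at hc
  exact absurd (mu01_le f h0 hc) (not_le.2 h)

private lemma mu01_antitoneOn (f : ℝ → ℝ)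
    (hm : AEMeasurable f (volume.restrict (Ioo (0:ℝ) 1)))
    (hI : ∫⁻ x in Ioo (0:ℝ) 1, ENNReal.ofReal |f x| ≠ ⊤) :
    AntitoneOn (mu01 f) (Ioi (0:ℝ)) := by
  intro t ht t' _ htt'
  refine csInf_le_csInf ⟨0, fun _ hx => hx.1⟩ (S_nonempty f hm hI ht) ?_
  intro c hc
  exact ⟨hc.1, hc.2.trans (ENNReal.ofReal_le_ofReal htt')⟩

private lemma lint_mu01_le (f : ℝ → ℝ)
    (hm : AEMeasurable f (volume.restrict (Ioo (0:ℝ) 1)))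
    (hI : ∫⁻ x in Ioo (0:ℝ) 1, ENNReal.ofReal |f x| ≠ ⊤) :
    ∫⁻ s in Ioo (0:ℝ) 1, ENNReal.ofReal (mu01 f s)
      ≤ ∫⁻ x in Ioo (0:ℝ) 1, ENNReal.ofReal |f x| := by
  have hμm : AEMeasurable (mu01 f) (volume.restrict (Ioo (0:ℝ) 1)) :=
    aemeasurable_restrict_of_antitoneOn measurableSet_Ioo
      ((mu01_antitoneOn f hm hI).mono Ioo_subset_Ioi_self)
  rw [lintegral_eq_lintegral_meas_lt _ (ae_of_all _ fun s => mu01_nonneg f s) hμm,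
    lintegral_eq_lintegral_meas_lt _ (ae_of_all _ fun x => abs_nonneg (f x))
      (measurable_abs.comp_aemeasurable hm)]
  refine lintegral_mono_ae ((ae_restrict_iff' measurableSet_Ioi).2 (ae_of_all _ fun lam hlam => ?_))
  rw [Measure.restrict_apply' measurableSet_Ioo, Measure.restrict_apply' measurableSet_Ioo]
  set d := volume {x | x ∈ Ioo (0:ℝ) 1 ∧ lam < |f x|} with hd
  have hre : {x | lam < |f x|} ∩ Ioo (0:ℝ) 1 = {x | x ∈ Ioo (0:ℝ) 1 ∧ lam < |f x|} := by
    ext x; simp [and_comm]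
  rw [hre]
  by_cases hdt : d = ⊤
  · rw [← hd, hdt]; exact le_top
  · have hsub : {s | lam < mu01 f s} ∩ Ioo (0:ℝ) 1 ⊆ Ioo (0:ℝ) d.toReal := by
      rintro s ⟨hs1, hs2⟩
      have hlt := dist_lt_of_lt_mu01 f (le_of_lt hlam) hs1
      rw [← hd] at hlt
      exact ⟨hs2.1, (ENNReal.ofReal_lt_iff_lt_toReal hs2.1.le hdt).1 hlt⟩
    calc volume ({s | lam < mu01 f s} ∩ Ioo (0:ℝ) 1) ≤ volume (Ioo (0:ℝ) d.toReal) :=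
          measure_mono hsub
      _ = ENNReal.ofReal d.toReal := by rw [Real.volume_Ioo, sub_zero]
      _ = d := ENNReal.ofReal_toReal hdt

private lemma mu01_trunc (f : ℝ → ℝ) {A t : ℝ} (hA : 0 ≤ A) (ht : 0 < t)
    (hne : {s : ℝ | 0 ≤ s ∧ volume {x | x ∈ Ioo (0:ℝ) 1 ∧
        s < |max (|f x| - A) 0|} ≤ ENNReal.ofReal t}.Nonempty) :
    mu01 f t ≤ A + mu01 (fun x => max (|f x| - A) 0) t := by
  have hseteq : ∀ c : ℝ, 0 ≤ c →
      {x | x ∈ Ioo (0:ℝ) 1 ∧ (A + c) < |f x|}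
        = {x | x ∈ Ioo (0:ℝ) 1 ∧ c < |max (|f x| - A) 0|} := by
    intro c hc
    ext x
    have habs : |max (|f x| - A) 0| = max (|f x| - A) 0 := abs_of_nonneg (le_max_right _ _)
    simp only [mem_setOf_eq, habs, lt_max_iff]
    constructor
    · rintro ⟨h1, h2⟩; exact ⟨h1, Or.inl (by linarith)⟩
    · rintro ⟨h1, h2⟩
      rcases h2 with h2 | h2
      · exact ⟨h1, by linarith⟩
      · linarith
  have key : ∀ c ∈ {s : ℝ | 0 ≤ s ∧ volume {x | x ∈ Ioo (0:ℝ) 1 ∧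
      s < |max (|f x| - A) 0|} ≤ ENNReal.ofReal t}, mu01 f t - A ≤ c := by
    intro c hc
    have := mu01_le f (add_nonneg hA hc.1) (by rw [hseteq c hc.1]; exact hc.2)
    linarith
  have h2 : mu01 f t - A ≤ mu01 (fun x => max (|f x| - A) 0) t := le_csInf hne key
  linarith

private lemma orlicz_step (K : Set (ℝ → ℝ)) (G : ℝ → ℝ)
    (hGnn : ∀ t, 0 ≤ t → 0 ≤ G t)
    (hGt : Tendsto (fun t => G t / t) atTop atTop)
    (C : ℝ) (hC : ∀ f ∈ K, ∫⁻ s in Ioo (0:ℝ) 1, ENNReal.ofReal (G |f s|) ≤ ENNReal.ofReal C)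
    {ε : ℝ} (hε : 0 < ε) :
    ∃ A : ℝ, 1 ≤ A ∧ ∀ f ∈ K,
      ∫⁻ x in Ioo (0:ℝ) 1, ENNReal.ofReal (max (|f x| - A) 0) ≤ ENNReal.ofReal ε := by
  set C' : ℝ := max C 1 with hC'def
  have hC'1 : (1:ℝ) ≤ C' := le_max_right _ _
  have hC'0 : (0:ℝ) < C' := by linarith
  obtain ⟨A₀, hA₀⟩ := (hGt.eventually_ge_atTop (C'/ε)).exists_forall_of_atTop
  refine ⟨max A₀ 1, le_max_right _ _, fun f hf => ?_⟩
  set A : ℝ := max A₀ 1 with hAdef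
  have hptw : ∀ x : ℝ, max (|f x| - A) 0 ≤ (ε/C') * G (|f x|) := by
    intro x
    rcases le_or_gt (|f x|) A with hle | hlt
    · have h1 : max (|f x| - A) 0 = 0 := max_eq_right (by linarith)
      rw [h1]
      exact mul_nonneg (le_of_lt (div_pos hε hC'0)) (hGnn _ (abs_nonneg _))
    · have ht0 : (0:ℝ) < |f x| := lt_of_lt_of_le (by positivity) hlt.le
      have hA0' : A₀ ≤ |f x| := le_trans (le_max_left _ _) hlt.le
      have hdiv : C'/ε ≤ G (|f x|) / (|f x|) := hA₀ _ hA0'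
      have h2 : (C'/ε) * |f x| ≤ G (|f x|) := by
        rw [div_le_div_iff₀ (by positivity) ht0] at hdiv
        calc (C'/ε) * |f x| = C' * |f x| / ε := by ring
          _ ≤ G (|f x|) := by
            rw [div_le_iff₀ hε]; nlinarith
      have h3 : |f x| ≤ (ε/C') * G (|f x|) := by
        have := mul_le_mul_of_nonneg_left h2 (le_of_lt (div_pos hε hC'0))
        calc |f x| = (ε/C') * ((C'/ε) * |f x|) := by field_simp
          _ ≤ (ε/C') * G (|f x|) := this
      exact le_trans (max_le (by linarith [le_max_right A₀ (1:ℝ)]) ht0.le) h3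
  calc ∫⁻ x in Ioo (0:ℝ) 1, ENNReal.ofReal (max (|f x| - A) 0)
      ≤ ∫⁻ x in Ioo (0:ℝ) 1, ENNReal.ofReal ((ε/C') * G (|f x|)) :=
        lintegral_mono fun x => ENNReal.ofReal_le_ofReal (hptw x)
    _ = ∫⁻ x in Ioo (0:ℝ) 1, ENNReal.ofReal (ε/C') * ENNReal.ofReal (G (|f x|)) := by
        congr 1; ext x; rw [ENNReal.ofReal_mul (le_of_lt (div_pos hε hC'0))]
    _ = ENNReal.ofReal (ε/C') * ∫⁻ x in Ioo (0:ℝ) 1, ENNReal.ofReal (G (|f x|)) :=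
        lintegral_const_mul' _ _ ENNReal.ofReal_ne_top
    _ ≤ ENNReal.ofReal (ε/C') * ENNReal.ofReal C' := by
        refine mul_le_mul_right ?_ _
        exact le_trans (hC f hf) (ENNReal.ofReal_le_ofReal (le_max_left _ _))
    _ = ENNReal.ofReal ε := by
        rw [← ENNReal.ofReal_mul (le_of_lt (div_pos hε hC'0)), div_mul_cancel₀ _ (ne_of_gt hC'0)]

theorem stmt5 (K : Set (ℝ → ℝ))
    (hK : ∀ f ∈ K, IntegrableOn f (Ioo 0 1) volume)
    (hKb : ∃ C : ℝ, ∀ f ∈ K, ∫ x in Ioo (0:ℝ) 1, |f x| ≤ C)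
    (G : ℝ → ℝ) (hG : IsOrliczFunction G)
    (hGt : Tendsto (fun t => G t / t) atTop atTop)
    (hsup : ∃ C : ℝ, ∀ f ∈ K,
      ∫⁻ s in Ioo (0:ℝ) 1, ENNReal.ofReal (G |f s|) ≤ ENNReal.ofReal C) :
    ∃ g : ℝ → ℝ, (∀ x ∈ Ioo (0:ℝ) 1, 0 < g x) ∧ IntegrableOn g (Ioo 0 1) volume ∧
      ∀ f ∈ K, Submaj01 f g := by
  classical
  obtain ⟨C₀, hC₀⟩ := hsup
  have horl : ∀ n : ℕ, ∃ A : ℝ, 1 ≤ A ∧ ∀ f ∈ K,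
      ∫⁻ x in Ioo (0:ℝ) 1, ENNReal.ofReal (max (|f x| - A) 0) ≤ ENNReal.ofReal ((2⁻¹:ℝ)^n) :=
    fun n => orlicz_step K G hG.2.1 hGt C₀ hC₀ (by positivity)
  choose a ha1 haK using horl
  set u : ℕ → ℝ := fun n => Nat.rec (1:ℝ)
    (fun k uk => min (uk/2) ((2⁻¹:ℝ)^(k+1) / (a (k+2) + 1))) n with hudef
  have hu0 : u 0 = 1 := rfl
  have hurec : ∀ k, u (k+1) = min (u k/2) ((2⁻¹:ℝ)^(k+1) / (a (k+2) + 1)) := fun k => rfl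
  have hupos : ∀ n, 0 < u n := by
    intro n; induction n with
    | zero => norm_num [hu0]
    | succ k ih =>
      rw [hurec]
      refine lt_min (by linarith) ?_
      have := ha1 (k+2); positivity
  have huhalf : ∀ k, u (k+1) ≤ u k / 2 := fun k => by rw [hurec]; exact min_le_left _ _
  have hua : ∀ k, u (k+1) ≤ (2⁻¹:ℝ)^(k+1) / (a (k+2) + 1) := fun k => by
    rw [hurec]; exact min_le_right _ _
  have hule : ∀ n, u n ≤ (2⁻¹:ℝ)^n := by
    intro n; induction n with
    | zero => norm_num [hu0]
    | succ k ih =>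
      calc u (k+1) ≤ u k / 2 := huhalf k
        _ ≤ (2⁻¹:ℝ)^k / 2 := by linarith
        _ = (2⁻¹:ℝ)^(k+1) := by ring
  set b : ℕ → ℝ := fun n => a (n+1) + (2⁻¹:ℝ)^n / u n with hbdef
  have hbpos : ∀ n, 0 < b n := fun n => by
    have h1 := hupos n; have h2 := ha1 (n+1)
    simp only [hbdef]; positivity
  have hbge : ∀ n, a (n+1) ≤ b n := fun n => by
    have h1 := hupos n
    have h2 : (0:ℝ) ≤ (2⁻¹:ℝ)^n / u n := by positivity
    simp only [hbdef]; linarith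
  have hbu : ∀ n, b n * u n = a (n+1) * u n + (2⁻¹:ℝ)^n := fun n => by
    simp only [hbdef]
    rw [add_mul, div_mul_cancel₀ _ (hupos n).ne']
  set gE : ℝ → ENNReal := fun x =>
    1 + ∑' n, (Ioo (0:ℝ) (u n)).indicator (fun _ => ENNReal.ofReal (b n)) x with hgEdef
  have hgE_meas : Measurable gE :=
    measurable_const.add (Measurable.ennreal_tsum fun n =>
      measurable_const.indicator measurableSet_Ioo)
  have hgE_ne_top : ∀ x, gE x ≠ ⊤ := by
    intro x
    rcases le_or_gt x 0 with hx | hx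
    · have hz : ∀ n, (Ioo (0:ℝ) (u n)).indicator (fun _ => ENNReal.ofReal (b n)) x = 0 := by
        intro n
        exact Set.indicator_of_notMem (fun hmem => absurd hmem.1 (not_lt.2 hx)) _
      simp [hgEdef, hz]
    · obtain ⟨N, hN⟩ := exists_pow_lt_of_lt_one hx (by norm_num : (2⁻¹:ℝ) < 1)
      have hzero : ∀ n ∉ Finset.range N,
          (Ioo (0:ℝ) (u n)).indicator (fun _ => ENNReal.ofReal (b n)) x = 0 := by
        intro n hn
        simp only [Finset.mem_range, not_lt] at hn
        refine Set.indicator_of_notMem (fun hmem => ?_) _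
        have : u n ≤ x :=
          le_trans (le_trans (hule n)
            (pow_le_pow_of_le_one (by norm_num) (by norm_num) hn)) hN.le
        exact absurd hmem.2 (not_lt.2 this)
      simp only [hgEdef]
      rw [tsum_eq_sum hzero]
      refine ENNReal.add_ne_top.2 ⟨ENNReal.one_ne_top, ?_⟩
      refine (ENNReal.sum_lt_top.2 fun n _ => ?_).ne
      rw [Set.indicator_apply]
      split_ifs
      · exact ENNReal.ofReal_lt_top
      · exact ENNReal.zero_lt_top
  have hgE_anti : ∀ x y : ℝ, 0 < x → x ≤ y → gE y ≤ gE x := by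
    intro x y hx hxy
    simp only [hgEdef]
    refine add_le_add_right (ENNReal.tsum_le_tsum fun n => ?_) 1
    rcases Classical.em (y ∈ Ioo (0:ℝ) (u n)) with hy | hy
    · rw [Set.indicator_of_mem hy, Set.indicator_of_mem (Set.mem_Ioo.mpr ⟨hx, lt_of_le_of_lt hxy (Set.mem_Ioo.mp hy).2⟩)]
    · rw [Set.indicator_of_notMem hy]; exact zero_le
  set g : ℝ → ℝ := fun x => (gE x).toReal with hgdef
  have hg_ofReal : ∀ x, ENNReal.ofReal (g x) = gE x := fun x =>
    ENNReal.ofReal_toReal (hgE_ne_top x)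
  have hg_nonneg : ∀ x, 0 ≤ g x := fun x => ENNReal.toReal_nonneg
  have hg_meas : Measurable g := hgE_meas.ennreal_toReal
  have hg_ge1 : ∀ x, 1 ≤ g x := by
    intro x
    have h1 : (1:ENNReal) ≤ gE x := by simp only [hgEdef]; exact le_self_add
    have := ENNReal.toReal_mono (hgE_ne_top x) h1
    simpa using this
  have hg_anti : ∀ x y : ℝ, 0 < x → x ≤ y → g y ≤ g x := fun x y hx hxy =>
    ENNReal.toReal_mono (hgE_ne_top x) (hgE_anti x y hx hxy)
  have hIgT : ∀ T : ℝ, ∫⁻ x in Ioo (0:ℝ) T, gE x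
      = ENNReal.ofReal T + ∑' n, ENNReal.ofReal (b n) * ENNReal.ofReal (min (u n) T) := by
    intro T
    simp only [hgEdef]
    rw [lintegral_add_left measurable_const]
    congr 1
    · rw [lintegral_one, Measure.restrict_apply_univ, Real.volume_Ioo, sub_zero]
    · rw [lintegral_tsum fun n => (measurable_const.indicator measurableSet_Ioo).aemeasurable]
      congr 1
      ext n
      rw [lintegral_indicator measurableSet_Ioo, setLIntegral_const,
        Measure.restrict_apply measurableSet_Ioo, Ioo_inter_Ioo]
      simp [Real.volume_Ioo]
  have hbuM : ∀ n, b n * u n ≤ (a 1 + 2) * (2⁻¹:ℝ)^n := by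
    intro n
    rw [hbu n]
    have hp : (0:ℝ) < (2⁻¹:ℝ)^n := by positivity
    cases n with
    | zero =>
      simp only [hu0, pow_zero, mul_one]
      linarith [ha1 1]
    | succ k =>
      have h1 : u (k+1) ≤ (2⁻¹:ℝ)^(k+1) / (a (k+2) + 1) := hua k
      have hA := ha1 (k+2)
      have hupos' := hupos (k+1)
      have h2 : a (k+2) * u (k+1) ≤ (2⁻¹:ℝ)^(k+1) := by
        calc a (k+2) * u (k+1) ≤ a (k+2) * ((2⁻¹:ℝ)^(k+1) / (a (k+2) + 1)) := by nlinarith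
          _ = (2⁻¹:ℝ)^(k+1) * (a (k+2) / (a (k+2) + 1)) := by ring
          _ ≤ (2⁻¹:ℝ)^(k+1) * 1 := by
            refine mul_le_mul_of_nonneg_left ?_ (by positivity)
            rw [div_le_one (by linarith)]
            linarith
          _ = (2⁻¹:ℝ)^(k+1) := mul_one _
      have hA1 := ha1 1
      nlinarith
  have hfin : ∑' n, ENNReal.ofReal (b n) * ENNReal.ofReal (min (u n) 1) ≠ ⊤ := by
    have hb : ∀ n, ENNReal.ofReal (b n) * ENNReal.ofReal (min (u n) 1)
        ≤ ENNReal.ofReal (a 1 + 2) * (ENNReal.ofReal 2⁻¹)^n := by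
      intro n
      rw [← ENNReal.ofReal_mul (hbpos n).le]
      calc ENNReal.ofReal (b n * min (u n) 1) ≤ ENNReal.ofReal (b n * u n) :=
            ENNReal.ofReal_le_ofReal
              (mul_le_mul_of_nonneg_left (min_le_left _ _) (hbpos n).le)
        _ ≤ ENNReal.ofReal ((a 1 + 2) * (2⁻¹:ℝ)^n) := ENNReal.ofReal_le_ofReal (hbuM n)
        _ = ENNReal.ofReal (a 1 + 2) * (ENNReal.ofReal 2⁻¹)^n := by
            rw [ENNReal.ofReal_mul (by linarith [ha1 1]), ENNReal.ofReal_pow (by norm_num)]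
    refine ne_top_of_le_ne_top ?_ (ENNReal.tsum_le_tsum hb)
    rw [ENNReal.tsum_mul_left, ENNReal.tsum_geometric]
    refine ENNReal.mul_ne_top ENNReal.ofReal_ne_top (ENNReal.inv_ne_top.2 ?_)
    rw [Ne, tsub_eq_zero_iff_le, not_le]
    exact ENNReal.ofReal_lt_one.2 (by norm_num)
  have hIg1 : ∫⁻ x in Ioo (0:ℝ) 1, gE x ≠ ⊤ := by
    rw [hIgT 1]
    exact (ENNReal.add_lt_top.2 ⟨ENNReal.ofReal_lt_top, hfin.lt_top⟩).ne
  have hIg_ne : ∫⁻ x in Ioo (0:ℝ) 1, ENNReal.ofReal |g x| ≠ ⊤ := by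
    have heq : ∀ x, ENNReal.ofReal |g x| = gE x := fun x => by
      rw [abs_of_nonneg (hg_nonneg x), hg_ofReal]
    rw [lintegral_congr heq]
    exact hIg1
  have hint_g : IntegrableOn g (Ioo (0:ℝ) 1) volume := by
    refine ⟨hg_meas.aestronglyMeasurable, ?_⟩
    rw [hasFiniteIntegral_iff_ofReal (ae_of_all _ hg_nonneg)]
    have heq : ∀ x, ENNReal.ofReal (g x) = gE x := hg_ofReal
    rw [lintegral_congr heq]
    exact hIg1.lt_top
  have hmu_g : ∀ s : ℝ, s ∈ Ioo (0:ℝ) 1 → gE s ≤ ENNReal.ofReal (mu01 g s) := by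
    intro s hs
    obtain ⟨hs0, hs1⟩ := hs
    obtain ⟨N, hN⟩ := exists_pow_lt_of_lt_one hs0 (by norm_num : (2⁻¹:ℝ) < 1)
    have hkN : ∀ k, s < u k → k < N := by
      intro k hk
      by_contra hle
      push_neg at hle
      have : u k ≤ s := le_trans (le_trans (hule k)
        (pow_le_pow_of_le_one (by norm_num) (by norm_num) hle)) hN.le
      linarith
    set v : ℕ → ℝ := fun k => if s < u k then (s + u k)/2 else 1 with hvdef
    have hrange : (Finset.range (N+1)).Nonempty := Finset.nonempty_range_add_one
    set t : ℝ := min ((s+1)/2) ((Finset.range (N+1)).inf' hrange v) with htdef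
    have hst : s < t := by
      refine lt_min (by linarith) ?_
      rw [Finset.lt_inf'_iff]
      intro k _
      simp only [hvdef]
      split_ifs with hsk
      · linarith
      · linarith
    have ht1 : t < 1 := lt_of_le_of_lt (min_le_left _ _) (by linarith)
    have ht0 : 0 < t := lt_trans hs0 hst
    have hiff : ∀ k, s < u k ↔ t < u k := by
      intro k
      constructor
      · intro hk
        have hkmem : k ∈ Finset.range (N+1) := Finset.mem_range.2 (Nat.lt_succ_of_lt (hkN k hk))
        calc t ≤ (Finset.range (N+1)).inf' hrange v := min_le_right _ _
          _ ≤ v k := Finset.inf'_le _ hkmem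
          _ = (s + u k)/2 := by simp only [hvdef]; rw [if_pos hk]
          _ < u k := by linarith
      · intro hk; linarith
    have hgEeq : gE t = gE s := by
      simp only [hgEdef]
      congr 1
      apply tsum_congr
      intro k
      rcases Classical.em (s < u k) with hsk | hsk
      · rw [Set.indicator_of_mem (Set.mem_Ioo.mpr ⟨ht0, (hiff k).1 hsk⟩), Set.indicator_of_mem (Set.mem_Ioo.mpr ⟨hs0, hsk⟩)]
      · rw [Set.indicator_of_notMem (fun hmem => hsk ((hiff k).2 hmem.2)),
          Set.indicator_of_notMem (fun hmem => hsk hmem.2)]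
    have hle : g t ≤ mu01 g s := by
      refine le_csInf (S_nonempty g hg_meas.aemeasurable hIg_ne hs0) ?_
      rintro c ⟨hc0, hc2⟩
      by_contra hlt
      push_neg at hlt
      have hsub : Ioo (0:ℝ) t ⊆ {x | x ∈ Ioo (0:ℝ) 1 ∧ c < |g x|} := by
        rintro x ⟨hx0, hxt⟩
        refine ⟨⟨hx0, lt_trans hxt ht1⟩, ?_⟩
        rw [abs_of_nonneg (hg_nonneg x)]
        exact lt_of_lt_of_le hlt (hg_anti x t hx0 hxt.le)
      have hvol := le_trans (measure_mono hsub) hc2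
      rw [Real.volume_Ioo, sub_zero] at hvol
      have := (ENNReal.ofReal_le_ofReal_iff hs0.le).1 hvol
      linarith
    calc gE s = gE t := hgEeq.symm
      _ = ENNReal.ofReal (g t) := (hg_ofReal t).symm
      _ ≤ ENNReal.ofReal (mu01 g s) := ENNReal.ofReal_le_ofReal hle
  refine ⟨g, fun x _ => lt_of_lt_of_le one_pos (hg_ge1 x), hint_g, ?_⟩
  intro f hf T hT
  obtain ⟨hT0, hT1⟩ := hT
  have hex : ∃ m, u m < T := by
    obtain ⟨N, hN⟩ := exists_pow_lt_of_lt_one hT0 (by norm_num : (2⁻¹:ℝ) < 1)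
    exact ⟨N, lt_of_le_of_lt (hule N) hN⟩
  have hm_spec : u (Nat.find hex) < T := Nat.find_spec hex
  have hm_pos : Nat.find hex ≠ 0 := by
    intro h0
    rw [h0, hu0] at hm_spec
    linarith
  obtain ⟨n, hn⟩ := Nat.exists_eq_succ_of_ne_zero hm_pos
  have huT1 : u (n+1) < T := by rw [(by rw [hn] : n+1 = Nat.find hex)]; exact hm_spec
  have hT2 : T ≤ u n := by
    have := Nat.find_min hex (by rw [hn]; exact Nat.lt_succ_self n)
    exact not_lt.1 this
  set A := a (n+1) with hAdef
  have hA1 : 1 ≤ A := ha1 (n+1)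
  set h : ℝ → ℝ := fun x => max (|f x| - A) 0 with hhdef
  have hfm : AEMeasurable f (volume.restrict (Ioo (0:ℝ) 1)) := (hK f hf).aemeasurable
  have hhm : AEMeasurable h (volume.restrict (Ioo (0:ℝ) 1)) :=
    ((measurable_abs.comp_aemeasurable hfm).sub aemeasurable_const).max aemeasurable_const
  have hIf : ∫⁻ x in Ioo (0:ℝ) 1, ENNReal.ofReal |f x| ≠ ⊤ := by
    have h2 := (hK f hf).2
    rw [hasFiniteIntegral_iff_norm] at h2
    simpa [Real.norm_eq_abs] using h2.ne
  have hIh : ∫⁻ x in Ioo (0:ℝ) 1, ENNReal.ofReal |h x| ≠ ⊤ := by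
    refine ne_top_of_le_ne_top hIf (lintegral_mono fun x => ENNReal.ofReal_le_ofReal ?_)
    simp only [hhdef]
    rw [abs_of_nonneg (le_max_right _ _)]
    exact max_le (sub_le_self _ (by linarith)) (abs_nonneg _)
  have hLHS : ∫⁻ s in Ioo (0:ℝ) T, ENNReal.ofReal (mu01 f s)
      ≤ ENNReal.ofReal A * ENNReal.ofReal T + ENNReal.ofReal ((2⁻¹:ℝ)^(n+1)) := by
    have step1 : ∫⁻ s in Ioo (0:ℝ) T, ENNReal.ofReal (mu01 f s)
        ≤ ∫⁻ s in Ioo (0:ℝ) T, (ENNReal.ofReal A + ENNReal.ofReal (mu01 h s)) := by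
      refine lintegral_mono_ae ((ae_restrict_iff' measurableSet_Ioo).2
        (ae_of_all _ fun s hs => ?_))
      have hne := S_nonempty h hhm hIh hs.1
      have htr := mu01_trunc f (by linarith : (0:ℝ) ≤ A) hs.1 hne
      calc ENNReal.ofReal (mu01 f s) ≤ ENNReal.ofReal (A + mu01 h s) :=
            ENNReal.ofReal_le_ofReal htr
        _ ≤ _ := ENNReal.ofReal_add_le
    refine le_trans step1 ?_
    rw [lintegral_add_left measurable_const, setLIntegral_const]
    refine add_le_add (le_of_eq (by rw [Real.volume_Ioo, sub_zero])) ?_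
    refine le_trans (lintegral_mono_set (Ioo_subset_Ioo_right hT1)) ?_
    refine le_trans (lint_mu01_le h hhm hIh) ?_
    refine le_trans (le_of_eq (lintegral_congr fun x => ?_)) (haK (n+1) f hf)
    simp only [hhdef]
    rw [abs_of_nonneg (le_max_right _ _)]
  have hRHS : ENNReal.ofReal A * ENNReal.ofReal T + ENNReal.ofReal ((2⁻¹:ℝ)^(n+1))
      ≤ ∫⁻ s in Ioo (0:ℝ) T, ENNReal.ofReal (mu01 g s) := by
    have step1 : ∫⁻ s in Ioo (0:ℝ) T, gE s
        ≤ ∫⁻ s in Ioo (0:ℝ) T, ENNReal.ofReal (mu01 g s) := by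
      refine lintegral_mono_ae ((ae_restrict_iff' measurableSet_Ioo).2
        (ae_of_all _ fun s hs => ?_))
      exact hmu_g s ⟨hs.1, lt_of_lt_of_le hs.2 hT1⟩
    refine le_trans ?_ step1
    rw [hIgT T]
    have hterm : ENNReal.ofReal (b n) * ENNReal.ofReal (min (u n) T)
        + ENNReal.ofReal (b (n+1)) * ENNReal.ofReal (min (u (n+1)) T)
        ≤ ∑' k, ENNReal.ofReal (b k) * ENNReal.ofReal (min (u k) T) := by
      calc ENNReal.ofReal (b n) * ENNReal.ofReal (min (u n) T)
            + ENNReal.ofReal (b (n+1)) * ENNReal.ofReal (min (u (n+1)) T)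
          = ∑ k ∈ ({n, n+1} : Finset ℕ),
              ENNReal.ofReal (b k) * ENNReal.ofReal (min (u k) T) :=
            (Finset.sum_pair (f := fun k => ENNReal.ofReal (b k) * ENNReal.ofReal (min (u k) T)) (Nat.ne_of_lt (lt_add_one n))).symm
        _ ≤ _ := ENNReal.sum_le_tsum _
    refine le_trans ?_ (add_le_add_right hterm _)
    have h1 : ENNReal.ofReal A * ENNReal.ofReal T
        ≤ ENNReal.ofReal (b n) * ENNReal.ofReal (min (u n) T) := by
      rw [min_eq_right hT2]
      exact mul_le_mul_left (ENNReal.ofReal_le_ofReal (hbge n)) _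
    have h2 : ENNReal.ofReal ((2⁻¹:ℝ)^(n+1))
        ≤ ENNReal.ofReal (b (n+1)) * ENNReal.ofReal (min (u (n+1)) T) := by
      rw [min_eq_left huT1.le, ← ENNReal.ofReal_mul (hbpos (n+1)).le]
      refine ENNReal.ofReal_le_ofReal ?_
      rw [hbu (n+1)]
      nlinarith [hupos (n+1), ha1 (n+2),
        mul_pos (lt_of_lt_of_le one_pos (ha1 (n+2))) (hupos (n+1))]
    calc ENNReal.ofReal A * ENNReal.ofReal T + ENNReal.ofReal ((2⁻¹:ℝ)^(n+1))
        ≤ ENNReal.ofReal (b n) * ENNReal.ofReal (min (u n) T)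
            + ENNReal.ofReal (b (n+1)) * ENNReal.ofReal (min (u (n+1)) T) := add_le_add h1 h2
      _ ≤ ENNReal.ofReal T + (ENNReal.ofReal (b n) * ENNReal.ofReal (min (u n) T)
            + ENNReal.ofReal (b (n+1)) * ENNReal.ofReal (min (u (n+1)) T)) := le_add_self
  exact le_trans hLHS hRHS
end

section
/- Let K be a bounded subset of L¹(0,1). Suppose there exists a positive function g ∈ L¹(0,1) such that |f| ≺≺ g for all f ∈ K. Then there exists an Orlicz function G with G(t)/t → ∞ as t → ∞ such that sup{∫_0^1 G(|f(s)|) ds : f ∈ K} < ∞. -/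
open MeasureTheory Set Filter Topology

open scoped ENNReal NNReal

namespace Stmt6Aux

noncomputable def dd (f : ℝ → ℝ) (s : ℝ) : ℝ≥0∞ :=
  volume {x | x ∈ Ioo (0:ℝ) 1 ∧ s < |f x|}

lemma mu01_eq (f : ℝ → ℝ) (t : ℝ) :
    mu01 f t = sInf {s : ℝ | 0 ≤ s ∧ dd f s ≤ ENNReal.ofReal t} := rfl

lemma dd_anti (f : ℝ → ℝ) : Antitone (dd f) := fun s t hst =>
  measure_mono fun x hx => ⟨hx.1, lt_of_le_of_lt hst hx.2⟩

lemma dd_ne_top (f : ℝ → ℝ) (s : ℝ) : dd f s ≠ ⊤ := by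
  have h : dd f s ≤ volume (Ioo (0:ℝ) 1) := measure_mono fun x hx => hx.1
  exact (lt_of_le_of_lt h measure_Ioo_lt_top).ne

lemma dd_le_one (f : ℝ → ℝ) (s : ℝ) : dd f s ≤ ENNReal.ofReal 1 := by
  have h : dd f s ≤ volume (Ioo (0:ℝ) 1) := measure_mono fun x hx => hx.1
  simpa [Real.volume_Ioo] using h

lemma dd_sup (f : ℝ → ℝ) (s : ℝ) :
    dd f s = ⨆ n : ℕ, dd f (s + 1/(n+1)) := by
  have hset : {x | x ∈ Ioo (0:ℝ) 1 ∧ s < |f x|}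
      = ⋃ n : ℕ, {x | x ∈ Ioo (0:ℝ) 1 ∧ s + 1/(n+1) < |f x|} := by
    ext x
    simp only [mem_iUnion, mem_setOf_eq]
    constructor
    · rintro ⟨hx, hs⟩
      obtain ⟨n, hn⟩ := exists_nat_one_div_lt (sub_pos.mpr hs)
      exact ⟨n, hx, by linarith⟩
    · rintro ⟨n, hx, h⟩
      refine ⟨hx, lt_of_le_of_lt ?_ h⟩
      have : (0:ℝ) < 1/(n+1) := by positivity
      linarith
  have hmono : Monotone (fun n : ℕ => {x | x ∈ Ioo (0:ℝ) 1 ∧ s + 1/(n+1) < |f x|}) := by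
    intro m n hmn x hx
    refine ⟨hx.1, lt_of_le_of_lt ?_ hx.2⟩
    have h1 : (0:ℝ) < (m:ℝ)+1 := by positivity
    have h2 : ((m:ℝ)+1) ≤ ((n:ℝ)+1) := by
      have := (Nat.cast_le (α := ℝ)).mpr hmn
      linarith
    have := one_div_le_one_div_of_le h1 h2
    linarith
  have hd : Directed (· ⊆ ·) (fun n : ℕ => {x | x ∈ Ioo (0:ℝ) 1 ∧ s + 1/(n+1) < |f x|}) :=
    hmono.directed_le
  rw [dd, hset, Directed.measure_iUnion hd]
  rfl


/-- The set defining `mu01 f t`. -/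
def SS (f : ℝ → ℝ) (t : ℝ) : Set ℝ := {s : ℝ | 0 ≤ s ∧ dd f s ≤ ENNReal.ofReal t}

lemma SS_bddBelow (f : ℝ → ℝ) (t : ℝ) : BddBelow (SS f t) := ⟨0, fun x hx => hx.1⟩

lemma SS_nonempty {f : ℝ → ℝ}
    (hm : AEMeasurable f (volume.restrict (Ioo (0:ℝ) 1)))
    (hL : ∫⁻ x in Ioo (0:ℝ) 1, ENNReal.ofReal |f x| ≠ ⊤)
    {t : ℝ} (ht : 0 < t) : (SS f t).Nonempty := by
  set L := ∫⁻ x in Ioo (0:ℝ) 1, ENNReal.ofReal |f x| with hLdef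
  have hmark : ∀ s : ℝ, 0 < s → dd f s ≤ L / ENNReal.ofReal s := by
    intro s hs
    have hseteq : {x | x ∈ Ioo (0:ℝ) 1 ∧ s < |f x|} = {x : ℝ | s < |f x|} ∩ Ioo 0 1 := by
      ext x; simp only [mem_setOf_eq, mem_inter_iff]; tauto
    have hdd : dd f s = (volume.restrict (Ioo (0:ℝ) 1)) {x | s < |f x|} := by
      rw [dd, hseteq, ← Measure.restrict_apply' measurableSet_Ioo]
    have hsub : {x : ℝ | s < |f x|} ⊆ {x : ℝ | ENNReal.ofReal s ≤ ENNReal.ofReal |f x|} :=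
      fun x hx => ENNReal.ofReal_le_ofReal (le_of_lt hx)
    calc dd f s ≤ (volume.restrict (Ioo (0:ℝ) 1)) {x | ENNReal.ofReal s ≤ ENNReal.ofReal |f x|} := by
          rw [hdd]; exact measure_mono hsub
      _ ≤ L / ENNReal.ofReal s := by
          refine meas_ge_le_lintegral_div ?_ ?_ ?_
          · have := hm.norm.ennreal_ofReal
            simpa [Real.norm_eq_abs] using this
          · simp [ENNReal.ofReal_eq_zero, not_le, hs]
          · exact ENNReal.ofReal_ne_top
  have htne : ENNReal.ofReal t ≠ 0 := by simp [ENNReal.ofReal_eq_zero, not_le, ht]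
  have hdivlt : L / ENNReal.ofReal t ≠ ⊤ :=
    (ENNReal.div_lt_top hL htne).ne
  set s : ℝ := (L / ENNReal.ofReal t).toReal + 1 with hsdef
  have hs0 : 0 < s := by positivity
  refine ⟨s, le_of_lt hs0, ?_⟩
  have h1 : L / ENNReal.ofReal t ≤ ENNReal.ofReal s := by
    rw [hsdef, ← ENNReal.ofReal_toReal hdivlt]
    exact ENNReal.ofReal_le_ofReal (by
      rw [ENNReal.toReal_ofReal ENNReal.toReal_nonneg]
      linarith)
  have h2 : L ≤ ENNReal.ofReal s * ENNReal.ofReal t := by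
    calc L = ENNReal.ofReal t * (L / ENNReal.ofReal t) :=
          (ENNReal.mul_div_cancel htne ENNReal.ofReal_ne_top).symm
      _ ≤ ENNReal.ofReal t * ENNReal.ofReal s := mul_le_mul_right h1 _
      _ = ENNReal.ofReal s * ENNReal.ofReal t := mul_comm _ _
  calc dd f s ≤ L / ENNReal.ofReal s := hmark s hs0
    _ ≤ ENNReal.ofReal t := ENNReal.div_le_of_le_mul' h2

lemma mu01_nonneg (f : ℝ → ℝ) (t : ℝ) : 0 ≤ mu01 f t :=
  Real.sInf_nonneg fun _ hx => hx.1

lemma mu01_le_iff {f : ℝ → ℝ}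
    (hm : AEMeasurable f (volume.restrict (Ioo (0:ℝ) 1)))
    (hL : ∫⁻ x in Ioo (0:ℝ) 1, ENNReal.ofReal |f x| ≠ ⊤)
    {t s : ℝ} (ht : 0 < t) (hs : 0 ≤ s) :
    mu01 f t ≤ s ↔ dd f s ≤ ENNReal.ofReal t := by
  constructor
  · intro h
    rw [dd_sup f s]
    refine iSup_le fun n => ?_
    have hlt : sInf (SS f t) < s + 1/(n+1) := by
      have : (0:ℝ) < 1/(n+1) := by positivity
      calc sInf (SS f t) = mu01 f t := rfl
        _ ≤ s := h
        _ < s + 1/(n+1) := by linarith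
    obtain ⟨a, ⟨ha0, haD⟩, halt⟩ :=
      (csInf_lt_iff (SS_bddBelow f t) (SS_nonempty hm hL ht)).mp hlt
    exact le_trans (dd_anti f (le_of_lt halt)) haD
  · intro h
    exact csInf_le (SS_bddBelow f t) ⟨hs, h⟩

lemma E_eq {f : ℝ → ℝ}
    (hm : AEMeasurable f (volume.restrict (Ioo (0:ℝ) 1)))
    (hL : ∫⁻ x in Ioo (0:ℝ) 1, ENNReal.ofReal |f x| ≠ ⊤)
    {s : ℝ} (hs : 0 ≤ s) :
    {x | x ∈ Ioo (0:ℝ) 1 ∧ s < mu01 f x} = Ioo 0 ((dd f s).toReal) := by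
  have htop := dd_ne_top f s
  have hle1 : (dd f s).toReal ≤ 1 := by
    have := dd_le_one f s
    calc (dd f s).toReal ≤ (ENNReal.ofReal 1).toReal := ENNReal.toReal_mono (by simp) this
      _ = 1 := by simp
  ext x
  simp only [mem_setOf_eq, mem_Ioo]
  constructor
  · rintro ⟨⟨hx0, hx1⟩, hsx⟩
    refine ⟨hx0, ?_⟩
    have : ¬ (mu01 f x ≤ s) := not_le.mpr hsx
    rw [mu01_le_iff hm hL hx0 hs] at this
    have h2 : ENNReal.ofReal x < dd f s := not_le.mp this
    exact (ENNReal.ofReal_lt_iff_lt_toReal (le_of_lt hx0) htop).mp h2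
  · rintro ⟨hx0, hxd⟩
    have hx1 : x < 1 := lt_of_lt_of_le hxd hle1
    refine ⟨⟨hx0, hx1⟩, ?_⟩
    by_contra hcon
    push_neg at hcon
    rw [mu01_le_iff hm hL hx0 hs] at hcon
    exact absurd ((ENNReal.ofReal_lt_iff_lt_toReal (le_of_lt hx0) htop).mpr hxd)
      (not_lt.mpr hcon)

lemma equimeas {f : ℝ → ℝ}
    (hm : AEMeasurable f (volume.restrict (Ioo (0:ℝ) 1)))
    (hL : ∫⁻ x in Ioo (0:ℝ) 1, ENNReal.ofReal |f x| ≠ ⊤)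
    {s : ℝ} (hs : 0 ≤ s) :
    volume {x | x ∈ Ioo (0:ℝ) 1 ∧ s < mu01 f x} = dd f s := by
  rw [E_eq hm hL hs, Real.volume_Ioo, sub_zero,
    ENNReal.ofReal_toReal (dd_ne_top f s)]


lemma mu01_antitoneOn {f : ℝ → ℝ}
    (hm : AEMeasurable f (volume.restrict (Ioo (0:ℝ) 1)))
    (hL : ∫⁻ x in Ioo (0:ℝ) 1, ENNReal.ofReal |f x| ≠ ⊤) :
    AntitoneOn (mu01 f) (Ioo (0:ℝ) 1) := by
  intro t ht t' ht' htt'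
  rw [mu01_eq, mu01_eq]
  refine csInf_le_csInf (SS_bddBelow f t') (SS_nonempty hm hL ht.1) ?_
  intro a ⟨ha0, haD⟩
  exact ⟨ha0, le_trans haD (ENNReal.ofReal_le_ofReal htt')⟩

lemma mu01_aemeasurable {f : ℝ → ℝ}
    (hm : AEMeasurable f (volume.restrict (Ioo (0:ℝ) 1)))
    (hL : ∫⁻ x in Ioo (0:ℝ) 1, ENNReal.ofReal |f x| ≠ ⊤) :
    AEMeasurable (mu01 f) (volume.restrict (Ioo (0:ℝ) 1)) :=
  aemeasurable_restrict_of_antitoneOn measurableSet_Ioo (mu01_antitoneOn hm hL)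

/-- Layer cake with a shift, abstract version. -/
lemma layer_aux {F : ℝ → ℝ} (hF : AEMeasurable F (volume.restrict (Ioo (0:ℝ) 1)))
    (hFnn : ∀ x, 0 ≤ F x) {lam : ℝ} (hlam : 0 ≤ lam) :
    ∫⁻ x in Ioo (0:ℝ) 1, ENNReal.ofReal (max (F x - lam) 0)
      = ∫⁻ t in Ioi (0:ℝ), volume {x | x ∈ Ioo (0:ℝ) 1 ∧ lam + t < F x} := by
  have hmeas : AEMeasurable (fun x => max (F x - lam) 0)
      (volume.restrict (Ioo (0:ℝ) 1)) := (hF.sub aemeasurable_const).max aemeasurable_const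
  have h0 : 0 ≤ᵐ[volume.restrict (Ioo (0:ℝ) 1)] fun x => max (F x - lam) 0 :=
    Filter.Eventually.of_forall fun x => le_max_right _ _
  rw [lintegral_eq_lintegral_meas_lt (volume.restrict (Ioo (0:ℝ) 1)) h0 hmeas]
  refine setLIntegral_congr_fun measurableSet_Ioi ?_
  intro t ht
  beta_reduce
  rw [Measure.restrict_apply' measurableSet_Ioo]
  congr 1
  ext x
  simp only [mem_setOf_eq, mem_inter_iff, lt_max_iff]
  constructor
  · rintro ⟨h1 | h1, h2⟩
    · exact ⟨h2, by linarith⟩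
    · exact absurd h1 (not_lt.mpr (le_of_lt ht))
  · rintro ⟨h1, h2⟩
    exact ⟨Or.inl (by linarith), h1⟩

lemma layer_abs {f : ℝ → ℝ}
    (hm : AEMeasurable f (volume.restrict (Ioo (0:ℝ) 1)))
    {lam : ℝ} (hlam : 0 ≤ lam) :
    ∫⁻ x in Ioo (0:ℝ) 1, ENNReal.ofReal (max (|f x| - lam) 0)
      = ∫⁻ t in Ioi (0:ℝ), dd f (lam + t) := by
  have habs : AEMeasurable (fun x => |f x|) (volume.restrict (Ioo (0:ℝ) 1)) := by
    have := hm.norm; simpa [Real.norm_eq_abs] using this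
  rw [layer_aux habs (fun x => abs_nonneg _) hlam]
  rfl

lemma layer_mu {f : ℝ → ℝ}
    (hm : AEMeasurable f (volume.restrict (Ioo (0:ℝ) 1)))
    (hL : ∫⁻ x in Ioo (0:ℝ) 1, ENNReal.ofReal |f x| ≠ ⊤)
    {lam : ℝ} (hlam : 0 ≤ lam) :
    ∫⁻ s in Ioo (0:ℝ) 1, ENNReal.ofReal (max (mu01 f s - lam) 0)
      = ∫⁻ t in Ioi (0:ℝ), dd f (lam + t) := by
  rw [layer_aux (mu01_aemeasurable hm hL) (mu01_nonneg f) hlam]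
  refine setLIntegral_congr_fun measurableSet_Ioi ?_
  intro t ht
  exact equimeas hm hL (by simp only [mem_Ioi] at ht; linarith)

/-- Pointwise truncated lintegral over `(0,1)`. -/
noncomputable def BB (f : ℝ → ℝ) (lam : ℝ) : ℝ≥0∞ :=
  ∫⁻ s in Ioo (0:ℝ) 1, ENNReal.ofReal (max (mu01 f s - lam) 0)

lemma layer_eq {f : ℝ → ℝ}
    (hm : AEMeasurable f (volume.restrict (Ioo (0:ℝ) 1)))
    (hL : ∫⁻ x in Ioo (0:ℝ) 1, ENNReal.ofReal |f x| ≠ ⊤)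
    {lam : ℝ} (hlam : 0 ≤ lam) :
    ∫⁻ x in Ioo (0:ℝ) 1, ENNReal.ofReal (max (|f x| - lam) 0) = BB f lam := by
  rw [layer_abs hm hlam, BB, layer_mu hm hL hlam]


lemma lintegral_abs_ne_top {f : ℝ → ℝ} (hf : IntegrableOn f (Ioo (0:ℝ) 1) volume) :
    ∫⁻ x in Ioo (0:ℝ) 1, ENNReal.ofReal |f x| ≠ ⊤ := by
  have h := hf.2
  rw [hasFiniteIntegral_iff_norm] at h
  simp only [Real.norm_eq_abs] at h
  exact h.ne

lemma hardy {f g : ℝ → ℝ}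
    (hmf : AEMeasurable f (volume.restrict (Ioo (0:ℝ) 1)))
    (hLf : ∫⁻ x in Ioo (0:ℝ) 1, ENNReal.ofReal |f x| ≠ ⊤)
    (hsub : Submaj01 f g) {lam : ℝ} (hlam : 0 ≤ lam) :
    BB f lam ≤ BB g lam := by
  set D := dd f lam with hD
  have hDt : D ≠ ⊤ := dd_ne_top f lam
  set c := D.toReal with hc
  have hc0 : 0 ≤ c := ENNReal.toReal_nonneg
  have hc1 : c ≤ 1 := by
    have h := dd_le_one f lam
    calc c ≤ (ENNReal.ofReal 1).toReal := ENNReal.toReal_mono (by simp) h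
      _ = 1 := by simp
  have hE : {x | x ∈ Ioo (0:ℝ) 1 ∧ lam < mu01 f x} = Ioo 0 c := E_eq hmf hLf hlam
  rcases eq_or_lt_of_le hc0 with hc0' | hc0'
  · -- c = 0 case
    have hzero : BB f lam = 0 := by
      rw [BB]
      have hpt : ∀ s, s ∈ Ioo (0:ℝ) 1 → ENNReal.ofReal (max (mu01 f s - lam) 0) = 0 := by
        intro s hs
        have hnl : ¬ (lam < mu01 f s) := by
          intro hcon
          have hmem : s ∈ Ioo (0:ℝ) c :=
            hE ▸ (⟨hs, hcon⟩ : s ∈ {x | x ∈ Ioo (0:ℝ) 1 ∧ lam < mu01 f x})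
          rw [← hc0'] at hmem
          simpa using hmem
        have h2 : mu01 f s - lam ≤ 0 := by linarith [not_lt.mp hnl]
        simp [max_eq_right h2]
      rw [setLIntegral_congr_fun measurableSet_Ioo hpt]
      simp
    simp [hzero]
  · have hIoo_sub : Ioo (0:ℝ) c ⊆ Ioo 0 1 := Ioo_subset_Ioo le_rfl hc1
    have hsplit : BB f lam = ∫⁻ s in Ioo (0:ℝ) c, ENNReal.ofReal (max (mu01 f s - lam) 0) := by
      have hdisj : Disjoint (Ioo (0:ℝ) c) (Ico c 1) :=
        Set.disjoint_left.mpr fun x hx hx' => absurd hx.2 (not_lt.mpr hx'.1)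
      rw [BB, ← Ioo_union_Ico_eq_Ioo hc0' hc1, lintegral_union measurableSet_Ico hdisj]
      have hzero : ∫⁻ s in Ico c 1, ENNReal.ofReal (max (mu01 f s - lam) 0) = 0 := by
        have hpt : ∀ s, s ∈ Ico c (1:ℝ) → ENNReal.ofReal (max (mu01 f s - lam) 0) = 0 := by
          intro s hs
          have hs01 : s ∈ Ioo (0:ℝ) 1 := ⟨lt_of_lt_of_le hc0' hs.1, hs.2⟩
          have hnot : s ∉ Ioo (0:ℝ) c := fun hcon => absurd hcon.2 (not_lt.mpr hs.1)
          have hnl : ¬ (lam < mu01 f s) := fun hcon => hnot (hE ▸ ⟨hs01, hcon⟩)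
          simp [max_eq_right (by linarith [not_lt.mp hnl] : mu01 f s - lam ≤ 0)]
        rw [setLIntegral_congr_fun measurableSet_Ico hpt]
        simp
      rw [hzero, add_zero]
    have hkey : ∫⁻ s in Ioo (0:ℝ) c, ENNReal.ofReal (mu01 f s)
        = BB f lam + ENNReal.ofReal lam * ENNReal.ofReal c := by
      have hpt : ∀ s, s ∈ Ioo (0:ℝ) c →
          ENNReal.ofReal (mu01 f s)
            = ENNReal.ofReal (max (mu01 f s - lam) 0) + ENNReal.ofReal lam := by
        intro s hs
        have hsE : lam < mu01 f s :=
          (show s ∈ {x | x ∈ Ioo (0:ℝ) 1 ∧ lam < mu01 f x} from hE ▸ hs).2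
        rw [max_eq_left (by linarith), ← ENNReal.ofReal_add (by linarith) hlam]
        congr 1
        ring
      rw [setLIntegral_congr_fun measurableSet_Ioo hpt,
        lintegral_add_right' _ aemeasurable_const, lintegral_const,
        Measure.restrict_apply MeasurableSet.univ, univ_inter, Real.volume_Ioo, sub_zero,
        hsplit]
    have hg_side : ∫⁻ s in Ioo (0:ℝ) c, ENNReal.ofReal (mu01 g s)
        ≤ BB g lam + ENNReal.ofReal lam * ENNReal.ofReal c := by
      have hpt : ∀ s, ENNReal.ofReal (mu01 g s)
          ≤ ENNReal.ofReal (max (mu01 g s - lam) 0) + ENNReal.ofReal lam := by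
        intro s
        rw [← ENNReal.ofReal_add (le_max_right _ _) hlam]
        refine ENNReal.ofReal_le_ofReal ?_
        rcases le_total (mu01 g s - lam) 0 with h | h
        · rw [max_eq_right h]; linarith
        · rw [max_eq_left h]; linarith
      calc ∫⁻ s in Ioo (0:ℝ) c, ENNReal.ofReal (mu01 g s)
          ≤ ∫⁻ s in Ioo (0:ℝ) c,
              (ENNReal.ofReal (max (mu01 g s - lam) 0) + ENNReal.ofReal lam) :=
            lintegral_mono fun s => hpt s
        _ = (∫⁻ s in Ioo (0:ℝ) c, ENNReal.ofReal (max (mu01 g s - lam) 0))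
              + ENNReal.ofReal lam * ENNReal.ofReal c := by
            rw [lintegral_add_right' _ aemeasurable_const, lintegral_const,
              Measure.restrict_apply MeasurableSet.univ, univ_inter,
              Real.volume_Ioo, sub_zero]
        _ ≤ BB g lam + ENNReal.ofReal lam * ENNReal.ofReal c := by
            gcongr
            exact lintegral_mono' (Measure.restrict_mono hIoo_sub le_rfl) le_rfl
    have hfinal : BB f lam + ENNReal.ofReal lam * ENNReal.ofReal c
        ≤ BB g lam + ENNReal.ofReal lam * ENNReal.ofReal c := by
      rw [← hkey]
      exact le_trans (hsub c ⟨hc0', hc1⟩) hg_side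
    exact (ENNReal.add_le_add_iff_right
      (ENNReal.mul_ne_top ENNReal.ofReal_ne_top ENNReal.ofReal_ne_top)).mp hfinal

end Stmt6Aux

theorem stmt6 (K : Set (ℝ → ℝ))
    (hK : ∀ f ∈ K, IntegrableOn f (Ioo 0 1) volume)
    (hKb : ∃ C : ℝ, ∀ f ∈ K, ∫ x in Ioo (0:ℝ) 1, |f x| ≤ C)
    (g : ℝ → ℝ) (hg0 : ∀ x ∈ Ioo (0:ℝ) 1, 0 < g x)
    (hgi : IntegrableOn g (Ioo 0 1) volume)
    (hmaj : ∀ f ∈ K, Submaj01 f g) :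
    ∃ G : ℝ → ℝ, IsOrliczFunction G ∧ Tendsto (fun t => G t / t) atTop atTop ∧
      ∃ C : ℝ, ∀ f ∈ K,
        ∫⁻ s in Ioo (0:ℝ) 1, ENNReal.ofReal (G |f s|) ≤ ENNReal.ofReal C := by
  classical
  obtain ⟨hmg, hLg⟩ : AEMeasurable g (volume.restrict (Ioo (0:ℝ) 1)) ∧
      ∫⁻ x in Ioo (0:ℝ) 1, ENNReal.ofReal |g x| ≠ ⊤ :=
    ⟨hgi.aemeasurable, Stmt6Aux.lintegral_abs_ne_top hgi⟩
  -- the tail integrals of g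
  set I : ℕ → ℝ≥0∞ :=
    fun m => ∫⁻ x in Ioo (0:ℝ) 1, ENNReal.ofReal (max (|g x| - (m:ℝ)) 0) with hIdef
  have hgabs : AEMeasurable (fun x => |g x|) (volume.restrict (Ioo (0:ℝ) 1)) := by
    have := hmg.norm; simpa [Real.norm_eq_abs] using this
  have hI0 : Tendsto I atTop (𝓝 0) := by
    have := tendsto_lintegral_of_dominated_convergence'
      (μ := volume.restrict (Ioo (0:ℝ) 1))
      (F := fun (m : ℕ) x => ENNReal.ofReal (max (|g x| - (m:ℝ)) 0))
      (f := fun _ => 0)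
      (bound := fun x => ENNReal.ofReal |g x|)
      (fun m => ((hgabs.sub aemeasurable_const).max aemeasurable_const).ennreal_ofReal)
      (fun m => Filter.Eventually.of_forall fun x => ENNReal.ofReal_le_ofReal
        (max_le (by simp [sub_le_self_iff]) (abs_nonneg _)))
      hLg
      (Filter.Eventually.of_forall fun x => by
        have hev : (fun m : ℕ => ENNReal.ofReal (max (|g x| - (m:ℝ)) 0))
            =ᶠ[atTop] fun _ => (0:ℝ≥0∞) := by
          rw [Filter.eventuallyEq_iff_exists_mem]
          refine ⟨{m | ⌈|g x|⌉₊ ≤ m}, mem_atTop _, fun m hm => ?_⟩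
          have h1 : |g x| ≤ (m:ℝ) :=
            le_trans (Nat.le_ceil _) (Nat.cast_le.mpr hm)
          simp [max_eq_right (by linarith : |g x| - (m:ℝ) ≤ 0)]
        exact Tendsto.congr' hev.symm tendsto_const_nhds)
    simpa [hIdef] using this
  -- choose the thresholds
  have hNex : ∀ n : ℕ, ∃ M : ℕ, (n+1 ≤ M) ∧ I M ≤ (2⁻¹ : ℝ≥0∞)^n := by
    intro n
    have hpos : (0:ℝ≥0∞) < (2⁻¹ : ℝ≥0∞)^n :=
      pos_iff_ne_zero.mpr (pow_ne_zero _ (by norm_num))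
    have hev : ∀ᶠ m in atTop, I m < (2⁻¹:ℝ≥0∞)^n := hI0.eventually (Iio_mem_nhds hpos)
    obtain ⟨M, hM⟩ := Filter.eventually_atTop.mp hev
    exact ⟨max M (n+1), le_max_right _ _, (hM _ (le_max_left _ _)).le⟩
  choose N hN1 hN2 using hNex
  set lam : ℕ → ℝ := fun n => (N n : ℝ) with hlamdef
  have hlam_ge : ∀ n : ℕ, (n:ℝ) + 1 ≤ lam n := by
    intro n
    have h := hN1 n
    show ((n:ℝ) + 1) ≤ ((N n : ℕ) : ℝ)
    exact_mod_cast h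
  have hlam1 : ∀ n, (1:ℝ) ≤ lam n := fun n => by
    have h1 := hlam_ge n
    have h2 : (0:ℝ) ≤ (n:ℝ) := Nat.cast_nonneg n
    linarith
  have hlam0 : ∀ n, (0:ℝ) ≤ lam n := fun n => le_trans zero_le_one (hlam1 n)
  -- the Orlicz function
  set G : ℝ → ℝ := fun t => ∑' n : ℕ, max (t - lam n) 0 with hGdef
  have hsum : ∀ t : ℝ, Summable (fun n : ℕ => max (t - lam n) 0) := by
    intro t
    refine summable_of_ne_finset_zero (s := Finset.range ⌈t⌉₊) ?_
    intro n hn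
    rw [Finset.mem_range, not_lt] at hn
    have h1 : t ≤ (n:ℝ) := le_trans (Nat.le_ceil t) (Nat.cast_le.mpr hn)
    have h2 : t - lam n ≤ 0 := by linarith [hlam_ge n]
    simp [max_eq_right h2]
  have hGnn : ∀ t, 0 ≤ G t := fun t => tsum_nonneg fun n => le_max_right _ _
  have hG0 : ∀ t : ℝ, t ≤ 1 → G t = 0 := by
    intro t ht
    have h2 : (fun n : ℕ => max (t - lam n) 0) = fun _ => (0:ℝ) := by
      funext n
      exact max_eq_right (by linarith [hlam1 n])
    calc G t = ∑' n : ℕ, max (t - lam n) 0 := rfl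
      _ = ∑' _n : ℕ, (0:ℝ) := by rw [h2]
      _ = 0 := tsum_zero
  have hconv : ConvexOn ℝ (Ici 0) G := by
    refine ⟨convex_Ici 0, fun x hx y hy a b ha hb hab => ?_⟩
    simp only [smul_eq_mul]
    have hpt : ∀ n : ℕ, max (a*x + b*y - lam n) 0
        ≤ a * max (x - lam n) 0 + b * max (y - lam n) 0 := by
      intro n
      have h1 : a*(x - lam n) ≤ a * max (x - lam n) 0 :=
        mul_le_mul_of_nonneg_left (le_max_left _ _) ha
      have h2 : b*(y - lam n) ≤ b * max (y - lam n) 0 :=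
        mul_le_mul_of_nonneg_left (le_max_left _ _) hb
      have h3 : (0:ℝ) ≤ a * max (x - lam n) 0 + b * max (y - lam n) 0 := by positivity
      refine max_le ?_ h3
      have h4 : a*x + b*y - lam n = a*(x - lam n) + b*(y - lam n) := by
        linear_combination (lam n) * hab
      linarith
    calc G (a*x + b*y)
        ≤ ∑' n : ℕ, (a * max (x - lam n) 0 + b * max (y - lam n) 0) :=
          Summable.tsum_le_tsum hpt (hsum _) (((hsum x).mul_left a).add ((hsum y).mul_left b))
      _ = a * G x + b * G y := by
          rw [Summable.tsum_add ((hsum x).mul_left a) ((hsum y).mul_left b),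
            tsum_mul_left, tsum_mul_left]
  have hcont : ContinuousWithinAt G (Ici 0) 0 := by
    have hev : G =ᶠ[𝓝[Ici (0:ℝ)] 0] fun _ => (0:ℝ) := by
      have h1 : Iio (1:ℝ) ∈ 𝓝[Ici (0:ℝ)] (0:ℝ) :=
        nhdsWithin_le_nhds (Iio_mem_nhds one_pos)
      filter_upwards [h1] with t ht
      exact hG0 t (le_of_lt ht)
    exact (continuousWithinAt_const :
      ContinuousWithinAt (fun _ : ℝ => (0:ℝ)) (Ici 0) 0).congr_of_eventuallyEq hev
      (hG0 0 zero_le_one)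
  have hne0 : ∃ t, 0 ≤ t ∧ G t ≠ 0 := by
    refine ⟨lam 0 + 1, by linarith [hlam0 0], ?_⟩
    have h1 : (1:ℝ) ≤ G (lam 0 + 1) := by
      have h := Summable.le_tsum (hsum (lam 0 + 1)) 0 (fun j _ => le_max_right _ _)
      simpa using h
    intro hcon
    rw [hcon] at h1
    linarith
  have hGtend : Tendsto (fun t => G t / t) atTop atTop := by
    rw [tendsto_atTop]
    intro C
    obtain ⟨Nn, hNn⟩ := exists_nat_ge C
    set Λ : ℝ := (((Finset.range (Nn+1)).sup N : ℕ) : ℝ) with hΛdef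
    have hΛn : ∀ n ∈ Finset.range (Nn+1), lam n ≤ Λ := by
      intro n hn
      show ((N n : ℕ) : ℝ) ≤ (((Finset.range (Nn+1)).sup N : ℕ) : ℝ)
      exact_mod_cast Finset.le_sup hn
    have hΛ0 : (0:ℝ) ≤ Λ := Nat.cast_nonneg _
    rw [Filter.eventually_atTop]
    refine ⟨max 1 (((Nn:ℝ)+1) * (Λ+1)), fun t ht => ?_⟩
    have ht1 : (1:ℝ) ≤ t := le_trans (le_max_left _ _) ht
    have ht0 : (0:ℝ) < t := by linarith
    have ht2 : ((Nn:ℝ)+1) * (Λ+1) ≤ t := le_trans (le_max_right _ _) ht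
    have hlow : ((Nn:ℝ)+1) * (t - Λ) ≤ G t := by
      have h1 : ∑ _n ∈ Finset.range (Nn+1), (t - Λ)
          ≤ ∑ n ∈ Finset.range (Nn+1), max (t - lam n) 0 := by
        refine Finset.sum_le_sum fun n hn => ?_
        have := hΛn n hn
        exact le_trans (by linarith) (le_max_left _ _)
      have h2 : ∑ n ∈ Finset.range (Nn+1), max (t - lam n) 0 ≤ G t :=
        Summable.sum_le_tsum _ (fun n _ => le_max_right _ _) (hsum t)
      calc ((Nn:ℝ)+1)*(t-Λ) = ∑ _n ∈ Finset.range (Nn+1), (t - Λ) := by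
            rw [Finset.sum_const, Finset.card_range]
            push_cast
            ring
        _ ≤ G t := le_trans h1 h2
    rw [le_div_iff₀ ht0]
    have hNt : (Nn:ℝ) * t ≤ ((Nn:ℝ)+1)*(t-Λ) := by nlinarith
    have hCt : C * t ≤ (Nn:ℝ) * t := mul_le_mul_of_nonneg_right hNn (le_of_lt ht0)
    linarith
  refine ⟨G, ⟨hconv, fun t _ => hGnn t, hG0 0 zero_le_one, hcont, hne0⟩, hGtend, 2, ?_⟩
  intro f hf
  have hmf : AEMeasurable f (volume.restrict (Ioo (0:ℝ) 1)) := (hK f hf).aemeasurable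
  have hLf : ∫⁻ x in Ioo (0:ℝ) 1, ENNReal.ofReal |f x| ≠ ⊤ :=
    Stmt6Aux.lintegral_abs_ne_top (hK f hf)
  have hfabs : AEMeasurable (fun x => |f x|) (volume.restrict (Ioo (0:ℝ) 1)) := by
    have := hmf.norm; simpa [Real.norm_eq_abs] using this
  have hstep : ∀ n : ℕ, ∫⁻ x in Ioo (0:ℝ) 1, ENNReal.ofReal (max (|f x| - lam n) 0)
      ≤ (2⁻¹:ℝ≥0∞)^n := by
    intro n
    calc ∫⁻ x in Ioo (0:ℝ) 1, ENNReal.ofReal (max (|f x| - lam n) 0)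
        = Stmt6Aux.BB f (lam n) := Stmt6Aux.layer_eq hmf hLf (hlam0 n)
      _ ≤ Stmt6Aux.BB g (lam n) := Stmt6Aux.hardy hmf hLf (hmaj f hf) (hlam0 n)
      _ = ∫⁻ x in Ioo (0:ℝ) 1, ENNReal.ofReal (max (|g x| - lam n) 0) :=
          (Stmt6Aux.layer_eq hmg hLg (hlam0 n)).symm
      _ = I (N n) := rfl
      _ ≤ (2⁻¹:ℝ≥0∞)^n := hN2 n
  have hexp : ∀ s : ℝ, ENNReal.ofReal (G |f s|)
      = ∑' n : ℕ, ENNReal.ofReal (max (|f s| - lam n) 0) := fun s =>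
    ENNReal.ofReal_tsum_of_nonneg (fun n => le_max_right _ _) (hsum _)
  calc ∫⁻ s in Ioo (0:ℝ) 1, ENNReal.ofReal (G |f s|)
      = ∫⁻ s in Ioo (0:ℝ) 1, ∑' n : ℕ, ENNReal.ofReal (max (|f s| - lam n) 0) :=
        lintegral_congr fun s => hexp s
    _ = ∑' n : ℕ, ∫⁻ s in Ioo (0:ℝ) 1, ENNReal.ofReal (max (|f s| - lam n) 0) :=
        lintegral_tsum fun n =>
          ((hfabs.sub aemeasurable_const).max aemeasurable_const).ennreal_ofReal
    _ ≤ ∑' n : ℕ, (2⁻¹:ℝ≥0∞)^n := ENNReal.tsum_le_tsum hstep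
    _ = (1 - 2⁻¹)⁻¹ := ENNReal.tsum_geometric _
    _ ≤ ENNReal.ofReal 2 := by
        rw [ENNReal.one_sub_inv_two, inv_inv]
        simp [ENNReal.ofReal_ofNat]
end

section
/- Let K be a bounded subset of L¹(0,1). Then the following are equivalent: (a) there exists an Orlicz function G with G(t)/t → ∞ as t → ∞ such that sup{∫_0^1 G(|f|) ds : f ∈ K} < ∞; (b) there exists a positive g ∈ L¹(0,1) such that |f| ≺≺ g for all f ∈ K. -/
open MeasureTheory Set Filter Topology

open scoped ENNReal in
section
open ENNReal

namespace Stmt7Aux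

/-- Distribution function of `|h|` on `(0,1)`. -/
noncomputable def dd (h : ℝ → ℝ) (u : ℝ) : ℝ≥0∞ :=
  volume {x | x ∈ Ioo (0:ℝ) 1 ∧ u < |h x|}

lemma dd_eq (h : ℝ → ℝ) (u : ℝ) :
    dd h u = (volume.restrict (Ioo (0:ℝ) 1)) {x | u < |h x|} := by
  rw [Measure.restrict_apply' measurableSet_Ioo]
  have : {x | u < |h x|} ∩ Ioo (0:ℝ) 1 = {x | x ∈ Ioo (0:ℝ) 1 ∧ u < |h x|} := by
    ext x
    simp only [mem_setOf_eq, mem_inter_iff]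
    tauto
  rw [this]
  rfl

lemma dd_antitone (h : ℝ → ℝ) : Antitone (dd h) := by
  intro u v huv
  exact measure_mono (fun x hx => ⟨hx.1, lt_of_le_of_lt huv hx.2⟩)

lemma dd_le_one (h : ℝ → ℝ) (u : ℝ) : dd h u ≤ 1 := by
  calc dd h u ≤ volume (Ioo (0:ℝ) 1) := measure_mono (fun x hx => hx.1)
  _ = 1 := by simp

lemma dd_ne_top (h : ℝ → ℝ) (u : ℝ) : dd h u ≠ ⊤ :=
  ne_top_of_le_ne_top ENNReal.one_ne_top (dd_le_one h u)

lemma mu01_def (h : ℝ → ℝ) (t : ℝ) :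
    mu01 h t = sInf {s : ℝ | 0 ≤ s ∧ dd h s ≤ ENNReal.ofReal t} := rfl

lemma mu01_nonneg (h : ℝ → ℝ) (t : ℝ) : 0 ≤ mu01 h t :=
  Real.sInf_nonneg (fun _ hx => hx.1)

/-- right continuity of `dd` via increasing unions -/
lemma dd_iSup (h : ℝ → ℝ) (u : ℝ) :
    dd h u = ⨆ n : ℕ, dd h (u + 1/(n+1)) := by
  have hset : {x | x ∈ Ioo (0:ℝ) 1 ∧ u < |h x|} =
      ⋃ n : ℕ, {x | x ∈ Ioo (0:ℝ) 1 ∧ u + 1/(n+1) < |h x|} := by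
    ext x
    simp only [mem_setOf_eq, mem_iUnion]
    constructor
    · rintro ⟨hx, hu⟩
      obtain ⟨n, hn⟩ := exists_nat_one_div_lt (sub_pos.mpr hu)
      exact ⟨n, hx, by linarith [hn]⟩
    · rintro ⟨n, hx, hu⟩
      have : (0:ℝ) < 1/(n+1) := by positivity
      exact ⟨hx, by linarith⟩
  have hdir : Directed (· ⊆ ·) (fun n : ℕ => {x | x ∈ Ioo (0:ℝ) 1 ∧ u + 1/(n+1) < |h x|}) := by
    intro m n
    refine ⟨max m n, fun x hx => ⟨hx.1, lt_of_le_of_lt ?_ hx.2⟩, fun x hx => ⟨hx.1, lt_of_le_of_lt ?_ hx.2⟩⟩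
    · gcongr
      exact_mod_cast le_max_left m n
    · gcongr
      exact_mod_cast le_max_right m n
  rw [dd, hset, hdir.measure_iUnion]
  rfl

end Stmt7Aux

namespace Stmt7Aux

lemma dd_measurableSet {h : ℝ → ℝ} (hm : Measurable h) (u : ℝ) :
    MeasurableSet {x | x ∈ Ioo (0:ℝ) 1 ∧ u < |h x|} := by
  have : {x | x ∈ Ioo (0:ℝ) 1 ∧ u < |h x|} = Ioo (0:ℝ) 1 ∩ {x | u < |h x|} := by
    ext x; simp only [mem_setOf_eq, mem_inter_iff]
  rw [this]
  exact measurableSet_Ioo.inter (measurableSet_lt measurable_const hm.abs)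

/-- The defining set for `mu01 h s` is nonempty when `s > 0` and `h` is measurable. -/
lemma dd_set_nonempty {h : ℝ → ℝ} (hm : Measurable h) {s : ℝ} (hs : 0 < s) :
    {u : ℝ | 0 ≤ u ∧ dd h u ≤ ENNReal.ofReal s}.Nonempty := by
  have hI : ⋂ n : ℕ, {x | x ∈ Ioo (0:ℝ) 1 ∧ (n:ℝ) < |h x|} = ∅ := by
    ext x
    simp only [mem_iInter, mem_setOf_eq, mem_empty_iff_false, iff_false, not_forall]
    obtain ⟨n, hn⟩ := exists_nat_gt |h x|
    exact ⟨n, fun hc => absurd hc.2 (not_lt.mpr hn.le)⟩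
  have htend : Tendsto (fun n : ℕ => dd h n) atTop (𝓝 0) := by
    have := tendsto_measure_iInter_atTop (μ := volume)
      (fun n : ℕ => (dd_measurableSet hm (n:ℝ)).nullMeasurableSet)
      (fun m n hmn => fun x hx => ⟨hx.1, lt_of_le_of_lt (by exact_mod_cast hmn) hx.2⟩)
      ⟨0, by simpa [dd] using dd_ne_top h 0⟩
    rw [hI] at this
    simpa [dd, Function.comp_def] using this
  have hpos : (0:ℝ≥0∞) < ENNReal.ofReal s := by simp [hs]
  obtain ⟨n, hn⟩ := (htend.eventually_le_const hpos).exists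
  exact ⟨n, Nat.cast_nonneg n, hn⟩

/-- Key characterization: `mu01 h s ≤ u ↔ dd h u ≤ ofReal s`. -/
lemma mu01_le_iff {h : ℝ → ℝ} (hm : Measurable h) {s u : ℝ} (hs : 0 < s) (hu : 0 ≤ u) :
    mu01 h s ≤ u ↔ dd h u ≤ ENNReal.ofReal s := by
  constructor
  · intro hle
    have key : ∀ n : ℕ, dd h (u + 1/(n+1)) ≤ ENNReal.ofReal s := by
      intro n
      have h1 : (0:ℝ) < 1/((n:ℝ)+1) := by positivity
      have hlt : mu01 h s < u + 1/(n+1) := lt_of_le_of_lt hle (by linarith)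
      rw [mu01_def] at hlt
      obtain ⟨v, hv, hvlt⟩ := (csInf_lt_iff ⟨0, fun x hx => hx.1⟩ (dd_set_nonempty hm hs)).mp hlt
      exact le_trans (dd_antitone h hvlt.le) hv.2
    rw [dd_iSup h u]
    exact iSup_le key
  · intro hdd
    rw [mu01_def]
    exact csInf_le ⟨0, fun x hx => hx.1⟩ ⟨hu, hdd⟩

lemma mu01_antitoneOn {h : ℝ → ℝ} (hm : Measurable h) :
    AntitoneOn (mu01 h) (Ioi (0:ℝ)) := by
  intro s hs s' hs' hss
  rw [mu01_def, mu01_def]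
  refine csInf_le_csInf ⟨0, fun x hx => hx.1⟩ (dd_set_nonempty hm hs) ?_
  intro u hu
  exact ⟨hu.1, le_trans hu.2 (ENNReal.ofReal_le_ofReal hss)⟩

/-- a.e. congruence -/
lemma dd_congr {f f' : ℝ → ℝ} (hae : f =ᵐ[volume.restrict (Ioo (0:ℝ) 1)] f') :
    dd f = dd f' := by
  funext u
  have hN : volume ({x | f x ≠ f' x} ∩ Ioo (0:ℝ) 1) = 0 := by
    have := hae
    rw [Filter.EventuallyEq, ae_iff, Measure.restrict_apply' measurableSet_Ioo] at this
    exact this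
  have key : ∀ (a b : ℝ → ℝ), volume ({x | a x ≠ b x} ∩ Ioo (0:ℝ) 1) = 0 →
      dd a u ≤ dd b u := by
    intro a b hab
    have hsub : {x | x ∈ Ioo (0:ℝ) 1 ∧ u < |a x|} ⊆
        {x | x ∈ Ioo (0:ℝ) 1 ∧ u < |b x|} ∪ ({x | a x ≠ b x} ∩ Ioo (0:ℝ) 1) := by
      intro x hx
      by_cases hfx : a x = b x
      · exact Or.inl ⟨hx.1, hfx ▸ hx.2⟩
      · exact Or.inr ⟨hfx, hx.1⟩
    calc dd a u ≤ _ := measure_mono hsub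
    _ ≤ dd b u + volume ({x | a x ≠ b x} ∩ Ioo (0:ℝ) 1) := measure_union_le _ _
    _ = dd b u := by rw [hab, add_zero]
  have hN' : volume ({x | f' x ≠ f x} ∩ Ioo (0:ℝ) 1) = 0 := by
    have : {x | f' x ≠ f x} = {x | f x ≠ f' x} := by ext x; exact ne_comm
    rw [this]; exact hN
  exact le_antisymm (key f f' hN) (key f' f hN')

lemma mu01_congr {f f' : ℝ → ℝ} (hae : f =ᵐ[volume.restrict (Ioo (0:ℝ) 1)] f') :
    mu01 f = mu01 f' := by
  funext t
  rw [mu01_def, mu01_def, dd_congr hae]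

end Stmt7Aux

namespace Stmt7Aux

lemma I_layercake {h : ℝ → ℝ} (hm : Measurable h) {t : ℝ} (ht : 0 < t) :
    ∫⁻ s in Ioo (0:ℝ) t, ENNReal.ofReal (mu01 h s) =
      ∫⁻ u in Ioi (0:ℝ), min (ENNReal.ofReal t) (dd h u) := by
  have hmeas : AEMeasurable (mu01 h) (volume.restrict (Ioo (0:ℝ) t)) :=
    aemeasurable_restrict_of_antitoneOn measurableSet_Ioo
      ((mu01_antitoneOn hm).mono (fun s hs => hs.1))
  rw [MeasureTheory.lintegral_eq_lintegral_meas_lt _ (ae_of_all _ (fun s => mu01_nonneg h s)) hmeas]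
  refine setLIntegral_congr_fun measurableSet_Ioi (fun u hu => ?_)
  rw [Measure.restrict_apply' measurableSet_Ioo]
  have hu0 : (0:ℝ) < u := hu
  have hset : {s | u < mu01 h s} ∩ Ioo (0:ℝ) t = Ioo 0 (min t ((dd h u).toReal)) := by
    ext s
    simp only [mem_inter_iff, mem_setOf_eq, mem_Ioo, lt_min_iff]
    constructor
    · rintro ⟨hmu, hs0, hst⟩
      refine ⟨hs0, hst, ?_⟩
      have hnot : ¬ (dd h u ≤ ENNReal.ofReal s) := by
        intro hc
        exact absurd ((mu01_le_iff hm hs0 hu0.le).mpr hc) (not_le.mpr hmu)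
      rw [← ENNReal.ofReal_lt_iff_lt_toReal hs0.le (dd_ne_top h u)]
      exact not_le.mp hnot
    · rintro ⟨hs0, hst, hsd⟩
      refine ⟨?_, hs0, hst⟩
      have : ENNReal.ofReal s < dd h u :=
        (ENNReal.ofReal_lt_iff_lt_toReal hs0.le (dd_ne_top h u)).mpr hsd
      by_contra hc
      exact absurd ((mu01_le_iff hm hs0 hu0.le).mp (not_lt.mp hc)) (not_le.mpr this)
  rw [hset, Real.volume_Ioo, sub_zero]
  rcases le_total t ((dd h u).toReal) with hle | hle
  · rw [min_eq_left hle, min_eq_left]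
    calc ENNReal.ofReal t ≤ ENNReal.ofReal ((dd h u).toReal) := ENNReal.ofReal_le_ofReal hle
    _ = dd h u := ENNReal.ofReal_toReal (dd_ne_top h u)
  · rw [min_eq_right hle, min_eq_right, ENNReal.ofReal_toReal (dd_ne_top h u)]
    calc dd h u = ENNReal.ofReal ((dd h u).toReal) := (ENNReal.ofReal_toReal (dd_ne_top h u)).symm
    _ ≤ ENNReal.ofReal t := ENNReal.ofReal_le_ofReal hle

lemma layercake_abs {h : ℝ → ℝ} (hm : Measurable h) :
    ∫⁻ u in Ioi (0:ℝ), dd h u = ∫⁻ x in Ioo (0:ℝ) 1, ENNReal.ofReal |h x| := by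
  rw [MeasureTheory.lintegral_eq_lintegral_meas_lt _ (ae_of_all _ (fun x => abs_nonneg (h x)))
    (hm.abs.aemeasurable)]
  exact lintegral_congr (fun u => dd_eq h u)

lemma I_le_int_abs {h : ℝ → ℝ} (hm : Measurable h) {t : ℝ} (ht : 0 < t) :
    ∫⁻ s in Ioo (0:ℝ) t, ENNReal.ofReal (mu01 h s) ≤
      ∫⁻ x in Ioo (0:ℝ) 1, ENNReal.ofReal |h x| := by
  rw [I_layercake hm ht, ← layercake_abs hm]
  exact lintegral_mono (fun u => min_le_right _ _)

/-- Tail function: `|f|` truncated below at level `M`. -/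
noncomputable def FF (f : ℝ → ℝ) (M : ℝ) (x : ℝ) : ℝ := if M < |f x| then |f x| else 0

lemma FF_nonneg (f : ℝ → ℝ) (M x : ℝ) : 0 ≤ FF f M x := by
  unfold FF; split <;> simp [abs_nonneg]

lemma FF_measurable {f : ℝ → ℝ} (hm : Measurable f) (M : ℝ) : Measurable (FF f M) := by
  unfold FF
  exact Measurable.ite (measurableSet_lt measurable_const hm.abs) hm.abs measurable_const

lemma tail_layer {f : ℝ → ℝ} (hm : Measurable f) {M : ℝ} (hM : 0 ≤ M) :
    ∫⁻ x in Ioo (0:ℝ) 1, ENNReal.ofReal (FF f M x) = ∫⁻ u in Ioi (0:ℝ), dd f (max M u) := by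
  rw [MeasureTheory.lintegral_eq_lintegral_meas_lt _ (ae_of_all _ (fun x => FF_nonneg f M x))
    (FF_measurable hm M).aemeasurable]
  refine setLIntegral_congr_fun measurableSet_Ioi (fun u hu => ?_)
  have hu0 : (0:ℝ) < u := hu
  rw [dd_eq]
  congr 1
  ext x
  simp only [mem_setOf_eq, FF, max_lt_iff]
  split
  · next hfx => simp [hfx]
  · next hfx =>
    simp only [not_lt] at hfx
    constructor
    · intro hc; linarith
    · rintro ⟨hc, _⟩; linarith

end Stmt7Aux

namespace Stmt7Aux

lemma tail_eq_I {f : ℝ → ℝ} (hm : Measurable f) {M : ℝ} (hM : 0 ≤ M) (hd : dd f M ≠ 0) :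
    ∫⁻ x in Ioo (0:ℝ) 1, ENNReal.ofReal (FF f M x) =
      ∫⁻ s in Ioo (0:ℝ) ((dd f M).toReal), ENNReal.ofReal (mu01 f s) := by
  have htpos : 0 < (dd f M).toReal := ENNReal.toReal_pos hd (dd_ne_top f M)
  rw [I_layercake hm htpos, tail_layer hm hM]
  refine setLIntegral_congr_fun measurableSet_Ioi (fun u _ => ?_)
  rw [ENNReal.ofReal_toReal (dd_ne_top f M)]
  rcases le_total u M with h | h
  · rw [max_eq_left h, min_eq_left (dd_antitone f h)]
  · rw [max_eq_right h, min_eq_right (dd_antitone f h)]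

lemma tail_zero {f : ℝ → ℝ} {M : ℝ} (hd : dd f M = 0) :
    ∫⁻ x in Ioo (0:ℝ) 1, ENNReal.ofReal (FF f M x) = 0 := by
  have hae : ∀ᵐ x ∂(volume.restrict (Ioo (0:ℝ) 1)), ENNReal.ofReal (FF f M x) = 0 := by
    rw [ae_iff, Measure.restrict_apply' measurableSet_Ioo]
    refine measure_mono_null ?_ hd
    rintro x ⟨hx1, hx2⟩
    refine ⟨hx2, ?_⟩
    by_contra hc
    apply hx1
    simp only [mem_setOf_eq, not_not, FF, if_neg hc]
    simp
  calc ∫⁻ x in Ioo (0:ℝ) 1, ENNReal.ofReal (FF f M x)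
      = ∫⁻ _ in Ioo (0:ℝ) 1, 0 := lintegral_congr_ae hae
  _ = 0 := lintegral_zero

lemma chebyshev {f : ℝ → ℝ} (hm : Measurable f) (M : ℝ) :
    ENNReal.ofReal M * dd f M ≤ ∫⁻ x in Ioo (0:ℝ) 1, ENNReal.ofReal |f x| := by
  rw [dd_eq]
  calc ENNReal.ofReal M * (volume.restrict (Ioo (0:ℝ) 1)) {x | M < |f x|}
      ≤ ENNReal.ofReal M *
        (volume.restrict (Ioo (0:ℝ) 1)) {x | ENNReal.ofReal M ≤ ENNReal.ofReal (|f x|)} := by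
        gcongr
        intro hx
        exact ENNReal.ofReal_le_ofReal (le_of_lt hx)
  _ ≤ _ := mul_meas_ge_le_lintegral₀ (hm.abs.aemeasurable.ennreal_ofReal) _

lemma I_mono (h : ℝ → ℝ) {t t' : ℝ} (htt : t ≤ t') :
    ∫⁻ s in Ioo (0:ℝ) t, ENNReal.ofReal (mu01 h s) ≤
      ∫⁻ s in Ioo (0:ℝ) t', ENNReal.ofReal (mu01 h s) :=
  lintegral_mono' (Measure.restrict_mono (Ioo_subset_Ioo le_rfl htt) le_rfl) le_rfl

lemma mu01_le_add {f : ℝ → ℝ} {M s : ℝ} (hM : 0 ≤ M) (_hs : 0 < s)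
    (hne : {u : ℝ | 0 ≤ u ∧ dd (FF f M) u ≤ ENNReal.ofReal s}.Nonempty) :
    mu01 f s ≤ M + mu01 (FF f M) s := by
  rw [mu01_def (FF f M), ← sub_le_iff_le_add']
  refine le_csInf hne (fun v hv => ?_)
  rw [sub_le_iff_le_add']
  rw [mu01_def]
  refine csInf_le ⟨0, fun x hx => hx.1⟩ ⟨by linarith [hv.1], ?_⟩
  refine le_trans (measure_mono ?_) hv.2
  intro x hx
  refine ⟨hx.1, ?_⟩
  have h1 : M + v < |f x| := hx.2
  have h2 : M < |f x| := by linarith [hv.1]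
  simp only [FF, if_pos h2, abs_abs]
  linarith

lemma I_le_tail {f : ℝ → ℝ} (hm : Measurable f) {M t : ℝ} (hM : 0 ≤ M) (ht : 0 < t) :
    ∫⁻ s in Ioo (0:ℝ) t, ENNReal.ofReal (mu01 f s) ≤
      ENNReal.ofReal (M * t) + ∫⁻ x in Ioo (0:ℝ) 1, ENNReal.ofReal (FF f M x) := by
  have hFm := FF_measurable hm M
  have step : ∀ᵐ s ∂(volume.restrict (Ioo (0:ℝ) t)), ENNReal.ofReal (mu01 f s) ≤
      ENNReal.ofReal M + ENNReal.ofReal (mu01 (FF f M) s) := by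
    rw [ae_restrict_iff' measurableSet_Ioo]
    refine ae_of_all _ (fun s hs => ?_)
    calc ENNReal.ofReal (mu01 f s) ≤ ENNReal.ofReal (M + mu01 (FF f M) s) :=
      ENNReal.ofReal_le_ofReal (mu01_le_add hM hs.1 (dd_set_nonempty hFm hs.1))
    _ = _ := ENNReal.ofReal_add hM (mu01_nonneg _ _)
  calc ∫⁻ s in Ioo (0:ℝ) t, ENNReal.ofReal (mu01 f s)
      ≤ ∫⁻ s in Ioo (0:ℝ) t, (ENNReal.ofReal M + ENNReal.ofReal (mu01 (FF f M) s)) :=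
        lintegral_mono_ae step
  _ = ENNReal.ofReal M * (volume (Ioo (0:ℝ) t)) +
        ∫⁻ s in Ioo (0:ℝ) t, ENNReal.ofReal (mu01 (FF f M) s) := by
        rw [lintegral_add_left measurable_const, setLIntegral_const]
  _ ≤ ENNReal.ofReal (M * t) + ∫⁻ x in Ioo (0:ℝ) 1, ENNReal.ofReal (FF f M x) := by
        refine add_le_add (le_of_eq ?_) ?_
        · rw [Real.volume_Ioo, sub_zero, ← ENNReal.ofReal_mul hM]
        · calc ∫⁻ s in Ioo (0:ℝ) t, ENNReal.ofReal (mu01 (FF f M) s)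
              ≤ ∫⁻ x in Ioo (0:ℝ) 1, ENNReal.ofReal (|FF f M x|) := I_le_int_abs hFm ht
          _ = _ := lintegral_congr (fun x => by rw [abs_of_nonneg (FF_nonneg f M x)])

end Stmt7Aux

namespace Stmt7Aux

lemma exists_level {K : Set (ℝ → ℝ)}
    (hK : ∀ f ∈ K, IntegrableOn f (Ioo 0 1) volume)
    {C₀ : ℝ} (hC₀ : 0 ≤ C₀)
    (hint : ∀ f ∈ K, ∫⁻ x in Ioo (0:ℝ) 1, ENNReal.ofReal |f x| ≤ ENNReal.ofReal C₀)
    {g : ℝ → ℝ} (hgi : IntegrableOn g (Ioo 0 1) volume)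
    (hsub : ∀ f ∈ K, Submaj01 f g)
    {ε : ℝ≥0∞} (hε : ε ≠ 0) :
    ∃ M : ℝ, 0 < M ∧ ∀ f ∈ K, ∫⁻ x in Ioo (0:ℝ) 1, ENNReal.ofReal (FF f M x) ≤ ε := by
  -- measurable representative of g
  set g' : ℝ → ℝ := hgi.aestronglyMeasurable.mk g with hg'def
  have hg'm : Measurable g' := hgi.aestronglyMeasurable.stronglyMeasurable_mk.measurable
  have hgae : g =ᵐ[volume.restrict (Ioo (0:ℝ) 1)] g' := hgi.aestronglyMeasurable.ae_eq_mk
  have hmu_g : mu01 g = mu01 g' := mu01_congr hgae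
  -- finiteness of ∫ mu01 g
  have hJg : ∫⁻ s in Ioo (0:ℝ) 1, ENNReal.ofReal (mu01 g s) ≠ ⊤ := by
    rw [hmu_g]
    refine ne_top_of_le_ne_top ?_ (I_le_int_abs hg'm one_pos)
    have : ∫⁻ x in Ioo (0:ℝ) 1, ENNReal.ofReal |g' x| =
        ∫⁻ x in Ioo (0:ℝ) 1, ENNReal.ofReal |g x| :=
      lintegral_congr_ae (hgae.mono (fun x hx => by simp only [hx]))
    rw [this]
    have habs : IntegrableOn (fun x => |g x|) (Ioo (0:ℝ) 1) volume := hgi.abs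
    rw [← MeasureTheory.ofReal_integral_eq_lintegral_ofReal habs
      (ae_of_all _ (fun x => abs_nonneg (g x)))]
    exact ENNReal.ofReal_ne_top
  -- absolute continuity of ∫ mu01 g
  obtain ⟨δ₀, hδ₀pos, hδ₀⟩ := exists_pos_setLIntegral_lt_of_measure_lt hJg hε
  set δ : ℝ≥0∞ := min δ₀ 1 with hδdef
  have hδpos : 0 < δ := lt_min hδ₀pos zero_lt_one
  have hδtop : δ ≠ ⊤ := ne_top_of_le_ne_top ENNReal.one_ne_top (min_le_right _ _)
  have hδ : ∀ s : Set ℝ, (volume.restrict (Ioo (0:ℝ) 1)) s < δ →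
      ∫⁻ x in s, ENNReal.ofReal (mu01 g x) ∂(volume.restrict (Ioo (0:ℝ) 1)) < ε :=
    fun s hs => hδ₀ s (lt_of_lt_of_le hs (min_le_left _ _))
  -- choose M
  obtain ⟨n, hn⟩ := ENNReal.exists_nat_gt (ENNReal.div_lt_top ENNReal.ofReal_ne_top hδpos.ne').ne
  set M : ℝ := max 1 n with hMdef
  have hM1 : (1:ℝ) ≤ M := le_max_left _ _
  have hMpos : (0:ℝ) < M := lt_of_lt_of_le one_pos hM1
  have hMlt : ENNReal.ofReal C₀ / δ < ENNReal.ofReal M := by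
    refine lt_of_lt_of_le hn ?_
    rw [show ((n:ℝ≥0∞)) = ENNReal.ofReal n by simp]
    exact ENNReal.ofReal_le_ofReal (le_max_right _ _)
  have hCM : ENNReal.ofReal C₀ < ENNReal.ofReal M * δ := by
    rw [← ENNReal.div_lt_iff (Or.inl hδpos.ne') (Or.inl hδtop)]
    exact hMlt
  refine ⟨M, hMpos, fun f hf => ?_⟩
  -- measurable representative of f
  set f' : ℝ → ℝ := (hK f hf).aestronglyMeasurable.mk f with hf'def
  have hf'm : Measurable f' := (hK f hf).aestronglyMeasurable.stronglyMeasurable_mk.measurable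
  have hfae : f =ᵐ[volume.restrict (Ioo (0:ℝ) 1)] f' := (hK f hf).aestronglyMeasurable.ae_eq_mk
  have hmu_f : mu01 f = mu01 f' := mu01_congr hfae
  have htail_eq : ∫⁻ x in Ioo (0:ℝ) 1, ENNReal.ofReal (FF f M x) =
      ∫⁻ x in Ioo (0:ℝ) 1, ENNReal.ofReal (FF f' M x) := by
    refine lintegral_congr_ae (hfae.mono (fun x hx => ?_))
    simp only [FF, hx]
  rw [htail_eq]
  rcases eq_or_ne (dd f' M) 0 with hdd | hdd
  · rw [tail_zero hdd]
    exact zero_le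
  · -- t₀ = toReal (dd f' M) ∈ (0,1], and small
    set t₀ : ℝ := (dd f' M).toReal with ht₀def
    have ht₀pos : 0 < t₀ := ENNReal.toReal_pos hdd (dd_ne_top f' M)
    have ht₀le1 : t₀ ≤ 1 := by
      rw [ht₀def, ← ENNReal.toReal_one]
      exact ENNReal.toReal_mono ENNReal.one_ne_top (dd_le_one f' M)
    have hofReal_t₀ : ENNReal.ofReal t₀ = dd f' M := ENNReal.ofReal_toReal (dd_ne_top f' M)
    -- Chebyshev: dd f' M < δ
    have hcheb : ENNReal.ofReal M * dd f' M ≤ ENNReal.ofReal C₀ := by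
      refine le_trans (chebyshev hf'm M) ?_
      have habs : ∫⁻ x in Ioo (0:ℝ) 1, ENNReal.ofReal |f' x| =
          ∫⁻ x in Ioo (0:ℝ) 1, ENNReal.ofReal |f x| :=
        (lintegral_congr_ae (hfae.mono (fun x hx => by simp only [hx]))).symm
      rw [habs]
      exact hint f hf
    have hsmall : dd f' M < δ := by
      by_contra hc
      push_neg at hc
      have : ENNReal.ofReal M * δ ≤ ENNReal.ofReal C₀ :=
        le_trans (mul_le_mul_right hc _) hcheb
      exact absurd (lt_of_lt_of_le hCM this) (lt_irrefl _)
    -- conclude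
    rw [tail_eq_I hf'm hMpos.le hdd, ← hmu_f]
    refine le_trans (hsub f hf t₀ ⟨ht₀pos, ht₀le1⟩) ?_
    have hrestr : volume.restrict (Ioo (0:ℝ) t₀) =
        (volume.restrict (Ioo (0:ℝ) 1)).restrict (Ioo (0:ℝ) t₀) := by
      rw [Measure.restrict_restrict measurableSet_Ioo,
        inter_eq_left.mpr (Ioo_subset_Ioo le_rfl ht₀le1)]
    have hmeas_small : (volume.restrict (Ioo (0:ℝ) 1)) (Ioo (0:ℝ) t₀) < δ := by
      rw [Measure.restrict_apply' measurableSet_Ioo,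
        inter_eq_left.mpr (Ioo_subset_Ioo le_rfl ht₀le1), Real.volume_Ioo, sub_zero,
        hofReal_t₀]
      exact hsmall
    calc ∫⁻ s in Ioo (0:ℝ) t₀, ENNReal.ofReal (mu01 g s)
        = ∫⁻ s in Ioo (0:ℝ) t₀, ENNReal.ofReal (mu01 g s) ∂(volume.restrict (Ioo (0:ℝ) 1)) := by
          rw [← hrestr]
    _ ≤ ε := (hδ _ hmeas_small).le

end Stmt7Aux

namespace Stmt7Aux

lemma direction_b_to_a {K : Set (ℝ → ℝ)}
    (hK : ∀ f ∈ K, IntegrableOn f (Ioo 0 1) volume)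
    {C₀ : ℝ} (hC₀ : 0 ≤ C₀)
    (hint : ∀ f ∈ K, ∫⁻ x in Ioo (0:ℝ) 1, ENNReal.ofReal |f x| ≤ ENNReal.ofReal C₀)
    {g : ℝ → ℝ} (hgi : IntegrableOn g (Ioo 0 1) volume)
    (hsub : ∀ f ∈ K, Submaj01 f g) :
    ∃ G : ℝ → ℝ, IsOrliczFunction G ∧ Tendsto (fun t => G t / t) atTop atTop ∧
      ∃ C : ℝ, ∀ f ∈ K,
        ∫⁻ s in Ioo (0:ℝ) 1, ENNReal.ofReal (G |f s|) ≤ ENNReal.ofReal C := by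
  have hlev : ∀ n : ℕ, ∃ M : ℝ, 0 < M ∧ ∀ f ∈ K,
      ∫⁻ x in Ioo (0:ℝ) 1, ENNReal.ofReal (FF f M x) ≤ (2⁻¹ : ℝ≥0∞)^n := by
    intro n
    refine exists_level hK hC₀ hint hgi hsub (pow_ne_zero n ?_)
    simp
  choose M' hM'pos hM' using hlev
  -- monotone sequence of levels
  set R : ℕ → ℝ := fun n => Nat.rec (max (M' 0) 1) (fun k Rk => max (Rk + 1) (M' (k+1))) n
    with hRdef
  have hRs : ∀ n, R (n+1) = max (R n + 1) (M' (n+1)) := fun n => rfl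
  have hRM : ∀ n, M' n ≤ R n := by
    intro n
    cases n with
    | zero => exact le_max_left _ _
    | succ k => rw [hRs k]; exact le_max_right _ _
  have hR1 : ∀ n, 1 ≤ R n := by
    intro n
    induction n with
    | zero => exact le_max_right _ _
    | succ k ih => rw [hRs k]; exact le_trans (by linarith) (le_max_left _ _)
  have hRstep : ∀ n, R n + 1 ≤ R (n+1) := fun n => by rw [hRs n]; exact le_max_left _ _
  have hRmono : Monotone R := monotone_nat_of_le_succ (fun n => by linarith [hRstep n])
  have hRn : ∀ n : ℕ, (n:ℝ) + 1 ≤ R n := by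
    intro n
    induction n with
    | zero => simpa using hR1 0
    | succ k ih => push_cast; linarith [hRstep k]
  -- tails at levels R n
  have hMtail : ∀ (n : ℕ), ∀ f ∈ K,
      ∫⁻ x in Ioo (0:ℝ) 1, ENNReal.ofReal (FF f (R n) x) ≤ (2⁻¹ : ℝ≥0∞)^n := by
    intro n f hf
    refine le_trans (lintegral_mono (fun x => ENNReal.ofReal_le_ofReal ?_)) (hM' n f hf)
    unfold FF
    split
    · next h =>
      rw [if_pos (lt_of_le_of_lt (hRM n) h)]
    · next h =>
      split
      · next h2 => exact abs_nonneg _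
      · exact le_rfl
  -- the Orlicz function
  set G : ℝ → ℝ := fun t => ∑' n : ℕ, max (t - R n) 0 with hGdef
  have hsum : ∀ t : ℝ, Summable (fun n : ℕ => max (t - R n) 0) := by
    intro t
    refine summable_of_ne_finset_zero (s := Finset.range ⌈t⌉₊) (fun n hn => ?_)
    rw [Finset.mem_range, not_lt] at hn
    have h1 : t ≤ (⌈t⌉₊ : ℝ) := Nat.le_ceil t
    have h2 : ((⌈t⌉₊ : ℕ):ℝ) ≤ n := Nat.cast_le.mpr hn
    have := hRn n
    exact max_eq_right (by linarith)
  have hGnn : ∀ t : ℝ, 0 ≤ G t := fun t => tsum_nonneg (fun n => le_max_right _ _)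
  have hG0 : G 0 = 0 := by
    have : ∀ n : ℕ, max ((0:ℝ) - R n) 0 = 0 := fun n => max_eq_right (by linarith [hR1 n])
    simp only [hGdef, this, tsum_zero]
  have hGeq0 : ∀ t : ℝ, t < 1 → G t = 0 := by
    intro t ht
    have : ∀ n : ℕ, max (t - R n) 0 = 0 := fun n => max_eq_right (by linarith [hR1 n])
    simp only [hGdef, this, tsum_zero]
  have hconv : ConvexOn ℝ (Ici 0) G := by
    refine ⟨convex_Ici 0, fun x _ y _ a b ha hb hab => ?_⟩
    simp only [smul_eq_mul]
    calc G (a*x + b*y) = ∑' n : ℕ, max (a*x + b*y - R n) 0 := rfl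
    _ ≤ ∑' n : ℕ, (a * max (x - R n) 0 + b * max (y - R n) 0) := by
        refine Summable.tsum_le_tsum (fun n => ?_) (hsum _)
          (((hsum x).mul_left a).add ((hsum y).mul_left b))
        refine max_le ?_ (by positivity)
        have h1 : a * (x - R n) ≤ a * max (x - R n) 0 :=
          mul_le_mul_of_nonneg_left (le_max_left _ _) ha
        have h2 : b * (y - R n) ≤ b * max (y - R n) 0 :=
          mul_le_mul_of_nonneg_left (le_max_left _ _) hb
        have heq : a*x + b*y - R n = a * (x - R n) + b * (y - R n) := by
          linear_combination (R n) * hab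
        linarith
    _ = a * G x + b * G y := by
        rw [Summable.tsum_add ((hsum x).mul_left a) ((hsum y).mul_left b),
          tsum_mul_left, tsum_mul_left]
  have hGcont : ContinuousWithinAt G (Ici (0:ℝ)) 0 := by
    have hev : G =ᶠ[𝓝[Ici (0:ℝ)] 0] (fun _ => (0:ℝ)) := by
      filter_upwards [mem_nhdsWithin_of_mem_nhds (Iio_mem_nhds one_pos)] with t ht
      exact hGeq0 t ht
    exact (continuousWithinAt_const (b := (0:ℝ))).congr_of_eventuallyEq hev (hG0)
  have hGne : G (R 0 + 1) ≠ 0 := by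
    have h1 : (1:ℝ) ≤ G (R 0 + 1) := by
      have := Summable.le_tsum (hsum (R 0 + 1)) 0 (fun n _ => le_max_right _ _)
      simpa using this
    linarith
  have htend : Tendsto (fun t => G t / t) atTop atTop := by
    rw [tendsto_atTop]
    intro b
    set N : ℕ := 2 * (⌈b⌉₊ + 1) with hN
    filter_upwards [eventually_ge_atTop (max 1 (2 * R N))] with t ht
    have ht1 : (1:ℝ) ≤ t := le_trans (le_max_left _ _) ht
    have ht2 : 2 * R N ≤ t := le_trans (le_max_right _ _) ht
    have htpos : (0:ℝ) < t := lt_of_lt_of_le one_pos ht1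
    have hlow : (N:ℝ) * (t/2) ≤ G t := by
      calc (N:ℝ) * (t/2) = ∑ _n ∈ Finset.range N, (t/2) := by
            rw [Finset.sum_const, Finset.card_range, nsmul_eq_mul]
      _ ≤ ∑ n ∈ Finset.range N, max (t - R n) 0 := by
            refine Finset.sum_le_sum (fun n hn => ?_)
            have hRN : R n ≤ R N := hRmono (Finset.mem_range.mp hn).le
            have hRNpos : 1 ≤ R N := hR1 N
            refine le_trans (by linarith : t/2 ≤ t - R n) (le_max_left _ _)
      _ ≤ G t := Summable.sum_le_tsum _ (fun n _ => le_max_right _ _) (hsum t)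
    have hbN : b ≤ (N:ℝ)/2 := by
      have h1 : (b:ℝ) ≤ ⌈b⌉₊ := Nat.le_ceil b
      have h2 : (N:ℝ) = 2 * ((⌈b⌉₊:ℝ) + 1) := by rw [hN]; push_cast; ring
      linarith
    calc b ≤ (N:ℝ)/2 := hbN
    _ ≤ G t / t := by
        rw [le_div_iff₀ htpos]
        calc (N:ℝ)/2*t = N*(t/2) := by ring
        _ ≤ G t := hlow
  refine ⟨G, ⟨hconv, fun t _ => hGnn t, hG0, hGcont, ⟨R 0 + 1, by linarith [hR1 0], hGne⟩⟩,
    htend, 2, fun f hf => ?_⟩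
  have hfm : AEMeasurable f (volume.restrict (Ioo (0:ℝ) 1)) := (hK f hf).aemeasurable
  calc ∫⁻ s in Ioo (0:ℝ) 1, ENNReal.ofReal (G |f s|)
      = ∫⁻ s in Ioo (0:ℝ) 1, ∑' n : ℕ, ENNReal.ofReal (max (|f s| - R n) 0) := by
        refine lintegral_congr (fun s => ?_)
        exact ENNReal.ofReal_tsum_of_nonneg (fun n => le_max_right _ _) (hsum _)
  _ = ∑' n : ℕ, ∫⁻ s in Ioo (0:ℝ) 1, ENNReal.ofReal (max (|f s| - R n) 0) := by
        refine lintegral_tsum (fun n => ?_)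
        exact ((((continuous_abs.measurable.comp_aemeasurable hfm).sub aemeasurable_const).max aemeasurable_const)).ennreal_ofReal
  _ ≤ ∑' n : ℕ, (2⁻¹:ℝ≥0∞)^n := by
        refine ENNReal.tsum_le_tsum (fun n => ?_)
        refine le_trans (lintegral_mono (fun s => ENNReal.ofReal_le_ofReal ?_)) (hMtail n f hf)
        unfold FF
        split
        · next h => exact max_le (by linarith [hR1 n]) (abs_nonneg _)
        · next h => simp only [not_lt] at h; exact max_le (by linarith) le_rfl
  _ = 2 := by
        rw [ENNReal.tsum_geometric, ENNReal.one_sub_inv_two, inv_inv]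
  _ = ENNReal.ofReal 2 := by norm_num

end Stmt7Aux

namespace Stmt7Aux

lemma claimA {K : Set (ℝ → ℝ)}
    (hK : ∀ f ∈ K, IntegrableOn f (Ioo 0 1) volume)
    {G : ℝ → ℝ} (hconv : ConvexOn ℝ (Ici 0) G) (hGnn : ∀ t, 0 ≤ t → 0 ≤ G t)
    (hG0 : G 0 = 0) (htend : Tendsto (fun t => G t / t) atTop atTop)
    {B : ℝ} (hB : 0 ≤ B)
    (hbound : ∀ f ∈ K, ∫⁻ s in Ioo (0:ℝ) 1, ENNReal.ofReal (G |f s|) ≤ ENNReal.ofReal B)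
    {ε : ℝ} (hε : 0 < ε) :
    ∃ δ : ℝ, 0 < δ ∧ ∀ f ∈ K, ∀ t : ℝ, 0 < t → t ≤ δ →
      ∫⁻ s in Ioo (0:ℝ) t, ENNReal.ofReal (mu01 f s) ≤ ENNReal.ofReal ε := by
  obtain ⟨M, hM1, hMG⟩ : ∃ M : ℝ, 1 ≤ M ∧ 2*(B+1)/ε ≤ G M / M := by
    obtain ⟨M, h1, h2⟩ := ((htend.eventually_ge_atTop (2*(B+1)/ε)).and
      (eventually_ge_atTop 1)).exists
    exact ⟨M, h2, h1⟩
  have hMpos : (0:ℝ) < M := by linarith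
  have hGMpos : 0 < G M := by
    have h2 : 0 < 2*(B+1)/ε := by positivity
    have h3 : 0 < G M / M := lt_of_lt_of_le h2 hMG
    have h4 := mul_pos h3 hMpos
    rwa [div_mul_cancel₀ _ hMpos.ne'] at h4
  refine ⟨ε/(2*M), by positivity, fun f hf t ht htδ => ?_⟩
  -- uniform tail bound at level M
  have htail : ∫⁻ x in Ioo (0:ℝ) 1, ENNReal.ofReal (FF f M x) ≤ ENNReal.ofReal (ε/2) := by
    have hpt : ∀ x, ENNReal.ofReal (FF f M x) ≤
        ENNReal.ofReal (M / G M) * ENNReal.ofReal (G |f x|) := by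
      intro x
      rw [← ENNReal.ofReal_mul (by positivity)]
      refine ENNReal.ofReal_le_ofReal ?_
      unfold FF
      split
      · next h =>
        have hle : M ≤ |f x| := le_of_lt h
        have hfxpos : 0 < |f x| := lt_of_lt_of_le hMpos hle
        have ha : (0:ℝ) ≤ 1 - M/|f x| := by
          rw [sub_nonneg, div_le_one hfxpos]; exact hle
        have hb : (0:ℝ) ≤ M/|f x| := by positivity
        have hcvx := hconv.2 (mem_Ici.mpr le_rfl) (mem_Ici.mpr hfxpos.le) ha hb (by ring)
        rw [smul_zero, zero_add, smul_eq_mul, smul_eq_mul, smul_eq_mul,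
          div_mul_cancel₀ _ hfxpos.ne', hG0, mul_zero, zero_add] at hcvx
        -- hcvx : G M ≤ M/|f x| * G |f x|
        rw [div_mul_eq_mul_div, le_div_iff₀ hGMpos]
        have := mul_le_mul_of_nonneg_right hcvx hfxpos.le
        rw [mul_comm (M/|f x|) (G |f x|), mul_assoc, div_mul_cancel₀ _ hfxpos.ne'] at this
        linarith
      · next h =>
        have := hGnn (|f x|) (abs_nonneg _)
        positivity
    calc ∫⁻ x in Ioo (0:ℝ) 1, ENNReal.ofReal (FF f M x)
        ≤ ∫⁻ x in Ioo (0:ℝ) 1, ENNReal.ofReal (M / G M) * ENNReal.ofReal (G |f x|) :=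
          lintegral_mono hpt
    _ = ENNReal.ofReal (M / G M) * ∫⁻ x in Ioo (0:ℝ) 1, ENNReal.ofReal (G |f x|) :=
          lintegral_const_mul' _ _ ENNReal.ofReal_ne_top
    _ ≤ ENNReal.ofReal (M / G M) * ENNReal.ofReal B := by gcongr; exact hbound f hf
    _ = ENNReal.ofReal (M / G M * B) := (ENNReal.ofReal_mul (by positivity)).symm
    _ ≤ ENNReal.ofReal (ε/2) := by
          refine ENNReal.ofReal_le_ofReal ?_
          have h1 : M / G M ≤ ε / (2*(B+1)) := by
            rw [div_le_div_iff₀ hGMpos (by positivity)]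
            rw [div_le_div_iff₀ hε hMpos] at hMG
            linarith
          have h2 : M / G M * B ≤ ε / (2*(B+1)) * B :=
            mul_le_mul_of_nonneg_right h1 hB
          have h3 : ε / (2*(B+1)) * B ≤ ε/2 := by
            rw [div_mul_eq_mul_div, div_le_div_iff₀ (by positivity) two_pos]
            nlinarith
          linarith
  -- assemble via measurable representative
  set f' : ℝ → ℝ := (hK f hf).aestronglyMeasurable.mk f with hf'def
  have hf'm : Measurable f' := (hK f hf).aestronglyMeasurable.stronglyMeasurable_mk.measurable
  have hfae : f =ᵐ[volume.restrict (Ioo (0:ℝ) 1)] f' := (hK f hf).aestronglyMeasurable.ae_eq_mk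
  have hmu_f : mu01 f = mu01 f' := mu01_congr hfae
  have htail_eq : ∫⁻ x in Ioo (0:ℝ) 1, ENNReal.ofReal (FF f' M x) =
      ∫⁻ x in Ioo (0:ℝ) 1, ENNReal.ofReal (FF f M x) := by
    refine (lintegral_congr_ae (hfae.mono (fun x hx => ?_))).symm
    simp only [FF, hx]
  calc ∫⁻ s in Ioo (0:ℝ) t, ENNReal.ofReal (mu01 f s)
      = ∫⁻ s in Ioo (0:ℝ) t, ENNReal.ofReal (mu01 f' s) := by rw [hmu_f]
  _ ≤ ENNReal.ofReal (M * t) + ∫⁻ x in Ioo (0:ℝ) 1, ENNReal.ofReal (FF f' M x) :=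
      I_le_tail hf'm hMpos.le ht
  _ ≤ ENNReal.ofReal (ε/2) + ENNReal.ofReal (ε/2) := by
      rw [htail_eq]
      refine add_le_add (ENNReal.ofReal_le_ofReal ?_) htail
      calc M * t ≤ M * (ε/(2*M)) := by gcongr
      _ = ε/2 := by field_simp
  _ = ENNReal.ofReal ε := by rw [← ENNReal.ofReal_add (by positivity) (by positivity)]; norm_num

end Stmt7Aux

namespace Stmt7Aux

set_option maxHeartbeats 1000000 in
lemma direction_a_to_b {K : Set (ℝ → ℝ)}
    (hK : ∀ f ∈ K, IntegrableOn f (Ioo 0 1) volume)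
    {C₀ : ℝ} (hC₀ : 0 ≤ C₀)
    (hint : ∀ f ∈ K, ∫⁻ x in Ioo (0:ℝ) 1, ENNReal.ofReal |f x| ≤ ENNReal.ofReal C₀)
    {G : ℝ → ℝ} (hGor : IsOrliczFunction G)
    (htend : Tendsto (fun t => G t / t) atTop atTop)
    {C₁ : ℝ}
    (hbound : ∀ f ∈ K, ∫⁻ s in Ioo (0:ℝ) 1, ENNReal.ofReal (G |f s|) ≤ ENNReal.ofReal C₁) :
    ∃ g : ℝ → ℝ, (∀ x ∈ Ioo (0:ℝ) 1, 0 < g x) ∧ IntegrableOn g (Ioo 0 1) volume ∧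
      ∀ f ∈ K, Submaj01 f g := by
  obtain ⟨hconv, hGnn, hG0, hGcont, _⟩ := hGor
  set B : ℝ := max C₁ 0 with hBdef
  have hB : 0 ≤ B := le_max_right _ _
  have hbound' : ∀ f ∈ K, ∫⁻ s in Ioo (0:ℝ) 1, ENNReal.ofReal (G |f s|) ≤ ENNReal.ofReal B :=
    fun f hf => le_trans (hbound f hf) (ENNReal.ofReal_le_ofReal (le_max_left _ _))
  have hδex : ∀ n : ℕ, ∃ δ : ℝ, 0 < δ ∧ ∀ f ∈ K, ∀ t : ℝ, 0 < t → t ≤ δ →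
      ∫⁻ s in Ioo (0:ℝ) t, ENNReal.ofReal (mu01 f s) ≤ ENNReal.ofReal ((2⁻¹:ℝ)^n) :=
    fun n => claimA hK hconv hGnn hG0 htend hB hbound' (by positivity)
  choose δ' hδ'pos hδ' using hδex
  -- decreasing sequence of break points
  obtain ⟨sq, hsq0, hsqs⟩ : ∃ sq : ℕ → ℝ, sq 0 = min 1 (δ' 0) ∧
      ∀ n, sq (n+1) = min (sq n / 2) (δ' (n+1)) :=
    ⟨fun n => Nat.rec (min 1 (δ' 0)) (fun k sk => min (sk/2) (δ' (k+1))) n, rfl, fun n => rfl⟩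
  have hsqpos : ∀ n, 0 < sq n := by
    intro n
    induction n with
    | zero => rw [hsq0]; exact lt_min one_pos (hδ'pos 0)
    | succ k ih => rw [hsqs k]; exact lt_min (by linarith) (hδ'pos (k+1))
  have hsqδ : ∀ n, sq n ≤ δ' n := by
    intro n
    cases n with
    | zero => rw [hsq0]; exact min_le_right _ _
    | succ k => rw [hsqs k]; exact min_le_right _ _
  have hsqhalf : ∀ n, sq (n+1) ≤ sq n / 2 := fun n => by rw [hsqs n]; exact min_le_left _ _
  have hsqanti : Antitone sq := antitone_nat_of_succ_le (fun n => by linarith [hsqhalf n, hsqpos n])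
  have hsqle1 : ∀ n, sq n ≤ 1 := fun n =>
    le_trans (hsqanti (Nat.zero_le n)) (by rw [hsq0]; exact min_le_left _ _)
  have hsqbound : ∀ n, sq n ≤ (2⁻¹:ℝ)^n := by
    intro n
    induction n with
    | zero => rw [hsq0, pow_zero]; exact min_le_left _ _
    | succ k ih =>
      have := hsqhalf k
      rw [pow_succ]
      linarith
  have hP : ∀ n : ℕ, ∀ f ∈ K, ∀ t : ℝ, 0 < t → t ≤ sq n →
      ∫⁻ s in Ioo (0:ℝ) t, ENNReal.ofReal (mu01 f s) ≤ ENNReal.ofReal ((2⁻¹:ℝ)^n) :=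
    fun n f hf t ht h => hδ' n f hf t ht (le_trans h (hsqδ n))
  -- coefficients
  obtain ⟨a, ha0, has⟩ : ∃ a : ℕ → ℝ, a 0 = (C₀+1) / sq 0 ∧
      ∀ n, a (n+1) = (2⁻¹:ℝ)^n / sq (n+1) :=
    ⟨fun n => Nat.rec ((C₀+1) / sq 0) (fun k _ => (2⁻¹:ℝ)^k / sq (k+1)) n, rfl, fun n => rfl⟩
  have hapos : ∀ n, 0 < a n := by
    intro n
    cases n with
    | zero => rw [ha0]; exact div_pos (by linarith) (hsqpos 0)
    | succ k => rw [has k]; exact div_pos (pow_pos (by norm_num) k) (hsqpos (k+1))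
  have haprod0 : a 0 * sq 0 = C₀ + 1 := by
    rw [ha0, div_mul_cancel₀ _ (hsqpos 0).ne']
  have haprods : ∀ n, a (n+1) * sq (n+1) = (2⁻¹:ℝ)^n := by
    intro n
    rw [has n, div_mul_cancel₀ _ (hsqpos (n+1)).ne']
  -- the majorant
  set T : ℝ → ℝ≥0∞ := fun x =>
    ∑' n : ℕ, (Ioo (0:ℝ) (sq n)).indicator (fun _ => ENNReal.ofReal (a n)) x with hTdef
  have hTmeas : Measurable T :=
    Measurable.ennreal_tsum (fun n => measurable_const.indicator measurableSet_Ioo)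
  have hTfin : ∀ x : ℝ, 0 < x → T x ≠ ⊤ := by
    intro x hx
    obtain ⟨N, hN⟩ : ∃ N : ℕ, sq N < x := by
      obtain ⟨N, hN⟩ := exists_pow_lt_of_lt_one hx (by norm_num : (2⁻¹:ℝ) < 1)
      exact ⟨N, lt_of_le_of_lt (hsqbound N) hN⟩
    have heq : T x = ∑ n ∈ Finset.range N,
        (Ioo (0:ℝ) (sq n)).indicator (fun _ => ENNReal.ofReal (a n)) x := by
      refine tsum_eq_sum (fun n hn => ?_)
      rw [Finset.mem_range, not_lt] at hn
      refine indicator_of_notMem (fun hmem => ?_) _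
      have : sq n ≤ sq N := hsqanti hn
      exact absurd hmem.2 (not_lt.mpr (by linarith))
    rw [heq]
    refine (ENNReal.sum_lt_top.mpr (fun n _ => ?_)).ne
    exact lt_of_le_of_lt (indicator_le_self' (fun _ _ => zero_le) x)
      ENNReal.ofReal_lt_top
  set g : ℝ → ℝ := fun x => 1 + (T x).toReal with hgdef
  have hgm : Measurable g := measurable_const.add hTmeas.ennreal_toReal
  have hg1 : ∀ x, 1 ≤ g x := fun x => le_add_of_nonneg_right ENNReal.toReal_nonneg
  have hglow : ∀ n : ℕ, ∀ x ∈ Ioo (0:ℝ) (sq n), a n ≤ g x := by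
    intro n x hx
    have h1 : ENNReal.ofReal (a n) ≤ T x := by
      have h := ENNReal.le_tsum (f := fun n : ℕ =>
        (Ioo (0:ℝ) (sq n)).indicator (fun _ => ENNReal.ofReal (a n)) x) n
      rwa [indicator_of_mem hx] at h
    have h2 : a n ≤ (T x).toReal := by
      rw [← ENNReal.toReal_ofReal (hapos n).le]
      exact ENNReal.toReal_mono (hTfin x hx.1) h1
    simp only [hgdef]
    linarith
  -- integrability of g
  have hgint : IntegrableOn g (Ioo 0 1) volume := by
    refine ⟨hgm.aestronglyMeasurable, ?_⟩
    rw [hasFiniteIntegral_iff_norm]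
    have hb1 : ∀ x : ℝ, ENNReal.ofReal ‖g x‖ ≤ 1 + T x := by
      intro x
      rw [Real.norm_of_nonneg (by linarith [hg1 x])]
      refine le_trans (ENNReal.ofReal_add_le) ?_
      gcongr
      · simp
      · exact ENNReal.ofReal_toReal_le
    calc ∫⁻ x in Ioo (0:ℝ) 1, ENNReal.ofReal ‖g x‖
        ≤ ∫⁻ x in Ioo (0:ℝ) 1, (1 + T x) := lintegral_mono hb1
    _ = volume (Ioo (0:ℝ) 1) + ∫⁻ x in Ioo (0:ℝ) 1, T x := by
        rw [lintegral_add_left measurable_const, setLIntegral_const, one_mul]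
    _ ≤ volume (Ioo (0:ℝ) 1) + ∫⁻ x, T x ∂volume := by
        gcongr
        exact Measure.restrict_le_self
    _ < ⊤ := by
        have hT : ∫⁻ x, T x ∂volume = ∑' n : ℕ, ENNReal.ofReal (a n * sq n) := by
          rw [hTdef]
          rw [lintegral_tsum (fun n =>
            (measurable_const.indicator measurableSet_Ioo).aemeasurable)]
          refine tsum_congr (fun n => ?_)
          rw [lintegral_indicator_const measurableSet_Ioo, Real.volume_Ioo, sub_zero,
            ← ENNReal.ofReal_mul (hapos n).le]
        have hTsum : ∑' n : ℕ, ENNReal.ofReal (a n * sq n) =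
            ENNReal.ofReal (C₀+1) + ∑' n : ℕ, ENNReal.ofReal (a (n+1) * sq (n+1)) := by
          rw [tsum_eq_zero_add' ENNReal.summable, haprod0]
        have hgeom : ∑' n : ℕ, ENNReal.ofReal (a (n+1) * sq (n+1)) = 2 := by
          have : ∀ n : ℕ, ENNReal.ofReal (a (n+1) * sq (n+1)) = (2⁻¹:ℝ≥0∞)^n := by
            intro n
            rw [haprods n, ENNReal.ofReal_pow (by norm_num), ENNReal.ofReal_inv_of_pos two_pos]
            norm_num
          rw [tsum_congr this, ENNReal.tsum_geometric, ENNReal.one_sub_inv_two, inv_inv]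
        rw [hT, hTsum, hgeom, Real.volume_Ioo]
        refine ENNReal.add_lt_top.mpr ⟨ENNReal.ofReal_lt_top, ?_⟩
        exact ENNReal.add_lt_top.mpr ⟨ENNReal.ofReal_lt_top, by norm_num⟩
  -- lower bound for the integral of mu01 g
  have hIg : ∀ n : ℕ, ∀ τ : ℝ, sq n ≤ τ →
      ENNReal.ofReal (a n * sq n) ≤ ∫⁻ s in Ioo (0:ℝ) τ, ENNReal.ofReal (mu01 g s) := by
    intro n τ hτ
    have hkey : ∀ σ ∈ Ioo (0:ℝ) (sq n), a n ≤ mu01 g σ := by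
      intro σ hσ
      rw [mu01_def]
      refine le_csInf (dd_set_nonempty hgm hσ.1) (fun u hu => ?_)
      by_contra hc
      push_neg at hc
      have hsub2 : Ioo (0:ℝ) (sq n) ⊆ {x | x ∈ Ioo (0:ℝ) 1 ∧ u < |g x|} := by
        intro x hx
        refine ⟨⟨hx.1, lt_of_lt_of_le hx.2 (hsqle1 n)⟩, ?_⟩
        rw [abs_of_nonneg (by linarith [hg1 x])]
        exact lt_of_lt_of_le hc (hglow n x hx)
      have hdd : ENNReal.ofReal (sq n) ≤ dd g u := by
        calc ENNReal.ofReal (sq n) = volume (Ioo (0:ℝ) (sq n)) := by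
              rw [Real.volume_Ioo, sub_zero]
        _ ≤ dd g u := measure_mono hsub2
      have hlt : ENNReal.ofReal σ < ENNReal.ofReal (sq n) :=
        (ENNReal.ofReal_lt_ofReal_iff (hsqpos n)).mpr hσ.2
      exact absurd hu.2 (not_le.mpr (lt_of_lt_of_le hlt hdd))
    calc ENNReal.ofReal (a n * sq n)
        = ∫⁻ _ in Ioo (0:ℝ) (sq n), ENNReal.ofReal (a n) := by
          rw [setLIntegral_const, Real.volume_Ioo, sub_zero,
            ← ENNReal.ofReal_mul (hapos n).le]
    _ ≤ ∫⁻ s in Ioo (0:ℝ) (sq n), ENNReal.ofReal (mu01 g s) := by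
          refine lintegral_mono_ae ?_
          rw [ae_restrict_iff' measurableSet_Ioo]
          exact ae_of_all _ (fun σ hσ => ENNReal.ofReal_le_ofReal (hkey σ hσ))
    _ ≤ ∫⁻ s in Ioo (0:ℝ) τ, ENNReal.ofReal (mu01 g s) := I_mono g hτ
  -- uniform L¹ bound for mu01 f
  have hIf_int : ∀ f ∈ K, ∀ τ : ℝ, 0 < τ →
      ∫⁻ s in Ioo (0:ℝ) τ, ENNReal.ofReal (mu01 f s) ≤ ENNReal.ofReal C₀ := by
    intro f hf τ hτ
    set f' : ℝ → ℝ := (hK f hf).aestronglyMeasurable.mk f with hf'def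
    have hf'm : Measurable f' := (hK f hf).aestronglyMeasurable.stronglyMeasurable_mk.measurable
    have hfae : f =ᵐ[volume.restrict (Ioo (0:ℝ) 1)] f' := (hK f hf).aestronglyMeasurable.ae_eq_mk
    rw [mu01_congr hfae]
    refine le_trans (I_le_int_abs hf'm hτ) ?_
    have habs : ∫⁻ x in Ioo (0:ℝ) 1, ENNReal.ofReal |f' x| =
        ∫⁻ x in Ioo (0:ℝ) 1, ENNReal.ofReal |f x| :=
      (lintegral_congr_ae (hfae.mono (fun x hx => by simp only [hx]))).symm
    rw [habs]
    exact hint f hf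
  -- conclusion
  refine ⟨g, fun x _ => lt_of_lt_of_le one_pos (hg1 x), hgint, fun f hf => ?_⟩
  intro t ht
  by_cases hcase : sq 0 < t
  · calc ∫⁻ s in Ioo (0:ℝ) t, ENNReal.ofReal (mu01 f s)
        ≤ ENNReal.ofReal C₀ := hIf_int f hf t ht.1
    _ ≤ ENNReal.ofReal (a 0 * sq 0) := by
        rw [haprod0]; exact ENNReal.ofReal_le_ofReal (by linarith)
    _ ≤ _ := hIg 0 t hcase.le
  · push_neg at hcase
    have hex : ∃ m : ℕ, sq m < t := by
      obtain ⟨N, hN⟩ := exists_pow_lt_of_lt_one ht.1 (by norm_num : (2⁻¹:ℝ) < 1)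
      exact ⟨N, lt_of_le_of_lt (hsqbound N) hN⟩
    set m := Nat.find hex with hmdef
    have hm : sq m < t := Nat.find_spec hex
    have hm0 : m ≠ 0 := by
      intro h
      rw [h] at hm
      linarith
    obtain ⟨k, hk⟩ := Nat.exists_eq_succ_of_ne_zero hm0
    have h1 : t ≤ sq k := by
      have := Nat.find_min hex (m := k) (by omega)
      linarith [not_lt.mp this]
    have h2 : sq (k+1) < t := by rwa [hk] at hm
    calc ∫⁻ s in Ioo (0:ℝ) t, ENNReal.ofReal (mu01 f s)
        ≤ ENNReal.ofReal ((2⁻¹:ℝ)^k) := hP k f hf t ht.1 h1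
    _ = ENNReal.ofReal (a (k+1) * sq (k+1)) := by rw [haprods k]
    _ ≤ _ := hIg (k+1) t h2.le

end Stmt7Aux


end

theorem stmt7 (K : Set (ℝ → ℝ))
    (hK : ∀ f ∈ K, IntegrableOn f (Ioo 0 1) volume)
    (hKb : ∃ C : ℝ, ∀ f ∈ K, ∫ x in Ioo (0:ℝ) 1, |f x| ≤ C) :
    (∃ G : ℝ → ℝ, IsOrliczFunction G ∧ Tendsto (fun t => G t / t) atTop atTop ∧
      ∃ C : ℝ, ∀ f ∈ K,
        ∫⁻ s in Ioo (0:ℝ) 1, ENNReal.ofReal (G |f s|) ≤ ENNReal.ofReal C) ↔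
    (∃ g : ℝ → ℝ, (∀ x ∈ Ioo (0:ℝ) 1, 0 < g x) ∧ IntegrableOn g (Ioo 0 1) volume ∧
      ∀ f ∈ K, Submaj01 f g) := by
  obtain ⟨C, hC⟩ := hKb
  set C₀ : ℝ := max C 0 with hC₀def
  have hC₀ : 0 ≤ C₀ := le_max_right _ _
  have hint : ∀ f ∈ K, ∫⁻ x in Ioo (0:ℝ) 1, ENNReal.ofReal |f x| ≤ ENNReal.ofReal C₀ := by
    intro f hf
    rw [← MeasureTheory.ofReal_integral_eq_lintegral_ofReal (hK f hf).abs
      (ae_of_all _ (fun x => abs_nonneg (f x)))]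
    exact ENNReal.ofReal_le_ofReal (le_trans (hC f hf) (le_max_left _ _))
  constructor
  · rintro ⟨G, hGor, htend, C₁, hbound⟩
    exact Stmt7Aux.direction_a_to_b hK hC₀ hint hGor htend hbound
  · rintro ⟨g, _hgpos, hgint, hsub⟩
    exact Stmt7Aux.direction_b_to_a hK hC₀ hint hgint hsub
end
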